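/- arXiv:1609.06575 — 7 statements merged into one kernel-verified Lean document; each statement's English description precedes it below -/
import Mathlib

section
/- Let δ > 0 and let X, Y be independent random variables, each uniformly distributed on [−δ, δ], and let k ∈ [0,1]. Define the class variable C_k = 1 if X + kY ≥ 0 and C_k = 0 otherwise. Then the mutual information MI(C_k, X²) = 0; equivalently, the joint law of (X², C_k) equals the product of the law of X² and the law of C_k (so the KL divergence of the joint law from the product of the marginals is zero). -/
open MeasureTheory ProbabilityTheory Real
open scoped Classical

/-- Kullback–Leibler divergence of `μ` from `ν` (with values in `EReal`),
defined as `+∞` unless `μ ≪ ν` and the log-likelihood ratio is `μ`-integrable. -/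
noncomputable def klDiv {α : Type*} [MeasurableSpace α] (μ ν : Measure α) : EReal :=
  if μ ≪ ν ∧ Integrable (llr μ ν) μ then ((∫ x, llr μ ν x ∂μ : ℝ) : EReal) else ⊤

/-- The uniform probability measure on the interval `[-δ, δ]`. -/
noncomputable def uniformIcc (δ : ℝ) : Measure ℝ :=
  (ENNReal.ofReal (2 * δ))⁻¹ • volume.restrict (Set.Icc (-δ) δ)

lemma neg_map_uniform (δ : ℝ) :
    Measure.map Neg.neg (uniformIcc δ) = uniformIcc δ := by
  have hset : (Neg.neg : ℝ → ℝ) ⁻¹' Set.Icc (-δ) δ = Set.Icc (-δ) δ := by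
    ext x; simp [neg_le, le_neg, and_comm]
  rw [uniformIcc, Measure.map_smul]
  congr 1
  rw [← hset, ← Measure.restrict_map measurable_neg measurableSet_Icc,
    Measure.map_neg_eq_self (volume : Measure ℝ), hset]

lemma uniformIcc_ac (δ : ℝ) : uniformIcc δ ≪ (volume : Measure ℝ) :=
  ((Measure.absolutelyContinuous_of_le Measure.restrict_le_self).trans
    Measure.AbsolutelyContinuous.rfl).smul_left _

lemma line_null (k : ℝ) (δ : ℝ) [SFinite (uniformIcc δ)] :
    (uniformIcc δ).prod (uniformIcc δ) {p : ℝ × ℝ | p.1 + k * p.2 = 0} = 0 := by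
  have hms : MeasurableSet {p : ℝ × ℝ | p.1 + k * p.2 = 0} := by
    have : Measurable fun p : ℝ × ℝ => p.1 + k * p.2 :=
      measurable_fst.add (measurable_snd.const_mul k)
    exact this (measurableSet_singleton 0)
  have hvol : (volume : Measure ℝ).prod volume {p : ℝ × ℝ | p.1 + k * p.2 = 0} = 0 := by
    rw [Measure.prod_apply hms,
      lintegral_eq_zero_iff (measurable_measure_prodMk_left hms)]
    rcases eq_or_ne k 0 with hk | hk
    · filter_upwards [compl_mem_ae_iff.mpr (volume_singleton (a := (0:ℝ)))] with x hx
      have he : Prod.mk x ⁻¹' {p : ℝ × ℝ | p.1 + k * p.2 = 0} = ∅ := by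
        subst hk
        ext y
        simp only [Set.mem_preimage, Set.mem_setOf_eq, zero_mul, add_zero,
          Set.mem_empty_iff_false, iff_false]
        exact hx
      simp [he]
    · refine Filter.Eventually.of_forall fun x => ?_
      have he : Prod.mk x ⁻¹' {p : ℝ × ℝ | p.1 + k * p.2 = 0} = {-x / k} := by
        ext y
        simp only [Set.mem_preimage, Set.mem_setOf_eq, Set.mem_singleton_iff]
        rw [eq_div_iff hk]
        constructor <;> intro h <;> [linarith [mul_comm k y]; linarith [mul_comm k y]]
      simp [he]
  exact ((uniformIcc_ac δ).prod (uniformIcc_ac δ)) hvol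

lemma half_lemma (k δ : ℝ) [IsFiniteMeasure (uniformIcc δ)]
    (S : Set (ℝ × ℝ)) (hS : MeasurableSet S)
    (hinv : (fun p : ℝ × ℝ => (-p.1, -p.2)) ⁻¹' S = S) :
    (uniformIcc δ).prod (uniformIcc δ) (S ∩ {p : ℝ × ℝ | 0 ≤ p.1 + k * p.2}) =
      (uniformIcc δ).prod (uniformIcc δ) S / 2 := by
  set μ2 := (uniformIcc δ).prod (uniformIcc δ) with hμ2
  set U : Set (ℝ × ℝ) := {p | 0 ≤ p.1 + k * p.2} with hU
  set V : Set (ℝ × ℝ) := {p | p.1 + k * p.2 ≤ 0} with hV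
  have hadd : Measurable fun p : ℝ × ℝ => p.1 + k * p.2 :=
    measurable_fst.add (measurable_snd.const_mul k)
  have hUm : MeasurableSet U := measurableSet_le measurable_const hadd
  have hVm : MeasurableSet V := measurableSet_le hadd measurable_const
  have hn : Measurable fun p : ℝ × ℝ => ((-p.1, -p.2) : ℝ × ℝ) :=
    (measurable_fst.neg.prodMk measurable_snd.neg)
  have hmap : μ2.map (fun p : ℝ × ℝ => ((-p.1, -p.2) : ℝ × ℝ)) = μ2 := by
    have : (fun p : ℝ × ℝ => ((-p.1, -p.2) : ℝ × ℝ)) = Prod.map Neg.neg Neg.neg := rfl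
    rw [hμ2, this, ← Measure.map_prod_map _ _ measurable_neg measurable_neg,
      neg_map_uniform]
  have hab : μ2 (S ∩ U) = μ2 (S ∩ V) := by
    have hpre : (fun p : ℝ × ℝ => ((-p.1, -p.2) : ℝ × ℝ)) ⁻¹' (S ∩ U) = S ∩ V := by
      rw [Set.preimage_inter, hinv]
      congr 1
      ext p
      simp only [Set.mem_preimage, hU, hV, Set.mem_setOf_eq]
      constructor <;> intro h <;> nlinarith
    conv_lhs => rw [← hmap]
    rw [Measure.map_apply hn (hS.inter hUm), hpre]
  have hsum : μ2 (S ∩ U) + μ2 (S ∩ V) = μ2 S := by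
    rw [← measure_union_add_inter _ (hS.inter hVm)]
    have h1 : S ∩ U ∪ S ∩ V = S := by
      ext p
      simp only [Set.mem_union, Set.mem_inter_iff, hU, hV, Set.mem_setOf_eq]
      constructor
      · rintro (⟨h, _⟩ | ⟨h, _⟩) <;> exact h
      · intro h
        rcases le_total 0 (p.1 + k * p.2) with h' | h'
        · exact Or.inl ⟨h, h'⟩
        · exact Or.inr ⟨h, h'⟩
    have h2 : μ2 (S ∩ U ∩ (S ∩ V)) = 0 := by
      refine measure_mono_null ?_ (line_null k δ)
      rintro p ⟨⟨_, h1⟩, ⟨_, h2⟩⟩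
      exact le_antisymm h2 h1
    rw [h1, h2, add_zero]
  rw [ENNReal.eq_div_iff two_ne_zero ENNReal.ofNat_ne_top, two_mul]
  nth_rewrite 2 [hab]
  exact hsum

lemma klDiv_self {α : Type*} [MeasurableSpace α] (μ : Measure α) [SigmaFinite μ] :
    klDiv μ μ = 0 := by
  have h : llr μ μ =ᵐ[μ] 0 := by
    filter_upwards [μ.rnDeriv_self] with x hx
    simp [llr, hx]
  rw [klDiv, if_pos ⟨Measure.AbsolutelyContinuous.rfl,
      (integrable_congr h).mpr (integrable_zero _ _ _)⟩,
    integral_congr_ae h]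
  simp

theorem stmt_0 {Ω : Type*} [MeasurableSpace Ω] (P : Measure Ω) [IsProbabilityMeasure P]
    (δ : ℝ) (hδ : 0 < δ) (k : ℝ) (hk : k ∈ Set.Icc (0 : ℝ) 1)
    (X Y : Ω → ℝ) (hX : Measurable X) (hY : Measurable Y)
    (hindep : IndepFun X Y P)
    (hXlaw : P.map X = uniformIcc δ) (hYlaw : P.map Y = uniformIcc δ)
    (C : Ω → ℕ) (hC : C = fun ω => if 0 ≤ X ω + k * Y ω then 1 else 0) :
    klDiv (P.map (fun ω => ((X ω) ^ 2, C ω)))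
        ((P.map (fun ω => (X ω) ^ 2)).prod (P.map C)) = 0 ∧
      P.map (fun ω => ((X ω) ^ 2, C ω))
        = (P.map (fun ω => (X ω) ^ 2)).prod (P.map C) := by
  haveI hu : IsProbabilityMeasure (uniformIcc δ) := by
    rw [← hXlaw]; exact Measure.isProbabilityMeasure_map hX.aemeasurable
  have hadd : Measurable fun ω => X ω + k * Y ω := hX.add (hY.const_mul k)
  have hA1m : MeasurableSet {ω | 0 ≤ X ω + k * Y ω} :=
    measurableSet_le measurable_const hadd
  have hCmeas : Measurable C := by
    rw [hC]; exact Measurable.ite hA1m measurable_const measurable_const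
  have hX2 : Measurable fun ω => (X ω) ^ 2 := hX.pow_const 2
  have hJ : Measurable fun ω => (X ω, Y ω) := hX.prodMk hY
  have hJlaw : P.map (fun ω => (X ω, Y ω)) = (uniformIcc δ).prod (uniformIcc δ) := by
    have h := (indepFun_iff_map_prod_eq_prod_map_map hX.aemeasurable hY.aemeasurable).mp hindep
    rw [hXlaw, hYlaw] at h
    exact h
  set A1 : Set Ω := {ω | 0 ≤ X ω + k * Y ω} with hA1
  -- half lemma transported to Ω
  have key : ∀ s : Set ℝ, MeasurableSet s →
      P ((fun ω => (X ω) ^ 2) ⁻¹' s ∩ A1) = P ((fun ω => (X ω) ^ 2) ⁻¹' s) / 2 := by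
    intro s hs
    set S : Set (ℝ × ℝ) := (fun p : ℝ × ℝ => p.1 ^ 2) ⁻¹' s with hSdef
    have hSm : MeasurableSet S := (measurable_fst.pow_const 2) hs
    have hinv : (fun p : ℝ × ℝ => (-p.1, -p.2)) ⁻¹' S = S := by
      ext p; simp [hSdef, Set.mem_preimage, neg_sq]
    set U : Set (ℝ × ℝ) := {p | 0 ≤ p.1 + k * p.2} with hUdef
    have hUm : MeasurableSet U :=
      measurableSet_le measurable_const (measurable_fst.add (measurable_snd.const_mul k))
    have h1 : (fun ω => (X ω) ^ 2) ⁻¹' s ∩ A1 = (fun ω => (X ω, Y ω)) ⁻¹' (S ∩ U) := by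
      ext ω; simp [hSdef, hUdef, hA1]
    have h2 : (fun ω => (X ω) ^ 2) ⁻¹' s = (fun ω => (X ω, Y ω)) ⁻¹' S := by
      ext ω; simp [hSdef]
    rw [h1, h2, ← Measure.map_apply hJ (hSm.inter hUm), ← Measure.map_apply hJ hSm,
      hJlaw]
    exact half_lemma k δ S hSm hinv
  have keyc : ∀ s : Set ℝ, MeasurableSet s →
      P ((fun ω => (X ω) ^ 2) ⁻¹' s ∩ A1ᶜ) = P ((fun ω => (X ω) ^ 2) ⁻¹' s) / 2 := by
    intro s hs
    set B := (fun ω => (X ω) ^ 2) ⁻¹' s with hB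
    have hd : P (B ∩ A1) + P (B \ A1) = P B := measure_inter_add_diff B hA1m
    rw [key s hs] at hd
    have : P B / 2 + P (B \ A1) = P B / 2 + P B / 2 := by
      rw [hd, ENNReal.add_halves]
    rw [Set.diff_eq] at this
    exact (ENNReal.add_right_inj (ENNReal.div_lt_top (measure_ne_top P _) two_ne_zero).ne).mp this
  have hPA1 : P A1 = 1 / 2 := by
    have := key Set.univ MeasurableSet.univ
    simpa using this
  have hPA1c : P A1ᶜ = 1 / 2 := by
    have := keyc Set.univ MeasurableSet.univ
    simpa using this
  have hindep2 : IndepFun (fun ω => (X ω) ^ 2) C P := by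
    rw [indepFun_iff_measure_inter_preimage_eq_mul]
    intro s t hs ht
    have hPmarg : P ((fun ω => (X ω) ^ 2) ⁻¹' s) ≠ ⊤ := by finiteness
    by_cases h1 : (1 : ℕ) ∈ t <;> by_cases h0 : (0 : ℕ) ∈ t
    · have hCt : C ⁻¹' t = Set.univ := by
        ext ω; simp only [Set.mem_preimage, Set.mem_univ, iff_true, hC]
        split <;> assumption
      simp [hCt]
    · have hCt : C ⁻¹' t = A1 := by
        ext ω; simp only [Set.mem_preimage, hC, hA1, Set.mem_setOf_eq]
        split <;> simp_all
      rw [hCt, key s hs, hPA1, ENNReal.div_eq_inv_mul, ENNReal.div_eq_inv_mul]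
      ring
    · have hCt : C ⁻¹' t = A1ᶜ := by
        ext ω; simp only [Set.mem_preimage, hC, Set.mem_compl_iff, hA1, Set.mem_setOf_eq]
        split <;> simp_all
      rw [hCt, keyc s hs, hPA1c, ENNReal.div_eq_inv_mul, ENNReal.div_eq_inv_mul]
      ring
    · have hCt : C ⁻¹' t = ∅ := by
        ext ω; simp only [Set.mem_preimage, hC, Set.mem_empty_iff_false, iff_false]
        split <;> assumption
      simp [hCt]
  have hmapeq : P.map (fun ω => ((X ω) ^ 2, C ω))
      = (P.map (fun ω => (X ω) ^ 2)).prod (P.map C) :=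
    (indepFun_iff_map_prod_eq_prod_map_map hX2.aemeasurable hCmeas.aemeasurable).mp hindep2
  refine ⟨?_, hmapeq⟩
  haveI : IsProbabilityMeasure (P.map (fun ω => ((X ω) ^ 2, C ω))) :=
    Measure.isProbabilityMeasure_map (hX2.prodMk hCmeas).aemeasurable
  rw [← hmapeq]
  exact klDiv_self _
end

section
/- Let δ > 0 and let X, Y be independent random variables, each uniformly distributed on [−δ, δ]. Then MI(X, X − Y) = 1/2, i.e., the KL divergence of the joint law of (X, X − Y) from the product of the law of X and the law of X − Y equals 1/2. -/
open MeasureTheory ProbabilityTheory Real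
open scoped Classical

namespace Stmt8Aux

open Set ENNReal

variable {α β : Type*} [MeasurableSpace α] [MeasurableSpace β]

lemma map_withDensity_of_measurePreserving {μ : Measure α} {e : α → α}
    (he : MeasurePreserving e μ μ) (hinv : ∀ x, e (e x) = x) {F : α → ℝ≥0∞}
    (hF : Measurable F) :
    (μ.withDensity F).map e = μ.withDensity (fun x => F (e x)) := by
  have hemeas : Measurable e := he.measurable
  ext s hs
  rw [Measure.map_apply hemeas hs, withDensity_apply _ (hemeas hs), withDensity_apply _ hs,
    ← lintegral_indicator (hemeas hs), ← lintegral_indicator hs]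
  calc ∫⁻ x, (e ⁻¹' s).indicator F x ∂μ
      = ∫⁻ x, (e ⁻¹' s).indicator F (e x) ∂μ :=
        (he.lintegral_comp (hF.indicator (hemeas hs))).symm
    _ = ∫⁻ x, s.indicator (fun x => F (e x)) x ∂μ := by
        congr 1; funext x
        by_cases hx : x ∈ s
        · rw [Set.indicator_of_mem hx, Set.indicator_of_mem]
          simp [Set.mem_preimage, hinv x, hx]
        · rw [Set.indicator_of_notMem hx, Set.indicator_of_notMem]
          simp [Set.mem_preimage, hinv x, hx]

lemma withDensity_prod_withDensity (μ : Measure α) (ν : Measure β) [SigmaFinite μ]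
    [SigmaFinite ν] {f : α → ℝ≥0∞} {g : β → ℝ≥0∞} (hf : Measurable f) (hg : Measurable g) :
    (μ.withDensity f).prod (ν.withDensity g)
      = (μ.prod ν).withDensity (fun p => f p.1 * g p.2) := by
  ext s hs
  have hmeas : Measurable (fun p : α × β => f p.1 * g p.2) :=
    (hf.comp measurable_fst).mul (hg.comp measurable_snd)
  rw [Measure.prod_apply hs, withDensity_apply _ hs, ← lintegral_indicator hs,
    lintegral_prod _ (hmeas.indicator hs).aemeasurable]
  rw [lintegral_withDensity_eq_lintegral_mul _ hf
    (measurable_measure_prodMk_left hs)]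
  congr 1
  funext x
  have hsx : MeasurableSet (Prod.mk x ⁻¹' s) := measurable_prodMk_left hs
  rw [Pi.mul_apply, withDensity_apply _ hsx, ← lintegral_indicator hsx,
    ← lintegral_const_mul _ (hg.indicator hsx)]
  congr 1
  funext y
  by_cases hxy : (x, y) ∈ s <;>
    simp [Set.indicator_apply, Set.mem_preimage, hxy]

variable (δ : ℝ)

noncomputable def dd : ℝ → ℝ≥0∞ :=
  (Set.Icc (-δ) δ).indicator (fun _ => (ENNReal.ofReal (2 * δ))⁻¹)

noncomputable def fJ : ℝ × ℝ → ℝ≥0∞ := fun p => dd δ p.1 * dd δ (p.1 - p.2)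

noncomputable def gg : ℝ → ℝ≥0∞ := fun z =>
  (ENNReal.ofReal (2 * δ))⁻¹ * (ENNReal.ofReal (2 * δ))⁻¹ * ENNReal.ofReal (2 * δ - |z|)

def SS : Set (ℝ × ℝ) := {p | p.1 ∈ Set.Icc (-δ) δ ∧ p.1 - p.2 ∈ Set.Icc (-δ) δ}

noncomputable def rho : ℝ × ℝ → ℝ≥0∞ := fun p =>
  if p ∈ SS δ then ENNReal.ofReal (2 * δ) / ENNReal.ofReal (2 * δ - |p.2|) else 0

lemma measurable_dd : Measurable (dd δ) :=
  measurable_const.indicator measurableSet_Icc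

lemma measurable_fJ : Measurable (fJ δ) :=
  ((measurable_dd δ).comp measurable_fst).mul
    ((measurable_dd δ).comp (measurable_fst.sub measurable_snd))

lemma measurable_gg : Measurable (gg δ) :=
  measurable_const.mul (ENNReal.measurable_ofReal.comp
    (measurable_const.sub measurable_abs))

lemma measurableSet_SS : MeasurableSet (SS δ) :=
  (measurable_fst measurableSet_Icc).inter
    ((measurable_fst.sub measurable_snd) measurableSet_Icc)

lemma measurable_rho : Measurable (rho δ) := by
  unfold rho
  exact Measurable.ite (measurableSet_SS δ)
    (measurable_const.div (ENNReal.measurable_ofReal.comp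
      (measurable_const.sub (measurable_abs.comp measurable_snd)))) measurable_const

lemma uniformIcc_eq : uniformIcc δ = volume.withDensity (dd δ) := by
  rw [uniformIcc, dd, withDensity_indicator measurableSet_Icc, withDensity_const]

variable {δ} (hδ : 0 < δ)
include hδ

lemma isProbability_uniformIcc : IsProbabilityMeasure (uniformIcc δ) := by
  constructor
  rw [uniformIcc]
  simp only [Measure.smul_apply, Measure.restrict_apply MeasurableSet.univ, Set.univ_inter,
    Real.volume_Icc, smul_eq_mul]
  rw [show δ - -δ = 2 * δ by ring]
  exact ENNReal.inv_mul_cancel (by simp [hδ]) ENNReal.ofReal_ne_top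

lemma measurePreserving_T :
    MeasurePreserving (fun p : ℝ × ℝ => (p.1, p.1 - p.2))
      ((volume : Measure ℝ).prod volume) ((volume : Measure ℝ).prod volume) := by
  have h1 : MeasurePreserving (fun p : ℝ × ℝ => (p.1, p.2 - p.1))
      ((volume : Measure ℝ).prod volume) ((volume : Measure ℝ).prod volume) :=
    measurePreserving_prod_sub volume volume
  have h2 : MeasurePreserving (Prod.map (id : ℝ → ℝ) (Neg.neg : ℝ → ℝ))
      ((volume : Measure ℝ).prod volume) ((volume : Measure ℝ).prod volume) :=
    (MeasurePreserving.id volume).prod (Measure.measurePreserving_neg volume)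
  have : (fun p : ℝ × ℝ => (p.1, p.1 - p.2))
      = Prod.map (id : ℝ → ℝ) (Neg.neg : ℝ → ℝ) ∘ (fun p : ℝ × ℝ => (p.1, p.2 - p.1)) := by
    funext p; simp [Prod.map]
  rw [this]
  exact h2.comp h1

lemma joint_law :
    ((uniformIcc δ).prod (uniformIcc δ)).map (fun p : ℝ × ℝ => (p.1, p.1 - p.2))
      = ((volume : Measure ℝ).prod volume).withDensity (fJ δ) := by
  have hF : Measurable (fun p : ℝ × ℝ => dd δ p.1 * dd δ p.2) :=
    ((measurable_dd δ).comp measurable_fst).mul ((measurable_dd δ).comp measurable_snd)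
  rw [uniformIcc_eq δ,
    withDensity_prod_withDensity volume volume (measurable_dd δ) (measurable_dd δ),
    map_withDensity_of_measurePreserving (F := fun p : ℝ × ℝ => dd δ p.1 * dd δ p.2)
      (measurePreserving_T hδ) (fun p => by simp) hF]
  rfl

lemma min_max_eq (z : ℝ) : min δ (z + δ) - max (-δ) (z - δ) = 2 * δ - |z| := by
  rcases le_or_gt 0 z with hz | hz
  · rw [min_eq_left (by linarith), max_eq_right (by linarith), abs_of_nonneg hz]; ring
  · rw [min_eq_right (by linarith), max_eq_left (by linarith), abs_of_neg hz]; ring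

lemma inner_lintegral (z : ℝ) : ∫⁻ x, fJ δ (x, z) ∂volume = gg δ z := by
  have hpt : ∀ x, fJ δ (x, z) = (Set.Icc (-δ) δ ∩ Set.Icc (z - δ) (z + δ)).indicator
      (fun _ => (ENNReal.ofReal (2 * δ))⁻¹ * (ENNReal.ofReal (2 * δ))⁻¹) x := by
    intro x
    by_cases h1 : x ∈ Set.Icc (-δ) δ <;> by_cases h2 : x - z ∈ Set.Icc (-δ) δ
    · have hx : x ∈ Set.Icc (-δ) δ ∩ Set.Icc (z - δ) (z + δ) := by
        simp only [Set.mem_inter_iff, Set.mem_Icc] at *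
        exact ⟨h1, ⟨by linarith [h2.1], by linarith [h2.2]⟩⟩
      rw [show fJ δ (x, z) = dd δ x * dd δ (x - z) from rfl, dd,
        Set.indicator_of_mem h1, Set.indicator_of_mem h2, Set.indicator_of_mem hx]
    · have hx : x ∉ Set.Icc (-δ) δ ∩ Set.Icc (z - δ) (z + δ) := by
        simp only [Set.mem_inter_iff, Set.mem_Icc] at *
        intro hc; exact h2 ⟨by linarith [hc.2.1], by linarith [hc.2.2]⟩
      rw [show fJ δ (x, z) = dd δ x * dd δ (x - z) from rfl, dd,
        Set.indicator_of_notMem h2, Set.indicator_of_notMem hx, mul_zero]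
    · have hx : x ∉ Set.Icc (-δ) δ ∩ Set.Icc (z - δ) (z + δ) := fun hc => h1 hc.1
      rw [show fJ δ (x, z) = dd δ x * dd δ (x - z) from rfl, dd,
        Set.indicator_of_notMem h1, Set.indicator_of_notMem hx, zero_mul]
    · have hx : x ∉ Set.Icc (-δ) δ ∩ Set.Icc (z - δ) (z + δ) := fun hc => h1 hc.1
      rw [show fJ δ (x, z) = dd δ x * dd δ (x - z) from rfl, dd,
        Set.indicator_of_notMem h1, Set.indicator_of_notMem hx, zero_mul]
  simp only [hpt]
  rw [lintegral_indicator_const (measurableSet_Icc.inter measurableSet_Icc),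
    Set.Icc_inter_Icc, Real.volume_Icc]
  rw [gg, show δ ⊓ (z + δ) - -δ ⊔ (z - δ) = 2 * δ - |z| from min_max_eq hδ z, mul_comm]

lemma snd_law :
    (((volume : Measure ℝ).prod volume).withDensity (fJ δ)).map Prod.snd
      = volume.withDensity (gg δ) := by
  ext s hs
  rw [Measure.map_apply measurable_snd hs, withDensity_apply _ (measurable_snd hs),
    ← lintegral_indicator (measurable_snd hs),
    lintegral_prod_symm _ ((measurable_fJ δ).indicator (measurable_snd hs)).aemeasurable,
    withDensity_apply _ hs, ← lintegral_indicator hs]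
  congr 1
  funext z
  by_cases hz : z ∈ s
  · calc ∫⁻ x, (Prod.snd ⁻¹' s).indicator (fJ δ) (x, z) ∂volume
        = ∫⁻ x, fJ δ (x, z) ∂volume := lintegral_congr fun x => Set.indicator_of_mem (show (x, z) ∈ Prod.snd ⁻¹' s from hz) _
      _ = gg δ z := inner_lintegral hδ z
      _ = s.indicator (gg δ) z := (Set.indicator_of_mem hz _).symm
  · calc ∫⁻ x, (Prod.snd ⁻¹' s).indicator (fJ δ) (x, z) ∂volume
        = ∫⁻ x, (0 : ℝ≥0∞) ∂volume := lintegral_congr fun x => Set.indicator_of_notMem (show (x, z) ∉ Prod.snd ⁻¹' s from hz) _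
      _ = 0 := lintegral_zero
      _ = s.indicator (gg δ) z := (Set.indicator_of_notMem hz _).symm

lemma abs_le_of_mem_SS {p : ℝ × ℝ} (hp : p ∈ SS δ) : |p.2| ≤ 2 * δ := by
  obtain ⟨h1, h2⟩ := hp
  simp only [Set.mem_Icc] at h1 h2
  rw [abs_le]; constructor <;> [linarith [h1.2, h2.1]; linarith [h1.1, h2.2]]

lemma fnu_mul_rho :
    (fun p : ℝ × ℝ => (dd δ p.1 * gg δ p.2) * rho δ p) =ᵐ[(volume : Measure ℝ).prod volume]
      fJ δ := by
  have hE : ((volume : Measure ℝ).prod volume) (Set.univ ×ˢ ({2 * δ, -(2 * δ)} : Set ℝ)) = 0 := by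
    have hfin : ({2 * δ, -(2 * δ)} : Set ℝ).Finite := (Set.finite_singleton _).insert _
    rw [Measure.prod_prod, hfin.measure_zero volume, mul_zero]
  rw [Filter.EventuallyEq, ae_iff]
  refine measure_mono_null (fun p hp => ?_) hE
  simp only [Set.mem_setOf_eq] at hp
  simp only [Set.mem_prod, Set.mem_univ, true_and, Set.mem_insert_iff, Set.mem_singleton_iff]
  by_contra hne
  push_neg at hne
  apply hp
  by_cases hpS : p ∈ SS δ
  · have habs : |p.2| < 2 * δ := by
      rcases lt_or_eq_of_le (abs_le_of_mem_SS hδ hpS) with h | h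
      · exact h
      · exfalso
        rcases abs_eq (by linarith : (0:ℝ) ≤ 2 * δ) |>.mp h with h' | h'
        · exact hne.1 h'
        · exact hne.2 h'
    have hb0 : ENNReal.ofReal (2 * δ - |p.2|) ≠ 0 := by
      simp only [ne_eq, ENNReal.ofReal_eq_zero, not_le]; linarith
    have hbt : ENNReal.ofReal (2 * δ - |p.2|) ≠ ⊤ := ENNReal.ofReal_ne_top
    have ha0 : ENNReal.ofReal (2 * δ) ≠ 0 := by
      simp only [ne_eq, ENNReal.ofReal_eq_zero, not_le]; linarith
    have hat : ENNReal.ofReal (2 * δ) ≠ ⊤ := ENNReal.ofReal_ne_top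
    have hd1 : dd δ p.1 = (ENNReal.ofReal (2 * δ))⁻¹ := Set.indicator_of_mem hpS.1 _
    have hd2 : dd δ (p.1 - p.2) = (ENNReal.ofReal (2 * δ))⁻¹ := Set.indicator_of_mem hpS.2 _
    rw [rho, if_pos hpS, fJ, hd1, hd2, gg, div_eq_mul_inv]
    set a := ENNReal.ofReal (2 * δ)
    set b := ENNReal.ofReal (2 * δ - |p.2|)
    calc a⁻¹ * (a⁻¹ * a⁻¹ * b) * (a * b⁻¹)
        = (a⁻¹ * a⁻¹) * (a⁻¹ * a) * (b * b⁻¹) := by ring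
      _ = a⁻¹ * a⁻¹ := by
          rw [ENNReal.inv_mul_cancel ha0 hat, ENNReal.mul_inv_cancel hb0 hbt, mul_one, mul_one]
  · rw [rho, if_neg hpS, mul_zero, fJ]
    rcases not_and_or.mp hpS with h | h
    · rw [dd, Set.indicator_of_notMem h, zero_mul]
    · rw [dd, Set.indicator_of_notMem h, mul_zero]

lemma joint_eq_withDensity_rho :
    ((volume : Measure ℝ).prod volume).withDensity (fJ δ)
      = ((((volume : Measure ℝ).prod volume)).withDensity
          (fun p => dd δ p.1 * gg δ p.2)).withDensity (rho δ) := by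
  rw [← withDensity_mul (f := fun p : ℝ × ℝ => dd δ p.1 * gg δ p.2) (g := rho δ) _
      (((measurable_dd δ).comp measurable_fst).mul
      ((measurable_gg δ).comp measurable_snd)) (measurable_rho δ)]
  exact (withDensity_congr_ae (fnu_mul_rho hδ)).symm



omit hδ in
lemma horiz_null :
    ((volume : Measure ℝ).prod volume) (Set.univ ×ˢ ({2 * δ, -(2 * δ)} : Set ℝ)) = 0 := by
  have hfin : ({2 * δ, -(2 * δ)} : Set ℝ).Finite := (Set.finite_singleton _).insert _
  rw [Measure.prod_prod, hfin.measure_zero volume, mul_zero]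

end Stmt8Aux

namespace Stmt8Aux2

open Set ENNReal

noncomputable def Phi (d : ℝ) : ℝ → ℝ := fun z =>
  (max (2 * d - |z|) 0 * Real.log (2 * d)
      - max (2 * d - |z|) 0 * Real.log (max (2 * d - |z|) 0))
    * ((2 * d)⁻¹ * (2 * d)⁻¹)

lemma continuous_Phi (d : ℝ) : Continuous (Phi d) := by
  have hu : Continuous (fun z : ℝ => max (2 * d - |z|) 0) :=
    (continuous_const.sub continuous_abs).max continuous_const
  exact (((hu.mul continuous_const).sub (Real.continuous_mul_log.comp hu)).mul continuous_const)

lemma toReal_ofReal_max (a : ℝ) : (ENNReal.ofReal a).toReal = max a 0 := by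
  rw [ENNReal.ofReal]; simp [Real.coe_toNNReal']

lemma toReal_gg {d : ℝ} (hd : 0 < d) (z : ℝ) :
    (Stmt8Aux.gg d z).toReal = (2 * d)⁻¹ * (2 * d)⁻¹ * max (2 * d - |z|) 0 := by
  rw [Stmt8Aux.gg, ENNReal.toReal_mul, ENNReal.toReal_mul, ENNReal.toReal_inv,
    toReal_ofReal_max, toReal_ofReal_max, max_eq_left (by linarith : (0:ℝ) ≤ 2 * d)]

lemma phi_eq {d : ℝ} (hd : 0 < d) (z : ℝ) :
    (Stmt8Aux.gg d z).toReal * (Real.log (2 * d) - Real.log (2 * d - |z|)) = Phi d z := by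
  rw [toReal_gg hd, Phi]
  rcases le_or_gt (2 * d - |z|) 0 with h | h
  · rw [max_eq_right h]
    ring
  · rw [max_eq_left h.le]
    ring

lemma integrable_Phi {d : ℝ} (hd : 0 < d) : Integrable (Phi d) (volume : Measure ℝ) := by
  apply (continuous_Phi d).integrable_of_hasCompactSupport
  apply HasCompactSupport.intro (isCompact_Icc (a := -(2*d)) (b := 2*d))
  intro x hx
  simp only [Set.mem_Icc, not_and_or, not_le] at hx
  have habs : 2 * d - |x| ≤ 0 := by
    rcases hx with h | h
    · rw [abs_of_neg (by linarith)]; linarith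
    · rw [abs_of_pos (by linarith)]; linarith
  rw [Phi, max_eq_right habs]
  simp

lemma ftc_piece (r : ℝ) (hr : 0 < r) :
    ∫ z in (0:ℝ)..r, ((r - z) * Real.log r - (r - z) * Real.log (r - z)) = r ^ 2 / 4 := by
  set F : ℝ → ℝ := fun z =>
    (1 / 2) * ((r - z) * ((r - z) * Real.log (r - z)))
      - (Real.log r / 2 + 1 / 4) * (r - z) ^ 2 with hF
  have hcont : ContinuousOn F (Set.Icc 0 r) := by
    apply Continuous.continuousOn
    exact (continuous_const.mul ((continuous_const.sub continuous_id).mul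
        (Real.continuous_mul_log.comp (continuous_const.sub continuous_id)))).sub
      (continuous_const.mul ((continuous_const.sub continuous_id).pow 2))
  have hderiv : ∀ z ∈ Set.Ioo 0 r,
      HasDerivWithinAt F ((r - z) * Real.log r - (r - z) * Real.log (r - z)) (Set.Ioi z) z := by
    intro z hz
    have hpos : 0 < r - z := by linarith [hz.2]
    have hne : r - z ≠ 0 := ne_of_gt hpos
    have h1 : HasDerivAt (fun w : ℝ => r - w) (-1) z := (hasDerivAt_id z).const_sub r
    have hlog : HasDerivAt (fun w : ℝ => Real.log (r - w)) (-1 / (r - z)) z := h1.log hne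
    have hm : HasDerivAt (fun w : ℝ => (r - w) * Real.log (r - w))
        ((-1) * Real.log (r - z) + (r - z) * (-1 / (r - z))) z := h1.mul hlog
    have hm2 : HasDerivAt (fun w : ℝ => (r - w) * ((r - w) * Real.log (r - w)))
        ((-1) * ((r - z) * Real.log (r - z))
          + (r - z) * ((-1) * Real.log (r - z) + (r - z) * (-1 / (r - z)))) z := h1.mul hm
    have hsq : HasDerivAt (fun w : ℝ => (r - w) ^ 2) (((2:ℕ) : ℝ) * (r - z) ^ 1 * (-1)) z :=
      h1.pow 2
    have hFd := (hm2.const_mul (1 / 2 : ℝ)).sub (hsq.const_mul (Real.log r / 2 + 1 / 4))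
    refine HasDerivWithinAt.congr_deriv hFd.hasDerivWithinAt ?_
    have hk : (r - z) * (-1 / (r - z)) = -1 := by
      rw [mul_div_assoc', mul_neg_one, neg_div, div_self hne]
    push_cast
    linear_combination ((1 / 2 : ℝ) * (r - z)) * hk
  have hcint : Continuous (fun z : ℝ => (r - z) * Real.log r - (r - z) * Real.log (r - z)) :=
    ((continuous_const.sub continuous_id).mul continuous_const).sub
      (Real.continuous_mul_log.comp (continuous_const.sub continuous_id))
  have hint : IntervalIntegrable (fun z : ℝ => (r - z) * Real.log r - (r - z) * Real.log (r - z))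
      volume 0 r := hcint.intervalIntegrable 0 r
  rw [intervalIntegral.integral_eq_sub_of_hasDeriv_right_of_le hr.le hcont hderiv hint]
  have hFr : F r = 0 := by simp [hF]
  have hF0 : F 0 = -(r ^ 2 / 4) := by
    simp only [hF, sub_zero]
    ring
  rw [hFr, hF0]
  ring

lemma integral_Phi {d : ℝ} (hd : 0 < d) : ∫ z, Phi d z ∂(volume : Measure ℝ) = 1 / 2 := by
  have hr : 0 < 2 * d := by linarith
  set r := 2 * d with hrdef
  set ψ : ℝ → ℝ := fun z => ((r - |z|) * Real.log r - (r - |z|) * Real.log (r - |z|)) with hψ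
  have hψcont : Continuous ψ :=
    ((continuous_const.sub continuous_abs).mul continuous_const).sub
      (Real.continuous_mul_log.comp (continuous_const.sub continuous_abs))
  have hPhi_ind : Phi d = (Set.Icc (-r) r).indicator (Phi d) := by
    funext z
    by_cases hz : z ∈ Set.Icc (-r) r
    · rw [Set.indicator_of_mem hz]
    · rw [Set.indicator_of_notMem hz]
      simp only [Set.mem_Icc, not_and_or, not_le] at hz
      have habs : 2 * d - |z| ≤ 0 := by
        rcases hz with h | h
        · rw [abs_of_neg (by linarith)]; linarith
        · rw [abs_of_pos (by linarith)]; linarith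
      rw [Phi, max_eq_right habs]
      simp
  have step1 : ∫ z, Phi d z ∂(volume : Measure ℝ) = ∫ z in (-r)..r, Phi d z := by
    conv_lhs => rw [hPhi_ind]
    rw [integral_indicator measurableSet_Icc,
      intervalIntegral.integral_of_le (by linarith : -r ≤ r),
      ← MeasureTheory.integral_Icc_eq_integral_Ioc]
  have step2 : ∫ z in (-r)..r, Phi d z = (∫ z in (-r)..r, ψ z) * ((2*d)⁻¹ * (2*d)⁻¹) := by
    rw [← intervalIntegral.integral_mul_const]
    apply intervalIntegral.integral_congr
    intro z hz
    rw [Set.uIcc_of_le (by linarith : -r ≤ r), Set.mem_Icc] at hz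
    have habs : 0 ≤ r - |z| := by
      rcases abs_cases z with ⟨h, _⟩ | ⟨h, _⟩ <;> rw [h] <;> linarith [hz.1, hz.2]
    rw [Phi, max_eq_left (by rw [← hrdef]; exact habs), hψ, ← hrdef]
  have hii : ∀ a b : ℝ, IntervalIntegrable ψ volume a b := fun a b =>
    hψcont.intervalIntegrable a b
  have hsplit : ∫ z in (-r)..r, ψ z = (∫ z in (-r)..(0:ℝ), ψ z) + ∫ z in (0:ℝ)..r, ψ z :=
    (intervalIntegral.integral_add_adjacent_intervals (hii _ _) (hii _ _)).symm
  have hneg : ∫ z in (-r)..(0:ℝ), ψ z = ∫ z in (0:ℝ)..r, ψ z := by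
    have h1 : (∫ z in (0:ℝ)..r, ψ (-z)) = ∫ z in (-r)..(-(0:ℝ)), ψ z :=
      intervalIntegral.integral_comp_neg ψ
    have h2 : ∀ z, ψ (-z) = ψ z := by intro z; simp [hψ, abs_neg]
    simp only [h2, neg_zero] at h1
    exact h1.symm
  have hhalf : ∫ z in (0:ℝ)..r, ψ z = r ^ 2 / 4 := by
    rw [show (∫ z in (0:ℝ)..r, ψ z)
        = ∫ z in (0:ℝ)..r, ((r - z) * Real.log r - (r - z) * Real.log (r - z)) from
      intervalIntegral.integral_congr (fun z hz => by
        rw [Set.uIcc_of_le hr.le] at hz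
        show (r - |z|) * Real.log r - (r - |z|) * Real.log (r - |z|) = _
        rw [abs_of_nonneg hz.1])]
    exact ftc_piece r hr
  rw [step1, step2, hsplit, hneg, hhalf, hrdef]
  have h2d : (2 * d) ≠ 0 := by linarith
  field_simp
  ring

end Stmt8Aux2



open Stmt8Aux

theorem stmt_8 {Ω : Type*} [MeasurableSpace Ω] (P : Measure Ω) [IsProbabilityMeasure P]
    (δ : ℝ) (hδ : 0 < δ)
    (X Y : Ω → ℝ) (hX : Measurable X) (hY : Measurable Y)
    (hindep : IndepFun X Y P)
    (hXlaw : P.map X = uniformIcc δ) (hYlaw : P.map Y = uniformIcc δ) :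
    klDiv (P.map (fun ω => (X ω, X ω - Y ω)))
        ((P.map X).prod (P.map (fun ω => X ω - Y ω))) = ((1 / 2 : ℝ) : EReal) := by
  have hprob : IsProbabilityMeasure (uniformIcc δ) := isProbability_uniformIcc hδ
  have hpair : P.map (fun ω => (X ω, Y ω)) = (uniformIcc δ).prod (uniformIcc δ) := by
    rw [(indepFun_iff_map_prod_eq_prod_map_map hX.aemeasurable hY.aemeasurable).mp hindep,
      hXlaw, hYlaw]
  have hT : Measurable (fun p : ℝ × ℝ => (p.1, p.1 - p.2)) :=
    measurable_fst.prodMk (measurable_fst.sub measurable_snd)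
  have hJlaw : P.map (fun ω => (X ω, X ω - Y ω))
      = ((volume : Measure ℝ).prod volume).withDensity (fJ δ) := by
    have he : (fun ω => (X ω, X ω - Y ω))
        = (fun p : ℝ × ℝ => (p.1, p.1 - p.2)) ∘ (fun ω => (X ω, Y ω)) := rfl
    rw [he, ← Measure.map_map hT (hX.prodMk hY), hpair, joint_law hδ]
  have hXYmeas : Measurable (fun ω => (X ω, X ω - Y ω)) := hX.prodMk (hX.sub hY)
  have hZlaw : P.map (fun ω => X ω - Y ω) = volume.withDensity (gg δ) := by
    have he : (fun ω => X ω - Y ω) = Prod.snd ∘ (fun ω => (X ω, X ω - Y ω)) := rfl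
    rw [he, ← Measure.map_map measurable_snd hXYmeas, hJlaw, snd_law hδ]
  set μJ := ((volume : Measure ℝ).prod volume).withDensity (fJ δ) with hμJdef
  set ν := ((volume : Measure ℝ).prod volume).withDensity
      (fun p : ℝ × ℝ => dd δ p.1 * gg δ p.2) with hνdef
  have hνlaw : (P.map X).prod (P.map fun ω => X ω - Y ω) = ν := by
    rw [hXlaw, hZlaw, uniformIcc_eq δ,
      withDensity_prod_withDensity volume volume (measurable_dd δ) (measurable_gg δ)]
  have hPν : IsProbabilityMeasure ν := by
    rw [← hνlaw]
    have : IsProbabilityMeasure (P.map fun ω => X ω - Y ω) :=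
      Measure.isProbabilityMeasure_map (hX.sub hY).aemeasurable
    rw [hXlaw]
    infer_instance
  have hJν : μJ = ν.withDensity (rho δ) := joint_eq_withDensity_rho hδ
  have habs : μJ ≪ ν := by
    rw [hJν]; exact withDensity_absolutelyContinuous ν (rho δ)
  have hrnν : μJ.rnDeriv ν =ᵐ[ν] rho δ := by
    rw [hJν]; exact Measure.rnDeriv_withDensity ν (measurable_rho δ)
  have hrn : μJ.rnDeriv ν =ᵐ[μJ] rho δ := hrnν.filter_mono habs.ae_le
  -- a.e. facts for μJ
  have hSae : ∀ᵐ p ∂μJ, p ∈ SS δ := by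
    rw [ae_iff]
    have hset : {p : ℝ × ℝ | ¬ p ∈ SS δ} = (SS δ)ᶜ := rfl
    rw [hset, hμJdef, withDensity_apply _ (measurableSet_SS δ).compl]
    have hz : ∀ p ∈ (SS δ)ᶜ, fJ δ p = 0 := by
      intro p hp
      rcases not_and_or.mp hp with h | h
      · show dd δ p.1 * dd δ (p.1 - p.2) = 0
        rw [dd, Set.indicator_of_notMem h, zero_mul]
      · show dd δ p.1 * dd δ (p.1 - p.2) = 0
        rw [dd, Set.indicator_of_notMem h, mul_zero]
    calc ∫⁻ p in (SS δ)ᶜ, fJ δ p ∂((volume : Measure ℝ).prod volume)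
        = ∫⁻ _ in (SS δ)ᶜ, 0 ∂((volume : Measure ℝ).prod volume) :=
          setLIntegral_congr_fun (measurableSet_SS δ).compl hz
      _ = 0 := lintegral_zero
  have hEae : ∀ᵐ p ∂μJ, |p.2| ≠ 2 * δ := by
    have habsvol : μJ ≪ (volume : Measure ℝ).prod volume :=
      withDensity_absolutelyContinuous _ _
    rw [ae_iff]
    apply habsvol
    refine measure_mono_null (fun p hp => ?_) (horiz_null (δ := δ))
    simp only [Set.mem_setOf_eq, not_not] at hp
    rcases (abs_eq (by linarith : (0:ℝ) ≤ 2 * δ)).mp hp with h | h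
    · exact ⟨Set.mem_univ _, Or.inl h⟩
    · exact ⟨Set.mem_univ _, Or.inr h⟩
  have hllr : llr μJ ν =ᵐ[μJ]
      fun p : ℝ × ℝ => Real.log (2 * δ) - Real.log (2 * δ - |p.2|) := by
    filter_upwards [hrn, hSae, hEae] with p h1 h2 h3
    have habs2 : |p.2| < 2 * δ := lt_of_le_of_ne (abs_le_of_mem_SS hδ h2) h3
    have hpos : 0 < 2 * δ - |p.2| := by linarith
    show Real.log (μJ.rnDeriv ν p).toReal = _
    rw [h1, rho, if_pos h2, ENNReal.toReal_div,
      ENNReal.toReal_ofReal (by linarith : (0:ℝ) ≤ 2 * δ),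
      ENNReal.toReal_ofReal hpos.le]
    exact Real.log_div (by linarith) (ne_of_gt hpos)
  -- integrability
  have hgg_lt : ∀ᵐ z ∂(volume : Measure ℝ), gg δ z < ⊤ := by
    refine ae_of_all _ (fun z => ?_)
    rw [gg]
    exact ENNReal.mul_lt_top (ENNReal.mul_lt_top (by simp [hδ]) (by simp [hδ])) ENNReal.ofReal_lt_top
  have hℓmeas : Measurable (fun z : ℝ => Real.log (2 * δ) - Real.log (2 * δ - |z|)) :=
    measurable_const.sub (Real.measurable_log.comp (measurable_const.sub measurable_abs))
  have hint_ell : Integrable (fun z : ℝ => Real.log (2 * δ) - Real.log (2 * δ - |z|))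
      (volume.withDensity (gg δ)) := by
    rw [integrable_withDensity_iff (measurable_gg δ) hgg_lt]
    have he : (fun z : ℝ => (Real.log (2 * δ) - Real.log (2 * δ - |z|)) * (gg δ z).toReal)
        = Stmt8Aux2.Phi δ := by
      funext z
      rw [mul_comm]
      exact Stmt8Aux2.phi_eq hδ z
    rw [he]
    exact Stmt8Aux2.integrable_Phi hδ
  have hsndJ : μJ.map Prod.snd = volume.withDensity (gg δ) := snd_law hδ
  have hLint : Integrable
      (fun p : ℝ × ℝ => Real.log (2 * δ) - Real.log (2 * δ - |p.2|)) μJ := by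
    have := (integrable_map_measure
      (f := (Prod.snd : ℝ × ℝ → ℝ))
      (g := fun z : ℝ => Real.log (2 * δ) - Real.log (2 * δ - |z|))
      (by rw [hsndJ]; exact hℓmeas.aestronglyMeasurable)
      measurable_snd.aemeasurable).mp (by rwa [hsndJ])
    exact this
  have hint : Integrable (llr μJ ν) μJ := (integrable_congr hllr).mpr hLint
  -- the integral
  have hI1 : ∫ p, llr μJ ν p ∂μJ
      = ∫ p : ℝ × ℝ, (Real.log (2 * δ) - Real.log (2 * δ - |p.2|)) ∂μJ :=
    integral_congr_ae hllr
  have hI2 : ∫ p : ℝ × ℝ, (Real.log (2 * δ) - Real.log (2 * δ - |p.2|)) ∂μJ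
      = ∫ z : ℝ, (Real.log (2 * δ) - Real.log (2 * δ - |z|)) ∂(volume.withDensity (gg δ)) := by
    rw [← hsndJ, integral_map measurable_snd.aemeasurable
      (by rw [hsndJ]; exact hℓmeas.aestronglyMeasurable)]
  have hgg_ne : ∀ z, gg δ z ≠ ⊤ := by
    intro z
    rw [gg]
    exact (ENNReal.mul_lt_top (ENNReal.mul_lt_top (by simp [hδ]) (by simp [hδ]))
      ENNReal.ofReal_lt_top).ne
  have hI3 : ∫ z : ℝ, (Real.log (2 * δ) - Real.log (2 * δ - |z|)) ∂(volume.withDensity (gg δ))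
      = ∫ z, Stmt8Aux2.Phi δ z ∂(volume : Measure ℝ) := by
    have hgg' : volume.withDensity (gg δ)
        = volume.withDensity (fun z => ((gg δ z).toNNReal : ENNReal)) :=
      withDensity_congr_ae (ae_of_all _ fun z => (ENNReal.coe_toNNReal (hgg_ne z)).symm)
    rw [hgg', integral_withDensity_eq_integral_smul ((measurable_gg δ).ennreal_toNNReal)]
    congr 1
    funext z
    rw [NNReal.smul_def]
    show (gg δ z).toReal * (Real.log (2 * δ) - Real.log (2 * δ - |z|)) = _
    exact Stmt8Aux2.phi_eq hδ z
  have hIval : ∫ p, llr μJ ν p ∂μJ = 1 / 2 := by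
    rw [hI1, hI2, hI3]
    exact Stmt8Aux2.integral_Phi hδ
  rw [hJlaw, hνlaw, klDiv, if_pos ⟨habs, hint⟩, hIval]
end

section
/- Let X, Y be independent random variables, each uniformly distributed on [−1/2, 1/2], let k ∈ [0,1], and define C_k = 1 if X + kY ≥ 0 and C_k = 0 otherwise. Then MI(C_k, X) = log 2 − k/2, i.e., the KL divergence of the joint law of (X, C_k) from the product of the law of X and the law of C_k equals log 2 − k/2. -/
open MeasureTheory ProbabilityTheory Real
open scoped Classical ENNReal

namespace Stmt11

noncomputable def u : Measure ℝ := volume.restrict (Set.Icc (-(1 / 2 : ℝ)) (1 / 2))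

lemma uniformIcc_half : uniformIcc (1 / 2) = u := by
  rw [uniformIcc, u]
  norm_num

instance : IsProbabilityMeasure u := by
  constructor
  rw [u, Measure.restrict_apply_univ, Real.volume_Icc]
  norm_num

noncomputable def g (k x y : ℝ) : ℕ := if 0 ≤ x + k * y then 1 else 0

lemma measurable_g (k : ℝ) : Measurable fun q : ℝ × ℝ => g k q.1 q.2 := by
  unfold g
  exact Measurable.ite
    (measurableSet_le measurable_const (measurable_fst.add (measurable_snd.const_mul k)))
    measurable_const measurable_const

lemma measurable_g1 (k x : ℝ) : Measurable fun y : ℝ => g k x y :=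
  (measurable_g k).comp (measurable_const.prodMk measurable_id)

noncomputable def pE (k x : ℝ) : ℝ≥0∞ := u {y | 0 ≤ x + k * y}

lemma measurableSet_S (k x : ℝ) : MeasurableSet {y : ℝ | 0 ≤ x + k * y} :=
  measurableSet_le measurable_const (measurable_const.add (measurable_id.const_mul k))

lemma gset1 (k x : ℝ) : {y : ℝ | g k x y = 1} = {y | 0 ≤ x + k * y} := by
  ext y; by_cases h : 0 ≤ x + k * y <;> simp [g, h]

lemma gset0 (k x : ℝ) : {y : ℝ | g k x y = 0} = {y | 0 ≤ x + k * y}ᶜ := by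
  ext y
  simp only [Set.mem_setOf_eq, Set.mem_compl_iff]
  by_cases h : 0 ≤ x + k * y <;> simp [g, h]

lemma gsetc (k x : ℝ) {c : ℕ} (hc : 2 ≤ c) : {y : ℝ | g k x y = c} = ∅ := by
  ext y
  simp only [Set.mem_setOf_eq, Set.mem_empty_iff_false, iff_false]
  by_cases h : 0 ≤ x + k * y <;> simp [g, h] <;> omega

lemma pE_le_one (k x : ℝ) : pE k x ≤ 1 := prob_le_one

lemma u_g1 (k x : ℝ) : u {y | g k x y = 1} = pE k x := by rw [gset1]; rfl

lemma u_g0 (k x : ℝ) : u {y | g k x y = 0} = 1 - pE k x := by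
  rw [gset0, measure_compl (measurableSet_S k x) (measure_ne_top _ _), measure_univ]; rfl

noncomputable def m (k : ℝ) : Measure ℕ := (u.prod u).map fun q : ℝ × ℝ => g k q.1 q.2

instance (k : ℝ) : IsProbabilityMeasure (m k) :=
  Measure.isProbabilityMeasure_map (measurable_g k).aemeasurable

noncomputable def F (k : ℝ) : ℝ × ℕ → ℝ≥0∞ := fun q => 2 * u {y | g k q.1 y = q.2}

lemma measurable_F (k : ℝ) : Measurable (F k) := by
  have hs : MeasurableSet {qy : (ℝ × ℕ) × ℝ | g k qy.1.1 qy.2 = qy.1.2} := by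
    have h1 : Measurable fun qy : (ℝ × ℕ) × ℝ => g k qy.1.1 qy.2 :=
      (measurable_g k).comp (measurable_fst.fst.prodMk measurable_snd)
    exact measurableSet_eq_fun h1 measurable_fst.snd
  exact measurable_const.mul (measurable_measure_prodMk_left hs)

noncomputable def μj (k : ℝ) : Measure (ℝ × ℕ) :=
  (u.prod u).map fun q : ℝ × ℝ => (q.1, g k q.1 q.2)

lemma measurable_phi (k : ℝ) : Measurable fun q : ℝ × ℝ => (q.1, g k q.1 q.2) :=
  measurable_fst.prodMk (measurable_g k)

lemma m_apply (k : ℝ) (c : ℕ) : m k {c} = ∫⁻ x, u {y | g k x y = c} ∂u := by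
  rw [m, Measure.map_apply (measurable_g k) (measurableSet_singleton c),
    Measure.prod_apply ((measurable_g k) (measurableSet_singleton c))]
  rfl

lemma m_top (k : ℝ) {c : ℕ} (hc : 2 ≤ c) : m k {c} = 0 := by
  rw [m_apply]
  simp [gsetc k _ hc]

lemma ofReal_max0 (a : ℝ) : ENNReal.ofReal a = ENNReal.ofReal (max 0 a) := by
  rcases le_total a 0 with h | h
  · rw [ENNReal.ofReal_eq_zero.mpr h, max_eq_left h, ENNReal.ofReal_zero]
  · rw [max_eq_right h]

lemma ofReal_half : ENNReal.ofReal (1 / 2 : ℝ) = 2⁻¹ := by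
  rw [show (1 / 2 : ℝ) = 2⁻¹ by norm_num,
    ENNReal.ofReal_inv_of_pos (by norm_num), ENNReal.ofReal_ofNat]

lemma pE_zero (x : ℝ) : pE 0 x = if 0 ≤ x then 1 else 0 := by
  by_cases h : 0 ≤ x
  · have hs : {y : ℝ | 0 ≤ x + 0 * y} = Set.univ := by ext y; simp [h]
    rw [if_pos h, pE, hs, measure_univ]
  · have hs : {y : ℝ | 0 ≤ x + 0 * y} = ∅ := by ext y; simp [h]
    rw [if_neg h, pE, hs, measure_empty]

lemma pE_formula {k : ℝ} (hk0 : 0 < k) (x : ℝ) :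
    pE k x = ENNReal.ofReal (min 1 (1 / 2 + x / k)) := by
  have hset : {y : ℝ | 0 ≤ x + k * y} = Set.Ici (-(x / k)) := by
    ext y
    simp only [Set.mem_setOf_eq, Set.mem_Ici, ← neg_div, div_le_iff₀ hk0]
    constructor <;> intro h <;> nlinarith
  rw [pE, hset, u, Measure.restrict_apply measurableSet_Ici]
  have hint : Set.Ici (-(x / k)) ∩ Set.Icc (-(1 / 2)) (1 / 2)
      = Set.Icc (max (-(x / k)) (-(1 / 2))) (1 / 2) := by
    ext z
    simp only [Set.mem_inter_iff, Set.mem_Ici, Set.mem_Icc, max_le_iff]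
    tauto
  rw [hint, Real.volume_Icc]
  congr 1
  rcases le_total (-(1 / 2 : ℝ)) (-(x / k)) with h | h
  · rw [max_eq_left h, min_eq_right (by linarith)]
    ring
  · rw [max_eq_right h, min_eq_left (by linarith)]
    norm_num

noncomputable def cl (k x : ℝ) : ℝ := max 0 (min 1 (1 / 2 + x / k))

lemma continuous_cl (k : ℝ) : Continuous (cl k) := by
  unfold cl
  fun_prop

lemma cl_left {k x : ℝ} (hk0 : 0 < k) (hx : x ≤ -(k / 2)) : cl k x = 0 := by
  have h : x / k ≤ -(1 / 2) := by
    rw [div_le_iff₀ hk0]; nlinarith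
  rw [cl, max_eq_left]
  exact le_trans (min_le_right _ _) (by linarith)

lemma cl_mid {k x : ℝ} (hk0 : 0 < k) (hx1 : -(k / 2) ≤ x) (hx2 : x ≤ k / 2) :
    cl k x = 1 / 2 + x / k := by
  have h1 : -(1 / 2) ≤ x / k := by
    rw [le_div_iff₀ hk0]; nlinarith
  have h2 : x / k ≤ 1 / 2 := by
    rw [div_le_iff₀ hk0]; nlinarith
  rw [cl, min_eq_right (by linarith), max_eq_right (by linarith)]

lemma cl_right {k x : ℝ} (hk0 : 0 < k) (hx : k / 2 ≤ x) : cl k x = 1 := by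
  have h1 : 1 / 2 ≤ x / k := by
    rw [le_div_iff₀ hk0]; nlinarith
  rw [cl, min_eq_left (by linarith), max_eq_right (by norm_num)]

lemma pE_eq_cl {k : ℝ} (hk0 : 0 < k) (x : ℝ) :
    pE k x = ENNReal.ofReal (cl k x) := by
  rw [pE_formula hk0, ofReal_max0]; rfl

lemma integral_u_eq (h : ℝ → ℝ) :
    ∫ x, h x ∂u = ∫ x in (-(1 / 2 : ℝ))..(1 / 2 : ℝ), h x := by
  rw [u, show (volume.restrict (Set.Icc (-(1 / 2 : ℝ)) (1 / 2))) = _ from rfl]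
  rw [show ∫ x, h x ∂(volume.restrict (Set.Icc (-(1 / 2 : ℝ)) (1 / 2)))
      = ∫ x in Set.Icc (-(1 / 2 : ℝ)) (1 / 2), h x ∂volume from rfl,
    MeasureTheory.integral_Icc_eq_integral_Ioc,
    ← intervalIntegral.integral_of_le (by norm_num : -(1 / 2 : ℝ) ≤ 1 / 2)]

lemma integral_cl {k : ℝ} (hk0 : 0 < k) (hk1 : k ≤ 1) : ∫ x, cl k x ∂u = 1 / 2 := by
  rw [integral_u_eq]
  have hii : ∀ a b : ℝ, IntervalIntegrable (cl k) volume a b :=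
    fun a b => (continuous_cl k).intervalIntegrable a b
  rw [← intervalIntegral.integral_add_adjacent_intervals (hii (-(1/2)) (-(k/2))) (hii (-(k/2)) (1/2)),
    ← intervalIntegral.integral_add_adjacent_intervals (hii (-(k/2)) (k/2)) (hii (k/2) (1/2))]
  have e1 : ∫ x in (-(1/2 : ℝ))..(-(k/2)), cl k x = 0 := by
    rw [intervalIntegral.integral_congr (g := fun _ => (0:ℝ)) ?_, intervalIntegral.integral_const,
      smul_zero]
    intro x hx
    rw [Set.uIcc_of_le (by linarith)] at hx
    exact cl_left hk0 hx.2
  have e2 : ∫ x in (-(k/2 : ℝ))..(k/2), cl k x = k / 2 := by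
    rw [intervalIntegral.integral_congr (g := fun x => 1 / 2 + x / k) ?_]
    · rw [intervalIntegral.integral_add (intervalIntegrable_const)
        ((continuous_id'.div_const k).intervalIntegrable _ _),
        intervalIntegral.integral_const, intervalIntegral.integral_div, integral_id]
      simp only [smul_eq_mul]; ring
    · intro x hx
      rw [Set.uIcc_of_le (by linarith)] at hx
      exact cl_mid hk0 hx.1 hx.2
  have e3 : ∫ x in (k/2 : ℝ)..(1/2), cl k x = 1 / 2 - k / 2 := by
    rw [intervalIntegral.integral_congr (g := fun _ => (1:ℝ)) ?_, intervalIntegral.integral_const]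
    · simp
    · intro x hx
      rw [Set.uIcc_of_le (by linarith)] at hx
      exact cl_right hk0 hx.1
  rw [e1, e2, e3]; ring

lemma mI1 (k : ℝ) (hk : k ∈ Set.Icc (0 : ℝ) 1) : m k {1} = 2⁻¹ := by
  rw [m_apply]
  have hcongr : ∫⁻ x, u {y | g k x y = 1} ∂u = ∫⁻ x, pE k x ∂u :=
    lintegral_congr fun x => u_g1 k x
  rw [hcongr]
  rcases eq_or_lt_of_le hk.1 with h0 | h0
  · have hind : ∀ x, pE k x = Set.indicator (Set.Ici (0:ℝ)) (fun _ => 1) x := by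
      intro x
      rw [← h0, pE_zero]
      by_cases h : 0 ≤ x <;> simp [Set.indicator_apply, h, Set.mem_Ici]
    rw [lintegral_congr hind, lintegral_indicator measurableSet_Ici, setLIntegral_one,
      u, Measure.restrict_apply measurableSet_Ici]
    have hset : Set.Ici (0:ℝ) ∩ Set.Icc (-(1/2)) (1/2) = Set.Icc 0 (1/2) := by
      ext z
      simp only [Set.mem_inter_iff, Set.mem_Ici, Set.mem_Icc]
      constructor
      · rintro ⟨h1, _, h3⟩; exact ⟨h1, h3⟩
      · rintro ⟨h1, h2⟩; exact ⟨h1, by linarith, h2⟩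
    rw [hset, Real.volume_Icc, show (1/2 - 0 : ℝ) = 1/2 by norm_num, ofReal_half]
  · have hint : Integrable (cl k) u := by
      rw [u]; exact (continuous_cl k).integrableOn_Icc
    have hnn : 0 ≤ᵐ[u] cl k := Filter.Eventually.of_forall fun x => le_max_left _ _
    rw [lintegral_congr (pE_eq_cl h0),
      ← MeasureTheory.ofReal_integral_eq_lintegral_ofReal hint hnn,
      integral_cl h0 hk.2, ofReal_half]


lemma m0 (k : ℝ) (hk : k ∈ Set.Icc (0 : ℝ) 1) : m k {0} = 2⁻¹ := by
  have hunion : m k ({0} ∪ {1}) = m k {0} + m k {1} :=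
    measure_union (by simp) (measurableSet_singleton 1)
  have huniv : m k (({0} ∪ {1} : Set ℕ)ᶜ) = 0 := by
    rw [m, Measure.map_apply (measurable_g k) (by measurability)]
    have : (fun q : ℝ × ℝ => g k q.1 q.2) ⁻¹' (({0} ∪ {1} : Set ℕ)ᶜ) = ∅ := by
      ext q; simp only [Set.mem_preimage, Set.mem_compl_iff, Set.mem_union]
      by_cases h : 0 ≤ q.1 + k * q.2 <;> simp [g, h]
    rw [this]; simp
  have h01 : m k {0} + m k {1} = 1 := by
    rw [← hunion]
    apply le_antisymm prob_le_one
    calc (1 : ℝ≥0∞) = m k Set.univ := (measure_univ).symm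
      _ = m k (({0} ∪ {1}) ∪ ({0} ∪ {1} : Set ℕ)ᶜ) := by rw [Set.union_compl_self]
      _ ≤ m k ({0} ∪ {1}) + m k (({0} ∪ {1} : Set ℕ)ᶜ) := measure_union_le _ _
      _ = m k ({0} ∪ {1}) := by rw [huniv, add_zero]
  rw [mI1 k hk] at h01
  have := ENNReal.eq_sub_of_add_eq (by simp) h01
  rw [this, ← ENNReal.inv_two_add_inv_two, ENNReal.add_sub_cancel_right (by simp)]

lemma slice (k x : ℝ) (s : Set (ℝ × ℕ)) :
    u {y | (x, g k x y) ∈ s}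
      = (if (x, 0) ∈ s then 1 - pE k x else 0) + (if (x, 1) ∈ s then pE k x else 0) := by
  by_cases h0 : (x, 0) ∈ s <;> by_cases h1 : (x, 1) ∈ s
  · have hset : {y : ℝ | (x, g k x y) ∈ s} = Set.univ := by
      ext y; simp only [Set.mem_setOf_eq, Set.mem_univ, iff_true]
      by_cases h : 0 ≤ x + k * y
      · simpa [g, h] using h1
      · simpa [g, h] using h0
    rw [hset, measure_univ, if_pos h0, if_pos h1, tsub_add_cancel_of_le (pE_le_one k x)]
  · have hset : {y : ℝ | (x, g k x y) ∈ s} = {y | g k x y = 0} := by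
      ext y; simp only [Set.mem_setOf_eq]
      by_cases h : 0 ≤ x + k * y
      · simp [g, h, h1]
      · simp [g, h, h0]
    rw [hset, u_g0, if_pos h0, if_neg h1, add_zero]
  · have hset : {y : ℝ | (x, g k x y) ∈ s} = {y | g k x y = 1} := by
      ext y; simp only [Set.mem_setOf_eq]
      by_cases h : 0 ≤ x + k * y
      · simp [g, h, h1]
      · simp [g, h, h0]
    rw [hset, u_g1, if_neg h0, if_pos h1, zero_add]
  · have hset : {y : ℝ | (x, g k x y) ∈ s} = ∅ := by
      ext y; simp only [Set.mem_setOf_eq, Set.mem_empty_iff_false, iff_false]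
      by_cases h : 0 ≤ x + k * y
      · simpa [g, h] using h1
      · simpa [g, h] using h0
    rw [hset, measure_empty, if_neg h0, if_neg h1, add_zero]

lemma density (k : ℝ) (hk : k ∈ Set.Icc (0 : ℝ) 1) :
    μj k = (u.prod (m k)).withDensity (F k) := by
  ext s hs
  rw [μj, Measure.map_apply (measurable_phi k) hs,
    Measure.prod_apply ((measurable_phi k) hs),
    withDensity_apply _ hs, ← lintegral_indicator hs (F k),
    MeasureTheory.lintegral_prod _ ((measurable_F k).indicator hs).aemeasurable]
  refine lintegral_congr fun x => ?_
  have hpre : Prod.mk x ⁻¹' ((fun q : ℝ × ℝ => (q.1, g k q.1 q.2)) ⁻¹' s)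
      = {y | (x, g k x y) ∈ s} := rfl
  rw [hpre, slice k x s, lintegral_countable']
  rw [tsum_eq_sum (s := ({0, 1} : Finset ℕ)) ?side]
  case side =>
    intro c hc
    have h2 : 2 ≤ c := by simp only [Finset.mem_insert, Finset.mem_singleton] at hc; omega
    rw [m_top k h2, mul_zero]
  rw [Finset.sum_insert (by simp), Finset.sum_singleton, m0 k hk, mI1 k hk]
  congr 1
  · rw [Set.indicator_apply]
    by_cases h0 : (x, 0) ∈ s
    · rw [if_pos h0, if_pos h0]
      symm
      show (2 * u {y | g k x y = 0}) * 2⁻¹ = 1 - pE k x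
      rw [u_g0, mul_right_comm, ENNReal.mul_inv_cancel two_ne_zero (by simp), one_mul]
    · rw [if_neg h0, if_neg h0, zero_mul]
  · rw [Set.indicator_apply]
    by_cases h1 : (x, 1) ∈ s
    · rw [if_pos h1, if_pos h1]
      symm
      show (2 * u {y | g k x y = 1}) * 2⁻¹ = pE k x
      rw [u_g1, mul_right_comm, ENNReal.mul_inv_cancel two_ne_zero (by simp), one_mul]
    · rw [if_neg h1, if_neg h1, zero_mul]

noncomputable def pr (k x : ℝ) : ℝ := (pE k x).toReal

lemma pr_nonneg (k x : ℝ) : 0 ≤ pr k x := ENNReal.toReal_nonneg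

lemma pr_le_one (k x : ℝ) : pr k x ≤ 1 := by
  have h := ENNReal.toReal_mono (by simp : (1 : ℝ≥0∞) ≠ ⊤) (pE_le_one k x)
  simpa [pr] using h

lemma pr_eq_cl {k : ℝ} (hk0 : 0 < k) (x : ℝ) : pr k x = cl k x := by
  rw [pr, pE_eq_cl hk0]
  exact ENNReal.toReal_ofReal (le_max_left _ _)

noncomputable def L (k : ℝ) : ℝ × ℕ → ℝ := fun q => log (F k q).toReal

noncomputable def f (k x y : ℝ) : ℝ := L k (x, g k x y)

lemma measurable_L (k : ℝ) : Measurable (L k) :=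
  Real.measurable_log.comp (measurable_F k).ennreal_toReal

lemma measurable_fprod (k : ℝ) : Measurable fun q : ℝ × ℝ => f k q.1 q.2 :=
  (measurable_L k).comp (measurable_phi k)

lemma F_toReal1 (k x : ℝ) : (F k (x, 1)).toReal = 2 * pr k x := by
  show (2 * u {y | g k x y = 1}).toReal = _
  rw [u_g1, ENNReal.toReal_mul]
  norm_num [pr]

lemma F_toReal0 (k x : ℝ) : (F k (x, 0)).toReal = 2 * (1 - pr k x) := by
  show (2 * u {y | g k x y = 0}).toReal = _
  rw [u_g0, ENNReal.toReal_mul, ENNReal.toReal_sub_of_le (pE_le_one k x) (by simp)]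
  norm_num [pr]

lemma f_eq (k x y : ℝ) :
    f k x y = if 0 ≤ x + k * y then log (2 * pr k x) else log (2 * (1 - pr k x)) := by
  by_cases h : 0 ≤ x + k * y
  · rw [if_pos h, f, show g k x y = 1 from by simp [g, h]]
    show log (F k (x, 1)).toReal = _
    rw [F_toReal1]
  · rw [if_neg h, f, show g k x y = 0 from by simp [g, h]]
    show log (F k (x, 0)).toReal = _
    rw [F_toReal0]

lemma piecewise_eq (T : Set ℝ) (A B : ℝ) :
    (fun y => if y ∈ T then A else B)
      = fun y => T.indicator (fun _ => A) y + Tᶜ.indicator (fun _ => B) y := by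
  funext y; by_cases h : y ∈ T <;> simp [Set.indicator_apply, h]

lemma integrable_piecewise (T : Set ℝ) (hT : MeasurableSet T) (A B : ℝ) :
    Integrable (fun y => if y ∈ T then A else B) u := by
  rw [piecewise_eq]
  exact ((integrable_const A).indicator hT).add ((integrable_const B).indicator hT.compl)

lemma integral_piecewise (T : Set ℝ) (hT : MeasurableSet T) (A B : ℝ) :
    ∫ y, (if y ∈ T then A else B) ∂u = (u T).toReal * A + (1 - (u T).toReal) * B := by
  rw [piecewise_eq, integral_add ((integrable_const A).indicator hT)
      ((integrable_const B).indicator hT.compl),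
    integral_indicator_const A hT, integral_indicator_const B hT.compl, measureReal_def, measureReal_def,
    measure_compl hT (measure_ne_top _ _), measure_univ,
    ENNReal.toReal_sub_of_le prob_le_one (by simp)]
  norm_num

lemma f_eq' (k x : ℝ) : (fun y => f k x y)
    = fun y => if y ∈ {y : ℝ | 0 ≤ x + k * y} then log (2 * pr k x)
        else log (2 * (1 - pr k x)) := by
  funext y; exact f_eq k x y

lemma inner_int (k x : ℝ) :
    ∫ y, f k x y ∂u
      = pr k x * log (2 * pr k x) + (1 - pr k x) * log (2 * (1 - pr k x)) := by
  rw [f_eq', integral_piecewise _ (measurableSet_S k x)]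
  rfl

lemma inner_int_abs (k x : ℝ) :
    ∫ y, |f k x y| ∂u
      = pr k x * |log (2 * pr k x)| + (1 - pr k x) * |log (2 * (1 - pr k x))| := by
  have : (fun y => |f k x y|) = fun y => if y ∈ {y : ℝ | 0 ≤ x + k * y}
      then |log (2 * pr k x)| else |log (2 * (1 - pr k x))| := by
    funext y
    rw [f_eq k x y, apply_ite abs]
    rfl
  rw [this, integral_piecewise _ (measurableSet_S k x)]
  rfl

lemma abs_mul_log_le {t : ℝ} (h0 : 0 ≤ t) (h2 : t ≤ 2) : |t * log t| ≤ 2 := by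
  rcases le_or_gt t 1 with h1 | h1
  · rcases eq_or_lt_of_le h0 with h | h
    · simp [← h]
    · have hlog : log t ≤ 0 := log_nonpos h0 h1
      have habs : |t * log t| = t * log t⁻¹ := by
        rw [abs_of_nonpos (mul_nonpos_of_nonneg_of_nonpos h0 hlog), log_inv]; ring
      have hle : log t⁻¹ ≤ t⁻¹ - 1 := log_le_sub_one_of_pos (inv_pos.mpr h)
      have : t * log t⁻¹ ≤ t * (t⁻¹ - 1) := by
        apply mul_le_mul_of_nonneg_left hle h0
      rw [habs]
      have ht : t * (t⁻¹ - 1) = 1 - t := by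
        field_simp
      nlinarith
  · have hlog0 : 0 ≤ log t := log_nonneg h1.le
    rw [abs_of_nonneg (mul_nonneg (by linarith) hlog0)]
    have : log t ≤ t - 1 := log_le_sub_one_of_pos (by linarith)
    nlinarith

lemma term_bound {p : ℝ} (hp0 : 0 ≤ p) (hp1 : p ≤ 1) : p * |log (2 * p)| ≤ 1 := by
  have h := abs_mul_log_le (t := 2 * p) (by linarith) (by linarith)
  have h2 : |2 * p * log (2 * p)| = 2 * (p * |log (2 * p)|) := by
    rw [abs_mul, abs_of_nonneg (by linarith : (0:ℝ) ≤ 2 * p)]; ring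
  linarith [h2 ▸ h]

lemma integrable_f (k : ℝ) : Integrable (fun q : ℝ × ℝ => f k q.1 q.2) (u.prod u) := by
  rw [integrable_prod_iff (measurable_fprod k).aestronglyMeasurable]
  constructor
  · refine Filter.Eventually.of_forall fun x => ?_
    rw [show (fun y => f k x y) = _ from f_eq' k x]
    exact integrable_piecewise _ (measurableSet_S k x) _ _
  · apply Integrable.mono' (integrable_const (2:ℝ))
      ((measurable_fprod k).aestronglyMeasurable.norm.integral_prod_right')
    refine Filter.Eventually.of_forall fun x => ?_
    have habs : ∫ y, ‖f k x y‖ ∂u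
        = pr k x * |log (2 * pr k x)| + (1 - pr k x) * |log (2 * (1 - pr k x))| := by
      simpa [Real.norm_eq_abs] using inner_int_abs k x
    rw [Real.norm_eq_abs, habs, abs_of_nonneg]
    · have b1 := term_bound (pr_nonneg k x) (pr_le_one k x)
      have b2 := term_bound (p := 1 - pr k x) (by linarith [pr_le_one k x])
        (by linarith [pr_nonneg k x])
      linarith
    · exact add_nonneg (mul_nonneg (pr_nonneg k x) (abs_nonneg _))
        (mul_nonneg (by linarith [pr_le_one k x]) (abs_nonneg _))

lemma klDiv_reduce (k : ℝ) (hk : k ∈ Set.Icc (0 : ℝ) 1) :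
    (μj k ≪ u.prod (m k)) ∧ Integrable (llr (μj k) (u.prod (m k))) (μj k) ∧
    ∫ q, llr (μj k) (u.prod (m k)) q ∂(μj k)
      = ∫ x, (pr k x * log (2 * pr k x) + (1 - pr k x) * log (2 * (1 - pr k x))) ∂u := by
  have hd := density k hk
  have hac : μj k ≪ u.prod (m k) := hd ▸ withDensity_absolutelyContinuous _ _
  have hrn : (μj k).rnDeriv (u.prod (m k)) =ᵐ[u.prod (m k)] F k := by
    rw [hd]; exact Measure.rnDeriv_withDensity _ (measurable_F k)
  have hllr : llr (μj k) (u.prod (m k)) =ᵐ[μj k] L k := by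
    filter_upwards [hac.ae_le hrn] with q hq
    show log ((μj k).rnDeriv (u.prod (m k)) q).toReal = L k q
    rw [hq]; rfl
  have hIntL : Integrable (L k) (μj k) := by
    rw [μj, integrable_map_measure (measurable_L k).aestronglyMeasurable
      (measurable_phi k).aemeasurable]
    exact integrable_f k
  refine ⟨hac, (hIntL.congr hllr.symm), ?_⟩
  rw [integral_congr_ae hllr, μj,
    integral_map (measurable_phi k).aemeasurable (measurable_L k).aestronglyMeasurable]
  rw [show (fun q : ℝ × ℝ => L k (q.1, g k q.1 q.2)) = fun q : ℝ × ℝ => f k q.1 q.2 from rfl,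
    integral_prod _ (integrable_f k)]
  exact integral_congr_ae (Filter.Eventually.of_forall fun x => inner_int k x)

noncomputable def Phi (t : ℝ) : ℝ := (t / 2) * (t * log t) - t ^ 2 / 4

lemma continuous_Phi : Continuous Phi :=
  ((continuous_id.div_const 2).mul Real.continuous_mul_log).sub
    ((continuous_pow 2).div_const 4)

lemma hasDerivAt_Phi {t : ℝ} (ht : 0 < t) : HasDerivAt Phi (t * log t) t := by
  have hlog : HasDerivAt Real.log t⁻¹ t := Real.hasDerivAt_log (ne_of_gt ht)
  have hmul : HasDerivAt (fun s : ℝ => s * log s) (log t + 1) t := by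
    have h : HasDerivAt (fun s : ℝ => s * log s) (1 * log t + t * t⁻¹) t :=
      (hasDerivAt_id' (x := t)).mul hlog
    simpa [mul_inv_cancel₀ ht.ne', add_comm] using h
  have h1 : HasDerivAt (fun s : ℝ => (s / 2) * (s * log s))
      ((1 / 2) * (t * log t) + (t / 2) * (log t + 1)) t :=
    ((hasDerivAt_id t).div_const 2).mul hmul
  have h2 : HasDerivAt (fun s : ℝ => s ^ 2 / 4) (2 * t / 4) t := by
    simpa using (hasDerivAt_pow 2 t).div_const 4
  have h3 := h1.sub h2
  refine HasDerivAt.congr_deriv h3 ?_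
  ring

lemma Phi_zero : Phi 0 = 0 := by simp [Phi]

lemma Phi_two : Phi 2 = 2 * log 2 - 1 := by
  rw [Phi]; norm_num

lemma I2mid {k : ℝ} (hk0 : 0 < k) :
    ∫ x in (-(k / 2) : ℝ)..(k / 2),
      ((1 + 2 * x / k) * log (1 + 2 * x / k)
        + (1 - 2 * x / k) * log (1 - 2 * x / k)) / 2
      = k * log 2 - k / 2 := by
  have hkne : k ≠ 0 := hk0.ne'
  set G' : ℝ → ℝ := fun x => ((1 + 2 * x / k) * log (1 + 2 * x / k)
    + (1 - 2 * x / k) * log (1 - 2 * x / k)) / 2 with hG'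
  set H : ℝ → ℝ := fun x => (Phi (1 + 2 * x / k) - Phi (1 - 2 * x / k)) * (k / 4) with hH
  have hin1 : Continuous fun x : ℝ => 1 + 2 * x / k := by fun_prop
  have hin2 : Continuous fun x : ℝ => 1 - 2 * x / k := by fun_prop
  have hGc : Continuous G' :=
    ((Real.continuous_mul_log.comp hin1).add (Real.continuous_mul_log.comp hin2)).div_const 2
  have hHc : Continuous H :=
    (((continuous_Phi.comp hin1).sub (continuous_Phi.comp hin2)).mul continuous_const)
  have hderiv : ∀ x ∈ Set.Ioo (-(k / 2) : ℝ) (k / 2), HasDerivAt H (G' x) x := by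
    intro x hx
    have ht1 : 0 < 1 + 2 * x / k := by
      have : (-1 : ℝ) < 2 * x / k := by
        rw [lt_div_iff₀ hk0]; nlinarith [hx.1]
      linarith
    have ht2 : 0 < 1 - 2 * x / k := by
      have : 2 * x / k < 1 := by
        rw [div_lt_iff₀ hk0]; nlinarith [hx.2]
      linarith
    have hi1 : HasDerivAt (fun x : ℝ => 1 + 2 * x / k) (2 / k) x := by
      have h := ((hasDerivAt_id x).const_mul 2).div_const k
      simpa using h.const_add 1
    have hi2 : HasDerivAt (fun x : ℝ => 1 - 2 * x / k) (-(2 / k)) x := by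
      have h := ((hasDerivAt_id x).const_mul 2).div_const k
      simpa using h.const_sub 1
    have hc1 := (hasDerivAt_Phi ht1).comp x hi1
    have hc2 := (hasDerivAt_Phi ht2).comp x hi2
    have hfin := (hc1.sub hc2).mul_const (k / 4)
    refine HasDerivAt.congr_deriv hfin (Eq.symm ?_)
    show G' x = _
    rw [hG']
    field_simp
    ring
  have hle : (-(k / 2) : ℝ) ≤ k / 2 := by linarith
  have hFTC := intervalIntegral.integral_eq_sub_of_hasDeriv_right_of_le hle
    hHc.continuousOn (fun x hx => (hderiv x hx).hasDerivWithinAt)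
    (hGc.intervalIntegrable _ _)
  rw [hFTC]
  have e1 : 1 + 2 * (k / 2) / k = 2 := by field_simp <;> norm_num
  have e2 : 1 - 2 * (k / 2) / k = 0 := by field_simp <;> norm_num
  have e3 : 1 + 2 * (-(k / 2)) / k = 0 := by field_simp <;> norm_num
  have e4 : 1 - 2 * (-(k / 2)) / k = 2 := by field_simp <;> norm_num
  show (Phi (1 + 2 * (k / 2) / k) - Phi (1 - 2 * (k / 2) / k)) * (k / 4)
    - (Phi (1 + 2 * (-(k / 2)) / k) - Phi (1 - 2 * (-(k / 2)) / k)) * (k / 4) = _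
  rw [e1, e2, e3, e4, Phi_zero, Phi_two]
  ring

lemma I2 (k : ℝ) (hk : k ∈ Set.Icc (0 : ℝ) 1) :
    ∫ x, (pr k x * log (2 * pr k x) + (1 - pr k x) * log (2 * (1 - pr k x))) ∂u
      = Real.log 2 - k / 2 := by
  rcases eq_or_lt_of_le hk.1 with h0 | h0
  · have hG : ∀ x, pr k x * log (2 * pr k x) + (1 - pr k x) * log (2 * (1 - pr k x))
        = log 2 := by
      intro x
      have hpr : pr k x = if 0 ≤ x then 1 else 0 := by
        show (pE k x).toReal = _
        rw [← h0, pE_zero]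
        by_cases h : 0 ≤ x <;> simp [h]
      rw [hpr]
      by_cases h : 0 ≤ x
      · rw [if_pos h]; norm_num
      · rw [if_neg h]; norm_num
    rw [integral_congr_ae (Filter.Eventually.of_forall hG), integral_const, probReal_univ]
    rw [← h0]
    norm_num
  · have hkne : k ≠ 0 := h0.ne'
    have hform : ∀ x, pr k x * log (2 * pr k x) + (1 - pr k x) * log (2 * (1 - pr k x))
        = ((2 * cl k x) * log (2 * cl k x)
            + (2 * (1 - cl k x)) * log (2 * (1 - cl k x))) / 2 := by
      intro x
      rw [pr_eq_cl h0]
      ring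
    rw [integral_congr_ae (Filter.Eventually.of_forall hform), integral_u_eq]
    set GG : ℝ → ℝ := fun x => ((2 * cl k x) * log (2 * cl k x)
      + (2 * (1 - cl k x)) * log (2 * (1 - cl k x))) / 2 with hGG
    have hGGc : Continuous GG := by
      apply Continuous.div_const
      exact (Real.continuous_mul_log.comp
          (continuous_const.mul (continuous_cl k))).add
        (Real.continuous_mul_log.comp
          (continuous_const.mul (continuous_const.sub (continuous_cl k))))
    have hii : ∀ a b : ℝ, IntervalIntegrable GG volume a b :=
      fun a b => hGGc.intervalIntegrable a b
    rw [← intervalIntegral.integral_add_adjacent_intervals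
        (hii (-(1/2)) (-(k/2))) (hii (-(k/2)) (1/2)),
      ← intervalIntegral.integral_add_adjacent_intervals
        (hii (-(k/2)) (k/2)) (hii (k/2) (1/2))]
    have hk1 := hk.2
    have heq1 : Set.EqOn GG (fun _ => log 2) (Set.uIcc (-(1/2) : ℝ) (-(k/2))) := by
      intro x hx
      rw [Set.uIcc_of_le (by linarith)] at hx
      show ((2 * cl k x) * log (2 * cl k x)
        + (2 * (1 - cl k x)) * log (2 * (1 - cl k x))) / 2 = log 2
      rw [cl_left h0 hx.2]
      norm_num
    have e1 : ∫ x in (-(1/2 : ℝ))..(-(k/2)), GG x = (1/2 - k/2) * log 2 := by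
      rw [intervalIntegral.integral_congr heq1, intervalIntegral.integral_const, smul_eq_mul]
      ring
    have heq3 : Set.EqOn GG (fun _ => log 2) (Set.uIcc (k/2 : ℝ) (1/2)) := by
      intro x hx
      rw [Set.uIcc_of_le (by linarith)] at hx
      show ((2 * cl k x) * log (2 * cl k x)
        + (2 * (1 - cl k x)) * log (2 * (1 - cl k x))) / 2 = log 2
      rw [cl_right h0 hx.1]
      norm_num
    have e3 : ∫ x in (k/2 : ℝ)..(1/2), GG x = (1/2 - k/2) * log 2 := by
      rw [intervalIntegral.integral_congr heq3, intervalIntegral.integral_const, smul_eq_mul]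
    have heq2 : Set.EqOn GG (fun x => ((1 + 2 * x / k) * log (1 + 2 * x / k)
        + (1 - 2 * x / k) * log (1 - 2 * x / k)) / 2) (Set.uIcc (-(k/2) : ℝ) (k/2)) := by
      intro x hx
      rw [Set.uIcc_of_le (by linarith)] at hx
      have h2cl : 2 * cl k x = 1 + 2 * x / k := by
        rw [cl_mid h0 hx.1 hx.2]; field_simp
      have h2cl' : 2 * (1 - cl k x) = 1 - 2 * x / k := by
        rw [cl_mid h0 hx.1 hx.2]; field_simp; ring
      show ((2 * cl k x) * log (2 * cl k x)
        + (2 * (1 - cl k x)) * log (2 * (1 - cl k x))) / 2 = _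
      rw [h2cl, h2cl']
    have e2 : ∫ x in (-(k/2 : ℝ))..(k/2), GG x = k * log 2 - k / 2 := by
      rw [intervalIntegral.integral_congr heq2]
      exact I2mid h0
    rw [e1, e2, e3]
    ring

end Stmt11

theorem stmt_11 {Ω : Type*} [MeasurableSpace Ω] (P : Measure Ω) [IsProbabilityMeasure P]
    (k : ℝ) (hk : k ∈ Set.Icc (0 : ℝ) 1)
    (X Y : Ω → ℝ) (hX : Measurable X) (hY : Measurable Y)
    (hindep : IndepFun X Y P)
    (hXlaw : P.map X = uniformIcc (1 / 2)) (hYlaw : P.map Y = uniformIcc (1 / 2))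
    (C : Ω → ℕ) (hC : C = fun ω => if 0 ≤ X ω + k * Y ω then 1 else 0) :
    klDiv (P.map (fun ω => (X ω, C ω))) ((P.map X).prod (P.map C))
      = ((Real.log 2 - k / 2 : ℝ) : EReal) := by
  have hCg : C = (fun q : ℝ × ℝ => Stmt11.g k q.1 q.2) ∘ (fun ω => (X ω, Y ω)) := by
    funext ω
    rw [hC]
    by_cases h : 0 ≤ X ω + k * Y ω <;> simp [Stmt11.g, h]
  have hXY : P.map (fun ω => (X ω, Y ω)) = Stmt11.u.prod Stmt11.u := by
    rw [(indepFun_iff_map_prod_eq_prod_map_map hX.aemeasurable hY.aemeasurable).mp hindep,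
      hXlaw, hYlaw, Stmt11.uniformIcc_half]
  have hmapC : P.map C = Stmt11.m k := by
    rw [hCg, ← Measure.map_map (Stmt11.measurable_g k) (hX.prodMk hY), hXY]
    rfl
  have hmapJ : P.map (fun ω => (X ω, C ω)) = Stmt11.μj k := by
    have h2 : (fun ω => (X ω, C ω))
        = (fun q : ℝ × ℝ => (q.1, Stmt11.g k q.1 q.2)) ∘ (fun ω => (X ω, Y ω)) := by
      funext ω
      rw [hCg]
      rfl
    rw [h2, ← Measure.map_map (Stmt11.measurable_phi k) (hX.prodMk hY), hXY]
    rfl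
  rw [hmapJ, hmapC, hXlaw, Stmt11.uniformIcc_half]
  obtain ⟨hac, hint, hval⟩ := Stmt11.klDiv_reduce k hk
  rw [klDiv, if_pos ⟨hac, hint⟩, hval, Stmt11.I2 k hk]
end

section
/- Let X, Y be independent random variables, each uniformly distributed on [−1/2, 1/2], let k ∈ (0,1), and define C_k = 1 if X + kY ≥ 0 and C_k = 0 otherwise. Then MI(C_k, Y) = [ (k² + 1)·log((1 + k)/(1 − k)) + 2k·(log(1 − k²) − 1) ] / (4k). -/
open MeasureTheory ProbabilityTheory Real
open scoped Classical

open scoped ENNReal NNReal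

lemma key_integral (c : ℝ) (hc : c ≠ 0) (h1 : |c| < 1) :
    ∫ y in (-(1/2) : ℝ)..(1/2), (1 + 2*c*y) * Real.log (1 + 2*c*y)
      = (1+c)^2/(8*c) * (2*Real.log (1+c) - 1) - (1-c)^2/(8*c) * (2*Real.log (1-c) - 1) := by
  have hle : (-(1/2) : ℝ) ≤ 1/2 := by norm_num
  have hpos : ∀ y ∈ Set.uIcc (-(1/2) : ℝ) (1/2), 0 < 1 + 2*c*y := by
    intro y hy
    rw [Set.uIcc_of_le hle] at hy
    have hy2 : |y| ≤ 1/2 := abs_le.2 ⟨hy.1, hy.2⟩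
    have : |2*c*y| < 1 := by
      have : |2*c*y| = 2 * |c| * |y| := by rw [abs_mul, abs_mul]; norm_num
      rw [this]
      calc 2 * |c| * |y| ≤ 2 * |c| * (1/2) := by
            apply mul_le_mul_of_nonneg_left hy2 (by positivity)
        _ = |c| := by ring
        _ < 1 := h1
    nlinarith [abs_lt.1 this]
  have hderiv : ∀ y ∈ Set.uIcc (-(1/2) : ℝ) (1/2),
      HasDerivAt (fun y => (1+2*c*y)^2/(8*c) * (2*Real.log (1+2*c*y) - 1))
        ((1 + 2*c*y) * Real.log (1 + 2*c*y)) y := by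
    intro y hy
    have hp := hpos y hy
    have h1' : HasDerivAt (fun y : ℝ => 1 + 2*c*y) (2*c) y := by
      simpa using ((hasDerivAt_id y).const_mul (2*c)).const_add 1
    have hsq : HasDerivAt (fun y : ℝ => (1+2*c*y)^2/(8*c)) (2*(1+2*c*y)*(2*c)/(8*c)) y := by
      simpa [div_eq_mul_inv, mul_comm] using ((h1'.pow 2).div_const (8*c))
    have hlog : HasDerivAt (fun y : ℝ => 2*Real.log (1+2*c*y) - 1)
        (2 * ((2*c)/(1+2*c*y))) y := by
      simpa using ((h1'.log hp.ne').const_mul 2).sub_const 1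
    have := hsq.mul hlog
    refine HasDerivAt.congr_deriv this ?_
    field_simp
    ring
  have hcont : IntervalIntegrable (fun y => (1 + 2*c*y) * Real.log (1 + 2*c*y))
      volume (-(1/2) : ℝ) (1/2) := by
    apply ContinuousOn.intervalIntegrable
    apply ContinuousOn.mul (by fun_prop)
    exact ContinuousOn.log (by fun_prop) (fun y hy => (hpos y hy).ne')
  have := intervalIntegral.integral_eq_sub_of_hasDerivAt hderiv hcont
  rw [this]
  norm_num
  ring_nf

noncomputable def auxU : Measure ℝ := volume.restrict (Set.Icc (-(1/2)) (1/2))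

instance : IsProbabilityMeasure auxU := by
  constructor
  rw [auxU, Measure.restrict_apply_univ, Real.volume_Icc]
  norm_num

lemma auxU_ae_Icc : ∀ᵐ y ∂auxU, y ∈ Set.Icc (-(1/2):ℝ) (1/2) :=
  ae_restrict_mem measurableSet_Icc

lemma ofReal_half : ENNReal.ofReal (1/2) = 1/2 := by
  rw [ENNReal.ofReal_div_of_pos two_pos]
  norm_num

lemma lint_aux (c : ℝ) (hc : |c| ≤ 1) : ∫⁻ y, ENNReal.ofReal (1 + 2*c*y) ∂auxU = 1 := by
  have hcont : Continuous (fun y : ℝ => 1 + 2*c*y) := by fun_prop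
  have hint : Integrable (fun y : ℝ => 1 + 2*c*y) auxU := hcont.integrableOn_Icc
  rw [← ofReal_integral_eq_lintegral_ofReal hint ?_]
  · have : ∫ y, (1 + 2*c*y) ∂auxU = ∫ y in (-(1/2) : ℝ)..(1/2), (1 + 2*c*y) := by
      rw [intervalIntegral.integral_of_le (by norm_num), auxU,
        ← MeasureTheory.integral_Icc_eq_integral_Ioc]
    rw [this, intervalIntegral.integral_add intervalIntegrable_const
      (intervalIntegral.intervalIntegrable_id.const_mul (2*c)),
      intervalIntegral.integral_const_mul, integral_id]
    norm_num
  · filter_upwards [auxU_ae_Icc] with y hy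
    have h1 : |y| ≤ 1/2 := abs_le.2 ⟨hy.1, hy.2⟩
    have h2 : |2*c*y| ≤ 1 := by
      rw [abs_mul, abs_mul]
      calc |2| * |c| * |y| ≤ 2 * 1 * (1/2) := by
            apply mul_le_mul _ h1 (abs_nonneg y) (by positivity)
            rw [abs_two]
            exact mul_le_mul_of_nonneg_left hc (by norm_num)
        _ = 1 := by norm_num
    have := (abs_le.1 h2).1
    simp only [Pi.zero_apply]
    linarith

lemma auxU_halfline {c : ℝ} (hc : c ∈ Set.Icc (-(1/2):ℝ) (1/2)) :
    auxU {x | 0 ≤ x + c} = ENNReal.ofReal (1/2 + c) := by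
  have h : {x : ℝ | 0 ≤ x + c} = Set.Ici (-c) := by
    ext x; simp [neg_le_iff_add_nonneg]
  rw [auxU, Measure.restrict_apply (by rw [h]; exact measurableSet_Ici)]
  rw [h]
  have : Set.Ici (-c) ∩ Set.Icc (-(1/2):ℝ) (1/2) = Set.Icc (-c) (1/2) := by
    ext x
    simp only [Set.mem_inter_iff, Set.mem_Ici, Set.mem_Icc]
    constructor
    · rintro ⟨h1, _, h3⟩; exact ⟨h1, h3⟩
    · rintro ⟨h1, h2⟩
      exact ⟨h1, le_trans (by linarith [hc.2]) h1, h2⟩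
  rw [this, Real.volume_Icc]
  ring_nf

lemma auxU_halfline_lt {c : ℝ} (hc : c ∈ Set.Icc (-(1/2):ℝ) (1/2)) :
    auxU {x | ¬ 0 ≤ x + c} = ENNReal.ofReal (1/2 - c) := by
  have hs : {x : ℝ | ¬ 0 ≤ x + c} = Set.Iio (-c) := by
    ext x; simp only [Set.mem_setOf_eq, Set.mem_Iio, not_le]; constructor <;> intro h <;> linarith
  rw [auxU, Measure.restrict_apply (by rw [hs]; exact measurableSet_Iio), hs]
  have : Set.Iio (-c) ∩ Set.Icc (-(1/2):ℝ) (1/2) = Set.Ico (-(1/2)) (-c) := by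
    ext x
    simp only [Set.mem_inter_iff, Set.mem_Iio, Set.mem_Icc, Set.mem_Ico]
    constructor
    · rintro ⟨h1, h2, _⟩; exact ⟨h2, h1⟩
    · rintro ⟨h1, h2⟩
      exact ⟨h2, h1, le_trans h2.le (by linarith [hc.1])⟩
  rw [this, Real.volume_Ico]
  ring_nf

noncomputable def auxg (k : ℝ) : ℝ × ℝ → ℕ × ℝ :=
  fun p => (if 0 ≤ p.1 + k * p.2 then 1 else 0, p.2)

lemma auxg_meas (k : ℝ) : Measurable (auxg k) := by
  apply Measurable.prodMk _ measurable_snd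
  apply Measurable.ite _ measurable_const measurable_const
  exact measurableSet_le measurable_const (measurable_fst.add (measurable_snd.const_mul k))

lemma ofReal_half_mul (a : ℝ) : ENNReal.ofReal (1/2 + a/2) = (1/2) * ENNReal.ofReal (1 + a) := by
  rw [← ofReal_half, ← ENNReal.ofReal_mul (by norm_num)]
  ring_nf

lemma map_g_rect {k : ℝ} (hk : k ∈ Set.Ioo (0:ℝ) 1) {s : Set ℕ} {t : Set ℝ}
    (ht : MeasurableSet t) :
    ((auxU.prod auxU).map (auxg k)) (s ×ˢ t)
      = (if 0 ∈ s then (1/2 : ℝ≥0∞) * ∫⁻ y in t, ENNReal.ofReal (1 - 2*k*y) ∂auxU else 0)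
        + (if 1 ∈ s then (1/2 : ℝ≥0∞) * ∫⁻ y in t, ENNReal.ofReal (1 + 2*k*y) ∂auxU else 0) := by
  have hs : MeasurableSet s := .of_discrete
  rw [Measure.map_apply (auxg_meas k) (hs.prod ht)]
  have hmem : ∀ᵐ y ∂(auxU.restrict t), y ∈ Set.Icc (-(1/2):ℝ) (1/2) :=
    ae_mono Measure.restrict_le_self auxU_ae_Icc
  have hky : ∀ y ∈ Set.Icc (-(1/2):ℝ) (1/2), k * y ∈ Set.Icc (-(1/2):ℝ) (1/2) := by
    intro y hy
    constructor <;> nlinarith [hk.1, hk.2, hy.1, hy.2]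
  by_cases h0 : 0 ∈ s <;> by_cases h1 : 1 ∈ s <;>
    simp only [h0, h1, if_true, if_false]
  · -- both
    have hpre : auxg k ⁻¹' (s ×ˢ t) = Set.univ ×ˢ t := by
      ext p
      simp only [auxg, Set.mem_preimage, Set.mem_prod, Set.mem_univ, true_and]
      constructor
      · exact fun h => h.2
      · intro h; refine ⟨?_, h⟩; split_ifs <;> assumption
    rw [hpre, Measure.prod_prod, measure_univ, one_mul]
    rw [← mul_add, ← lintegral_add_left (μ := auxU.restrict t)
      (by fun_prop : Measurable (fun y : ℝ => ENNReal.ofReal (1 - 2*k*y)))]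
    have : ∫⁻ y in t, (ENNReal.ofReal (1 - 2*k*y) + ENNReal.ofReal (1 + 2*k*y)) ∂auxU
        = ∫⁻ _ in t, 2 ∂auxU := by
      apply lintegral_congr_ae
      filter_upwards [hmem] with y hy
      have h2 := hky y hy
      rw [← ENNReal.ofReal_add (by simp at h2 ⊢; linarith [h2.1, h2.2]) (by simp at h2 ⊢; linarith [h2.1, h2.2])]
      norm_num
    rw [this, lintegral_const, ← mul_assoc]
    rw [Measure.restrict_apply_univ]
    rw [show ((1:ℝ≥0∞)/2) = 2⁻¹ by norm_num, ENNReal.inv_mul_cancel (by norm_num) (by norm_num),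
      one_mul]
  · -- 0 ∈ s only
    have hpre : auxg k ⁻¹' (s ×ˢ t) = {p : ℝ × ℝ | ¬ 0 ≤ p.1 + k * p.2 ∧ p.2 ∈ t} := by
      ext p
      simp only [auxg, Set.mem_preimage, Set.mem_prod, Set.mem_setOf_eq]
      split_ifs with h
      · simp [h1, h]
      · simp [h0, h]
    rw [hpre, add_zero]
    have hS : MeasurableSet {p : ℝ × ℝ | ¬ 0 ≤ p.1 + k * p.2 ∧ p.2 ∈ t} := by
      apply MeasurableSet.inter
      · exact (measurableSet_le measurable_const
          (measurable_fst.add (measurable_snd.const_mul k))).compl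
      · exact measurable_snd ht
    rw [Measure.prod_apply_symm hS]
    have hcongr : ∀ y : ℝ, auxU ((fun x => (x, y)) ⁻¹' {p : ℝ × ℝ | ¬ 0 ≤ p.1 + k * p.2 ∧ p.2 ∈ t})
        = t.indicator (fun y => auxU {x | ¬ 0 ≤ x + k * y}) y := by
      intro y
      by_cases hyt : y ∈ t
      · simp only [Set.indicator_of_mem hyt]
        congr 1
        ext x
        simp [hyt]
      · simp only [Set.indicator_of_notMem hyt]
        rw [show ((fun x => (x, y)) ⁻¹' {p : ℝ × ℝ | ¬ 0 ≤ p.1 + k * p.2 ∧ p.2 ∈ t}) = (∅ : Set ℝ)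
          by ext x; simp [hyt]]
        exact measure_empty
    rw [lintegral_congr hcongr, lintegral_indicator ht]
    rw [← lintegral_const_mul _
      (by fun_prop : Measurable (fun y : ℝ => ENNReal.ofReal (1 - 2*k*y)))]
    apply lintegral_congr_ae
    filter_upwards [hmem] with y hy
    rw [auxU_halfline_lt (hky y hy)]
    have : (1:ℝ)/2 - k*y = 1/2 + (-(2*k*y))/2 := by ring
    rw [this, ofReal_half_mul]
    ring_nf
  · -- 1 ∈ s only
    have hpre : auxg k ⁻¹' (s ×ˢ t) = {p : ℝ × ℝ | 0 ≤ p.1 + k * p.2 ∧ p.2 ∈ t} := by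
      ext p
      simp only [auxg, Set.mem_preimage, Set.mem_prod, Set.mem_setOf_eq]
      split_ifs with h
      · simp [h1, h]
      · simp [h0, h]
    rw [hpre, zero_add]
    have hS : MeasurableSet {p : ℝ × ℝ | 0 ≤ p.1 + k * p.2 ∧ p.2 ∈ t} := by
      apply MeasurableSet.inter
      · exact measurableSet_le measurable_const
          (measurable_fst.add (measurable_snd.const_mul k))
      · exact measurable_snd ht
    rw [Measure.prod_apply_symm hS]
    have hcongr : ∀ y : ℝ, auxU ((fun x => (x, y)) ⁻¹' {p : ℝ × ℝ | 0 ≤ p.1 + k * p.2 ∧ p.2 ∈ t})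
        = t.indicator (fun y => auxU {x | 0 ≤ x + k * y}) y := by
      intro y
      by_cases hyt : y ∈ t
      · simp only [Set.indicator_of_mem hyt]
        congr 1
        ext x
        simp [hyt]
      · simp only [Set.indicator_of_notMem hyt]
        rw [show ((fun x => (x, y)) ⁻¹' {p : ℝ × ℝ | 0 ≤ p.1 + k * p.2 ∧ p.2 ∈ t}) = (∅ : Set ℝ)
          by ext x; simp [hyt]]
        exact measure_empty
    rw [lintegral_congr hcongr, lintegral_indicator ht]
    rw [← lintegral_const_mul _
      (by fun_prop : Measurable (fun y : ℝ => ENNReal.ofReal (1 + 2*k*y)))]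
    apply lintegral_congr_ae
    filter_upwards [hmem] with y hy
    rw [auxU_halfline (hky y hy)]
    have : (1:ℝ)/2 + k*y = 1/2 + (2*k*y)/2 := by ring
    rw [this, ofReal_half_mul]
  · -- neither
    have hpre : auxg k ⁻¹' (s ×ˢ t) = ∅ := by
      ext p
      simp only [auxg, Set.mem_preimage, Set.mem_prod, Set.mem_empty_iff_false, iff_false]
      intro h
      rcases h with ⟨hmem', _⟩
      revert hmem'
      split_ifs <;> simp [h0, h1]
    rw [hpre]
    simp

noncomputable def auxr (k : ℝ) (p : ℕ × ℝ) : ℝ :=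
  if p.1 = 1 then 1 + 2*k*p.2 else 1 - 2*k*p.2

noncomputable def auxf (k : ℝ) (p : ℕ × ℝ) : ℝ≥0∞ := ENNReal.ofReal (auxr k p)

lemma auxr_meas (k : ℝ) : Measurable (auxr k) := by
  have h : MeasurableSet {p : ℕ × ℝ | p.1 = 1} := measurable_fst (measurableSet_singleton 1)
  exact Measurable.ite h (measurable_const.add (measurable_snd.const_mul (2*k)))
    (measurable_const.sub (measurable_snd.const_mul (2*k)))

lemma auxf_meas (k : ℝ) : Measurable (auxf k) := (auxr_meas k).ennreal_ofReal

noncomputable def auxρ : Measure ℕ := (1/2 : ℝ≥0∞) • (Measure.dirac 0 + Measure.dirac 1)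

instance : IsProbabilityMeasure auxρ := by
  constructor
  rw [auxρ, Measure.smul_apply, Measure.add_apply]
  simp only [measure_univ]
  rw [show (1:ℝ≥0∞)/2 = 2⁻¹ by norm_num, show (1:ℝ≥0∞)+1 = 2 by norm_num,
    smul_eq_mul, ENNReal.inv_mul_cancel] <;> norm_num

lemma wd_rect (k : ℝ) {s : Set ℕ} {t : Set ℝ} (ht : MeasurableSet t) :
    ((auxρ.prod auxU).withDensity (auxf k)) (s ×ˢ t)
      = (if 0 ∈ s then (1/2 : ℝ≥0∞) * ∫⁻ y in t, ENNReal.ofReal (1 - 2*k*y) ∂auxU else 0)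
        + (if 1 ∈ s then (1/2 : ℝ≥0∞) * ∫⁻ y in t, ENNReal.ofReal (1 + 2*k*y) ∂auxU else 0) := by
  have hs : MeasurableSet s := .of_discrete
  rw [withDensity_apply _ (hs.prod ht), ← Measure.prod_restrict,
    lintegral_prod _ (auxf_meas k).aemeasurable]
  rw [auxρ, Measure.restrict_smul, Measure.restrict_add, lintegral_smul_measure,
    lintegral_add_measure, restrict_dirac, restrict_dirac]
  have h0v : ∀ y, auxf k (0, y) = ENNReal.ofReal (1 - 2*k*y) := by
    intro y; simp [auxf, auxr]
  have h1v : ∀ y, auxf k (1, y) = ENNReal.ofReal (1 + 2*k*y) := by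
    intro y; simp [auxf, auxr]
  by_cases h0 : 0 ∈ s <;> by_cases h1 : 1 ∈ s <;>
    simp only [h0, h1, if_true, if_false, lintegral_zero_measure, lintegral_dirac,
      add_zero, zero_add, mul_add, mul_zero] <;>
    simp only [h0v, h1v, smul_eq_mul] <;> ring

lemma map_g_eq {k : ℝ} (hk : k ∈ Set.Ioo (0:ℝ) 1) :
    (auxU.prod auxU).map (auxg k) = (auxρ.prod auxU).withDensity (auxf k) := by
  haveI : IsProbabilityMeasure ((auxU.prod auxU).map (auxg k)) :=
    Measure.isProbabilityMeasure_map (auxg_meas k).aemeasurable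
  refine ext_of_generate_finite _ generateFrom_prod.symm isPiSystem_prod ?_ ?_
  · rintro _ ⟨s, hs, t, ht, rfl⟩
    rw [map_g_rect hk ht, wd_rect k ht]
  · rw [← Set.univ_prod_univ, map_g_rect hk MeasurableSet.univ, wd_rect k MeasurableSet.univ]

lemma map_g_fst {k : ℝ} (hk : k ∈ Set.Ioo (0:ℝ) 1) :
    ((auxU.prod auxU).map (auxg k)).map Prod.fst = auxρ := by
  apply Measure.ext
  intro s hs
  rw [Measure.map_apply measurable_fst hs]
  have : Prod.fst ⁻¹' s = s ×ˢ (Set.univ : Set ℝ) := by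
    ext p; simp
  rw [this, map_g_rect hk MeasurableSet.univ, Measure.restrict_univ]
  have hm : ∫⁻ y, ENNReal.ofReal (1 - 2*k*y) ∂auxU = 1 := by
    have : ∀ y : ℝ, ENNReal.ofReal (1 - 2*k*y) = ENNReal.ofReal (1 + 2*(-k)*y) := by
      intro y; ring_nf
    simp_rw [this]
    exact lint_aux (-k) (by rw [abs_neg, abs_of_pos hk.1]; exact hk.2.le)
  have hp : ∫⁻ y, ENNReal.ofReal (1 + 2*k*y) ∂auxU = 1 :=
    lint_aux k (by rw [abs_of_pos hk.1]; exact hk.2.le)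
  rw [hm, hp, auxρ, Measure.smul_apply, Measure.add_apply,
    Measure.dirac_apply' _ hs, Measure.dirac_apply' _ hs]
  by_cases h0 : 0 ∈ s <;> by_cases h1 : 1 ∈ s <;>
    simp [h0, h1, Set.indicator] <;> ring_nf <;> simp [ENNReal.div_add_div_same]

lemma prod_ae_Icc : ∀ᵐ p ∂(auxρ.prod auxU), p.2 ∈ Set.Icc (-(1/2):ℝ) (1/2) := by
  rw [ae_iff]
  have h1 : {p : ℕ × ℝ | ¬ p.2 ∈ Set.Icc (-(1/2):ℝ) (1/2)}
      = (Set.univ : Set ℕ) ×ˢ (Set.Icc (-(1/2):ℝ) (1/2))ᶜ := by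
    ext p; simp
  rw [h1, Measure.prod_prod]
  have : auxU (Set.Icc (-(1/2):ℝ) (1/2))ᶜ = 0 := by
    rw [auxU, Measure.restrict_apply measurableSet_Icc.compl]
    simp
  rw [this, mul_zero]

lemma integral_auxρ (F : ℕ → ℝ) : ∫ c, F c ∂auxρ = (F 0 + F 1) / 2 := by
  have hd : ∀ a : ℕ, Integrable F (Measure.dirac a) := by
    intro a
    refine (integrable_const (F a)).congr ?_
    rw [Filter.eventuallyEq_iff_exists_mem]
    exact ⟨{a}, by rw [mem_ae_iff]; simp, fun x hx => by simp at hx; simp [hx]⟩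
  rw [auxρ, integral_smul_measure, integral_add_measure (hd 0) (hd 1),
    integral_dirac, integral_dirac]
  rw [show (1:ℝ≥0∞)/2 = 2⁻¹ by norm_num]
  simp [ENNReal.toReal_inv]
  ring

lemma integral_auxU_mullog (c : ℝ) (hc : c ≠ 0) (h1 : |c| < 1) :
    ∫ y, (1 + 2*c*y) * Real.log (1 + 2*c*y) ∂auxU
      = (1+c)^2/(8*c) * (2*Real.log (1+c) - 1) - (1-c)^2/(8*c) * (2*Real.log (1-c) - 1) := by
  rw [← key_integral c hc h1, intervalIntegral.integral_of_le (by norm_num), auxU,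
    ← MeasureTheory.integral_Icc_eq_integral_Ioc]

lemma auxr_bounds {k : ℝ} (hk : k ∈ Set.Ioo (0:ℝ) 1) {p : ℕ × ℝ}
    (hp : p.2 ∈ Set.Icc (-(1/2):ℝ) (1/2)) : 1 - k ≤ auxr k p ∧ auxr k p ≤ 1 + k := by
  have h1 := hp.1; have h2 := hp.2; have h3 := hk.1; have h4 := hk.2
  unfold auxr
  split_ifs <;> constructor <;> nlinarith

lemma final_integral {k : ℝ} (hk : k ∈ Set.Ioo (0:ℝ) 1) :
    ∫ p, Real.log (auxr k p) ∂((auxρ.prod auxU).withDensity (auxf k))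
      = ((k^2 + 1) * Real.log ((1 + k) / (1 - k))
          + 2 * k * (Real.log (1 - k^2) - 1)) / (4 * k) := by
  have h1k : (0:ℝ) < 1 - k := by linarith [hk.2]
  have h2k : (0:ℝ) < 1 + k := by linarith [hk.1]
  have hf0 : Measurable fun p : ℕ × ℝ => Real.toNNReal (auxr k p) := (auxr_meas k).real_toNNReal
  have hfd : auxf k = fun p => ((Real.toNNReal (auxr k p) : ℝ≥0) : ℝ≥0∞) := rfl
  rw [hfd, integral_withDensity_eq_integral_smul hf0]
  set H : ℕ × ℝ → ℝ := fun p => auxr k p * Real.log (auxr k p) with hH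
  have hcong : (fun p => (Real.toNNReal (auxr k p)) • Real.log (auxr k p)) =ᵐ[auxρ.prod auxU] H := by
    filter_upwards [prod_ae_Icc] with p hp
    have hb := (auxr_bounds hk hp).1
    rw [NNReal.smul_def, Real.coe_toNNReal _ (by linarith), smul_eq_mul]
  rw [integral_congr_ae hcong]
  set L : ℝ := Real.log (1+k) - Real.log (1-k) with hL
  have hlogb : ∀ x : ℝ, 1 - k ≤ x → x ≤ 1 + k → |Real.log x| ≤ L := by
    intro x ha hb
    have hxpos : 0 < x := by linarith
    rw [abs_le]
    constructor
    · have := Real.log_le_log h1k ha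
      have := Real.log_nonneg (by linarith : (1:ℝ) ≤ 1 + k)
      rw [hL]; linarith
    · have := Real.log_le_log hxpos hb
      have := Real.log_nonpos (by linarith) (by linarith : 1 - k ≤ 1)
      rw [hL]; linarith
  have hHmeas : Measurable H := (auxr_meas k).mul (auxr_meas k).log
  have hint : Integrable H (auxρ.prod auxU) := by
    refine Integrable.mono' (integrable_const ((1+k) * L)) hHmeas.aestronglyMeasurable ?_
    filter_upwards [prod_ae_Icc] with p hp
    obtain ⟨ha, hb⟩ := auxr_bounds hk hp
    have hpos : 0 ≤ auxr k p := by linarith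
    have hlb := hlogb _ ha hb
    have hLnn : 0 ≤ L := le_trans (abs_nonneg _) (hlogb _ le_rfl (by linarith))
    rw [hH, Real.norm_eq_abs, abs_mul, abs_of_nonneg hpos]
    exact mul_le_mul hb hlb (abs_nonneg _) (by linarith)
  rw [integral_prod _ hint, integral_auxρ (fun c => ∫ y, H (c, y) ∂auxU)]
  have hF0 : ∫ y, H (0, y) ∂auxU
      = ∫ y, (1 + 2*(-k)*y) * Real.log (1 + 2*(-k)*y) ∂auxU := by
    apply integral_congr_ae
    filter_upwards with y
    have : auxr k (0, y) = 1 + 2*(-k)*y := by simp [auxr]; ring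
    rw [hH]; simp only [this]
  have hF1 : ∫ y, H (1, y) ∂auxU
      = ∫ y, (1 + 2*k*y) * Real.log (1 + 2*k*y) ∂auxU := by
    apply integral_congr_ae
    filter_upwards with y
    have : auxr k (1, y) = 1 + 2*k*y := by simp [auxr]
    rw [hH]; simp only [this]
  rw [hF0, hF1, integral_auxU_mullog k hk.1.ne' (by rw [abs_of_pos hk.1]; exact hk.2),
    integral_auxU_mullog (-k) (neg_ne_zero.2 hk.1.ne') (by rw [abs_neg, abs_of_pos hk.1]; exact hk.2)]
  rw [show (1:ℝ) + -k = 1 - k by ring, show (1:ℝ) - -k = 1 + k by ring]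
  rw [Real.log_div h2k.ne' h1k.ne', show (1:ℝ) - k^2 = (1+k)*(1-k) by ring,
    Real.log_mul h2k.ne' h1k.ne']
  have hk0 := hk.1
  field_simp
  ring

lemma abs_log_le {k x : ℝ} (hk : k ∈ Set.Ioo (0:ℝ) 1) (ha : 1 - k ≤ x) (hb : x ≤ 1 + k) :
    |Real.log x| ≤ Real.log (1+k) - Real.log (1-k) := by
  have h1k : (0:ℝ) < 1 - k := by linarith [hk.2]
  have hxpos : 0 < x := by linarith
  rw [abs_le]
  constructor
  · have := Real.log_le_log h1k ha
    have := Real.log_nonneg (by linarith [hk.1] : (1:ℝ) ≤ 1 + k)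
    linarith
  · have := Real.log_le_log hxpos hb
    have := Real.log_nonpos (by linarith) (by linarith [hk.1] : 1 - k ≤ 1)
    linarith

theorem stmt_12 {Ω : Type*} [MeasurableSpace Ω] (P : Measure Ω) [IsProbabilityMeasure P]
    (k : ℝ) (hk : k ∈ Set.Ioo (0 : ℝ) 1)
    (X Y : Ω → ℝ) (hX : Measurable X) (hY : Measurable Y)
    (hindep : IndepFun X Y P)
    (hXlaw : P.map X = uniformIcc (1 / 2)) (hYlaw : P.map Y = uniformIcc (1 / 2))
    (C : Ω → ℕ) (hC : C = fun ω => if 0 ≤ X ω + k * Y ω then 1 else 0) :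
    klDiv (P.map (fun ω => (C ω, Y ω))) ((P.map C).prod (P.map Y))
      = ((((k ^ 2 + 1) * Real.log ((1 + k) / (1 - k))
            + 2 * k * (Real.log (1 - k ^ 2) - 1)) / (4 * k) : ℝ) : EReal) := by
  have hU : uniformIcc (1 / 2) = auxU := by
    rw [uniformIcc, auxU]
    norm_num
  have hCmeas : Measurable C := by
    rw [hC]
    exact Measurable.ite
      (measurableSet_le measurable_const (hX.add (hY.const_mul k)))
      measurable_const measurable_const
  have hmap2 : P.map (fun ω => (X ω, Y ω)) = auxU.prod auxU := by
    rw [show auxU.prod auxU = (P.map X).prod (P.map Y) by rw [hXlaw, hYlaw, hU]]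
    exact (indepFun_iff_map_prod_eq_prod_map_map hX.aemeasurable hY.aemeasurable).mp hindep
  have hμeq : P.map (fun ω => (C ω, Y ω)) = (auxU.prod auxU).map (auxg k) := by
    have hcomp : (fun ω => (C ω, Y ω)) = (auxg k) ∘ (fun ω => (X ω, Y ω)) := by
      funext ω
      simp only [auxg, Function.comp_apply, hC]
    rw [hcomp, ← Measure.map_map (auxg_meas k) (hX.prodMk hY), hmap2]
  have hPC : P.map C = auxρ := by
    have h1 : C = Prod.fst ∘ (fun ω => (C ω, Y ω)) := rfl
    rw [h1, ← Measure.map_map measurable_fst (hCmeas.prodMk hY), hμeq, map_g_fst hk]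
  have hPY : P.map Y = auxU := by rw [hYlaw, hU]
  rw [hμeq, map_g_eq hk, hPC, hPY]
  set μ := (auxρ.prod auxU).withDensity (auxf k) with hμdef
  haveI : IsProbabilityMeasure μ := by
    rw [hμdef, ← map_g_eq hk]
    exact Measure.isProbabilityMeasure_map (auxg_meas k).aemeasurable
  have hac : μ ≪ auxρ.prod auxU := withDensity_absolutelyContinuous _ _
  have hrn : μ.rnDeriv (auxρ.prod auxU) =ᵐ[auxρ.prod auxU] auxf k :=
    Measure.rnDeriv_withDensity (auxρ.prod auxU) (auxf_meas k)
  have hllrν : llr μ (auxρ.prod auxU) =ᵐ[auxρ.prod auxU] fun p => Real.log (auxr k p) := by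
    filter_upwards [hrn, prod_ae_Icc] with p h1 h2
    have hnn : 0 ≤ auxr k p := by linarith [(auxr_bounds hk h2).1, hk.2]
    simp [llr, h1, auxf, ENNReal.toReal_ofReal hnn]
  have hllrμ : llr μ (auxρ.prod auxU) =ᵐ[μ] fun p => Real.log (auxr k p) := hac.ae_le hllrν
  have hintllr : Integrable (llr μ (auxρ.prod auxU)) μ := by
    refine Integrable.mono' (integrable_const (Real.log (1+k) - Real.log (1-k)))
      (measurable_llr _ _).aestronglyMeasurable ?_
    filter_upwards [hllrμ, hac.ae_le prod_ae_Icc] with p h1 h2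
    obtain ⟨ha, hb⟩ := auxr_bounds hk h2
    rw [h1, Real.norm_eq_abs]
    exact abs_log_le hk ha hb
  rw [klDiv, if_pos ⟨hac, hintllr⟩]
  rw [integral_congr_ae hllrμ, hμdef, final_integral hk]
end

section
/- Let X, Y be independent standard normal random variables, let k ∈ [0,1], and define C_k = 1 if X + kY ≥ 0 and C_k = 0 otherwise. Then for every t ∈ ℝ, P(Y ≤ t and C_k = 1) = ∫_{−∞}^t φ(y)·Φ(k·y) dy, where φ and Φ denote the density and cumulative distribution function of the standard normal distribution; consequently the conditional density of Y given C_k = 1 is the skew-normal density y ↦ 2·φ(y)·Φ(k·y). -/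
open MeasureTheory ProbabilityTheory Real
open scoped Classical

theorem stmt_16 {Ω : Type*} [MeasurableSpace Ω] (P : Measure Ω) [IsProbabilityMeasure P]
    (k : ℝ) (hk : k ∈ Set.Icc (0 : ℝ) 1)
    (X Y : Ω → ℝ) (hX : Measurable X) (hY : Measurable Y)
    (hindep : IndepFun X Y P)
    (hXlaw : P.map X = gaussianReal 0 1) (hYlaw : P.map Y = gaussianReal 0 1)
    (C : Ω → ℕ) (hC : C = fun ω => if 0 ≤ X ω + k * Y ω then 1 else 0)
    (φ : ℝ → ℝ) (hφ : φ = fun y => (Real.sqrt (2 * Real.pi))⁻¹ * Real.exp (-(y ^ 2) / 2))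
    (Φ : ℝ → ℝ) (hΦ : Φ = fun x => ∫ y in Set.Iic x, φ y) :
    (∀ t : ℝ, (P {ω | Y ω ≤ t ∧ C ω = 1}).toReal = ∫ y in Set.Iic t, φ y * Φ (k * y)) ∧
      (ProbabilityTheory.cond P {ω | C ω = 1}).map Y
        = volume.withDensity (fun y => ENNReal.ofReal (2 * φ y * Φ (k * y))) := by
  -- φ is the standard gaussian pdf
  have hφ_eq : φ = gaussianPDFReal 0 1 := by
    ext y
    simp [hφ, gaussianPDFReal]
  have hφ_nonneg : ∀ y, 0 ≤ φ y := by
    intro y; rw [hφ_eq]; exact gaussianPDFReal_nonneg 0 1 y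
  have hφ_int : Integrable φ := by rw [hφ_eq]; exact integrable_gaussianPDFReal 0 1
  have hφ_meas : Measurable φ := by rw [hφ_eq]; exact measurable_gaussianPDFReal 0 1
  have hφ_total : ∫ y, φ y = 1 := by
    rw [hφ_eq]; exact integral_gaussianPDFReal_eq_one 0 one_ne_zero
  have hφ_even : ∀ y, φ (-y) = φ y := by
    intro y; simp [hφ, neg_sq]
  -- basic facts about Φ
  have hΦ_nonneg : ∀ a, 0 ≤ Φ a := by
    intro a; rw [hΦ]
    exact setIntegral_nonneg measurableSet_Iic fun y _ => hφ_nonneg y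
  have hΦ_mono : Monotone Φ := by
    intro a b hab
    rw [hΦ]
    exact setIntegral_mono_set hφ_int.integrableOn
      (Filter.Eventually.of_forall fun y => hφ_nonneg y)
      (HasSubset.Subset.eventuallyLE (Set.Iic_subset_Iic.2 hab))
  have hΦ_meas : Measurable Φ := hΦ_mono.measurable
  have hΦ_le_one : ∀ a, Φ a ≤ 1 := by
    intro a
    rw [hΦ, ← hφ_total]
    exact setIntegral_le_integral hφ_int (Filter.Eventually.of_forall fun y => hφ_nonneg y)
  -- Φ(-a) as an integral over Ioi
  have hΦ_Ioi : ∀ a, ∫ y in Set.Ioi a, φ y = Φ (-a) := by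
    intro a
    rw [hΦ]
    have := integral_comp_neg_Iic (-a) φ
    rw [neg_neg] at this
    rw [← this]
    exact setIntegral_congr_fun measurableSet_Iic fun y _ => hφ_even y
  have hΦ_neg : ∀ a, Φ (-a) = 1 - Φ a := by
    intro a
    have h := intervalIntegral.integral_Iic_add_Ioi (b := a) hφ_int.integrableOn hφ_int.integrableOn
    rw [hφ_total, hΦ_Ioi] at h
    have : Φ a = ∫ y in Set.Iic a, φ y := by rw [hΦ]
    linarith [this ▸ h]
  -- gaussian measure of sets
  have hG_set : ∀ s : Set ℝ, MeasurableSet s →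
      gaussianReal 0 1 s = ENNReal.ofReal (∫ y in s, φ y) := by
    intro s hs
    rw [gaussianReal_apply 0 one_ne_zero s]
    have h1 : ∫⁻ x in s, gaussianPDF 0 1 x = ∫⁻ x in s, ENNReal.ofReal (φ x) :=
      setLIntegral_congr_fun hs (fun y _ => by
        simp [gaussianPDF, hφ_eq])
    rw [h1, ← ofReal_integral_eq_lintegral_ofReal (hφ_int.restrict)
      (Filter.Eventually.of_forall fun y => hφ_nonneg y)]
  have hG_Iic : ∀ a, gaussianReal 0 1 (Set.Iic a) = ENNReal.ofReal (Φ a) := by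
    intro a; rw [hG_set _ measurableSet_Iic, hΦ]
  have hG_Ici : ∀ a, gaussianReal 0 1 (Set.Ici a) = ENNReal.ofReal (Φ (-a)) := by
    intro a
    rw [hG_set _ measurableSet_Ici, ← hΦ_Ioi a, integral_Ici_eq_integral_Ioi]
  -- the joint law
  have hmap : P.map (fun ω => (Y ω, X ω)) = (gaussianReal 0 1).prod (gaussianReal 0 1) := by
    have h := (indepFun_iff_map_prod_eq_prod_map_map hY.aemeasurable hX.aemeasurable).mp
      hindep.symm
    rw [hYlaw, hXlaw] at h
    exact h
  -- integrability of φ · Φ(k ·)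
  have hbd : ∀ (c : ℝ), Integrable (fun y => φ y * Φ (c * y)) := by
    intro c
    have h := hφ_int.bdd_mul ((hΦ_meas.comp (measurable_const_mul c)).aestronglyMeasurable)
      (c := 1) (Filter.Eventually.of_forall fun y => by
        rw [Function.comp, norm_eq_abs, abs_of_nonneg (hΦ_nonneg _)]
        exact hΦ_le_one _)
    exact h.congr (Filter.Eventually.of_forall fun y => mul_comm _ _)
  -- the key computation
  have hofm : Measurable fun y => ENNReal.ofReal (Φ (k * y)) :=
    (hΦ_meas.comp (measurable_const_mul k)).ennreal_ofReal
  have hmain : ∀ t : ℝ, P {ω | Y ω ≤ t ∧ 0 ≤ X ω + k * Y ω}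
      = ENNReal.ofReal (∫ y in Set.Iic t, φ y * Φ (k * y)) := by
    intro t
    set S : Set (ℝ × ℝ) := {p : ℝ × ℝ | p.1 ≤ t ∧ 0 ≤ p.2 + k * p.1} with hSdef
    have hS : MeasurableSet S := by
      refine (measurableSet_le measurable_fst measurable_const).inter
        (measurableSet_le measurable_const (measurable_snd.add (measurable_fst.const_mul k)))
    have h1 : {ω | Y ω ≤ t ∧ 0 ≤ X ω + k * Y ω} = (fun ω => (Y ω, X ω)) ⁻¹' S := rfl
    rw [h1, ← Measure.map_apply (hY.prodMk hX) hS, hmap, Measure.prod_apply hS]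
    have h2 : ∀ y : ℝ, gaussianReal 0 1 (Prod.mk y ⁻¹' S)
        = Set.indicator (Set.Iic t) (fun y => ENNReal.ofReal (Φ (k * y))) y := by
      intro y
      by_cases hyt : y ≤ t
      · have hpre : Prod.mk y ⁻¹' S = Set.Ici (-(k * y)) := by
          ext x
          simp only [hSdef, Set.mem_preimage, Set.mem_setOf_eq, Set.mem_Ici, hyt, true_and]
          constructor
          · intro h; linarith
          · intro h; linarith
        rw [hpre, hG_Ici, neg_neg, Set.indicator_of_mem (Set.mem_Iic.mpr hyt)]
      · have hpre : Prod.mk y ⁻¹' S = ∅ := by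
          ext x
          simp [hSdef, hyt]
        rw [hpre, measure_empty, Set.indicator_of_notMem (by simpa using hyt)]
    rw [lintegral_congr h2, lintegral_indicator measurableSet_Iic _,
      gaussianReal_of_var_ne_zero 0 one_ne_zero,
      restrict_withDensity measurableSet_Iic,
      lintegral_withDensity_eq_lintegral_mul _ (measurable_gaussianPDF 0 1) hofm]
    have h3 : ∀ y : ℝ, (gaussianPDF 0 1 * fun y => ENNReal.ofReal (Φ (k * y))) y
        = ENNReal.ofReal (φ y * Φ (k * y)) := by
      intro y
      simp only [Pi.mul_apply, gaussianPDF, ← hφ_eq]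
      rw [← ENNReal.ofReal_mul (hφ_nonneg y)]
    rw [lintegral_congr h3,
      ← ofReal_integral_eq_lintegral_ofReal ((hbd k).restrict)
        (Filter.Eventually.of_forall fun y => mul_nonneg (hφ_nonneg y) (hΦ_nonneg _))]
  -- the total integral is 1/2
  have hint_neg : Integrable (fun y => φ y * Φ (-(k * y))) := by
    simpa [neg_mul] using hbd (-k)
  have hhalf : ∫ y, φ y * Φ (k * y) = 1/2 := by
    have hneg : ∫ y, φ y * Φ (-(k * y)) = ∫ y, φ y * Φ (k * y) := by
      rw [← integral_neg_eq_self (fun y => φ y * Φ (k * y)) (volume : Measure ℝ)]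
      refine integral_congr_ae (Filter.Eventually.of_forall fun y => ?_)
      simp only [mul_neg, hφ_even]
    have hsum : (∫ y, φ y * Φ (k * y)) + (∫ y, φ y * Φ (-(k * y))) = 1 := by
      rw [← integral_add (hbd k) hint_neg]
      have h : ∀ y, φ y * Φ (k * y) + φ y * Φ (-(k * y)) = φ y := by
        intro y; rw [hΦ_neg]; ring
      rw [integral_congr_ae (Filter.Eventually.of_forall h), hφ_total]
    linarith
  have hPA : P {ω | 0 ≤ X ω + k * Y ω} = 1/2 := by
    set S : Set (ℝ × ℝ) := {p : ℝ × ℝ | 0 ≤ p.2 + k * p.1} with hSdef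
    have hS : MeasurableSet S :=
      measurableSet_le measurable_const (measurable_snd.add (measurable_fst.const_mul k))
    have h1 : {ω | 0 ≤ X ω + k * Y ω} = (fun ω => (Y ω, X ω)) ⁻¹' S := rfl
    rw [h1, ← Measure.map_apply (hY.prodMk hX) hS, hmap, Measure.prod_apply hS]
    have h2 : ∀ y : ℝ, gaussianReal 0 1 (Prod.mk y ⁻¹' S) = ENNReal.ofReal (Φ (k * y)) := by
      intro y
      have hpre : Prod.mk y ⁻¹' S = Set.Ici (-(k * y)) := by
        ext x
        simp only [hSdef, Set.mem_preimage, Set.mem_setOf_eq, Set.mem_Ici]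
        constructor
        · intro h; linarith
        · intro h; linarith
      rw [hpre, hG_Ici, neg_neg]
    rw [lintegral_congr h2, gaussianReal_of_var_ne_zero 0 one_ne_zero,
      lintegral_withDensity_eq_lintegral_mul _ (measurable_gaussianPDF 0 1) hofm]
    have h3 : ∀ y : ℝ, (gaussianPDF 0 1 * fun y => ENNReal.ofReal (Φ (k * y))) y
        = ENNReal.ofReal (φ y * Φ (k * y)) := by
      intro y
      simp only [Pi.mul_apply, gaussianPDF, ← hφ_eq]
      rw [← ENNReal.ofReal_mul (hφ_nonneg y)]
    rw [lintegral_congr h3,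
      ← ofReal_integral_eq_lintegral_ofReal (hbd k)
        (Filter.Eventually.of_forall fun y => mul_nonneg (hφ_nonneg y) (hΦ_nonneg _)),
      hhalf, ENNReal.ofReal_div_of_pos (by norm_num : (0:ℝ) < 2), ENNReal.ofReal_one,
      ENNReal.ofReal_ofNat]
  -- identification of the class event
  have hAset : {ω | C ω = 1} = {ω | 0 ≤ X ω + k * Y ω} := by
    ext ω
    simp only [hC, Set.mem_setOf_eq]
    split_ifs with h <;> simp [h]
  have hA_meas : MeasurableSet {ω | 0 ≤ X ω + k * Y ω} :=
    measurableSet_le measurable_const (hX.add (hY.const_mul k))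
  constructor
  · intro t
    have hset : {ω | Y ω ≤ t ∧ C ω = 1} = {ω | Y ω ≤ t ∧ 0 ≤ X ω + k * Y ω} := by
      have e1 : {ω | Y ω ≤ t ∧ C ω = 1} = {ω | Y ω ≤ t} ∩ {ω | C ω = 1} := rfl
      have e2 : {ω | Y ω ≤ t ∧ 0 ≤ X ω + k * Y ω}
          = {ω | Y ω ≤ t} ∩ {ω | 0 ≤ X ω + k * Y ω} := rfl
      rw [e1, e2, hAset]
    rw [hset, hmain t, ENNReal.toReal_ofReal
      (setIntegral_nonneg measurableSet_Iic fun y _ => mul_nonneg (hφ_nonneg y) (hΦ_nonneg _))]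
  · haveI hprob : IsProbabilityMeasure (P[|{ω | C ω = 1}]) := by
      apply cond_isProbabilityMeasure
      rw [hAset, hPA]
      norm_num
    haveI hprob2 : IsProbabilityMeasure ((P[|{ω | C ω = 1}]).map Y) :=
      Measure.isProbabilityMeasure_map hY.aemeasurable
    haveI : IsFiniteMeasure ((P[|{ω | C ω = 1}]).map Y) := by infer_instance
    refine Measure.ext_of_Iic _ _ fun a => ?_
    rw [Measure.map_apply hY measurableSet_Iic, cond_apply (hAset ▸ hA_meas) P _]
    have hcap : {ω | C ω = 1} ∩ (Y ⁻¹' Set.Iic a) = {ω | Y ω ≤ a ∧ 0 ≤ X ω + k * Y ω} := by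
      rw [hAset]
      ext ω
      simp [Set.mem_setOf_eq, and_comm]
    rw [hcap, hAset, hPA, hmain a, withDensity_apply _ measurableSet_Iic]
    have h2int : Integrable (fun y => 2 * φ y * Φ (k * y)) := by
      simpa [mul_assoc] using (hbd k).const_mul 2
    rw [← ofReal_integral_eq_lintegral_ofReal h2int.restrict
      (Filter.Eventually.of_forall fun y =>
        mul_nonneg (mul_nonneg (by norm_num) (hφ_nonneg y)) (hΦ_nonneg _))]
    have h4 : ∫ y in Set.Iic a, 2 * φ y * Φ (k * y)
        = 2 * ∫ y in Set.Iic a, φ y * Φ (k * y) := by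
      rw [← MeasureTheory.integral_const_mul]
      refine integral_congr_ae (Filter.Eventually.of_forall fun y => by ring)
    rw [h4, ENNReal.ofReal_mul (by norm_num : (0:ℝ) ≤ 2), ENNReal.ofReal_ofNat,
      one_div, inv_inv]
end

section
/- Let X, Y be independent standard normal random variables, let k ∈ [0,1], and define C_k = 1 if X + kY ≥ 0 and C_k = 0 otherwise. Set α = (1 − k)/(1 + k). Then for every t ∈ ℝ, P(X − Y ≤ t and C_k = 1) = ∫_{−∞}^t (1/√2)·φ(s/√2)·Φ(α·s/√2) ds, where φ and Φ denote the density and cumulative distribution function of the standard normal distribution; consequently the conditional density of X − Y given C_k = 1 is the skew-normal density s ↦ 2·(1/√2)·φ(s/√2)·Φ(α·s/√2) with location 0, scale √2 and shape α. -/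
open MeasureTheory ProbabilityTheory Real
open scoped Classical
open scoped ENNReal
open Set

noncomputable def phi : ℝ → ℝ := fun y => (Real.sqrt (2 * Real.pi))⁻¹ * Real.exp (-(y ^ 2) / 2)
noncomputable def Phi : ℝ → ℝ := fun x => ∫ y in Set.Iic x, phi y

lemma phi_nonneg (x : ℝ) : 0 ≤ phi x := by
  unfold phi
  positivity

lemma phi_le (x : ℝ) : phi x ≤ (Real.sqrt (2 * Real.pi))⁻¹ := by
  unfold phi
  have h1 : Real.exp (-(x ^ 2) / 2) ≤ 1 := by
    rw [Real.exp_le_one_iff]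
    nlinarith [sq_nonneg x]
  have h2 : (0:ℝ) ≤ (Real.sqrt (2 * Real.pi))⁻¹ := by positivity
  nlinarith

lemma phi_meas : Measurable phi := by
  unfold phi
  exact (((measurable_id.pow_const 2).neg.div_const 2).exp).const_mul _

lemma phi_integrable : Integrable phi := by
  have h : Integrable (fun x : ℝ => Real.exp (-(2:ℝ)⁻¹ * x ^ 2)) := integrable_exp_neg_mul_sq (by norm_num)
  have : phi = fun x => (Real.sqrt (2 * Real.pi))⁻¹ * Real.exp (-(2:ℝ)⁻¹ * x ^ 2) := by
    funext x; unfold phi; ring_nf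
  rw [this]
  exact h.const_mul _

lemma phi_even (x : ℝ) : phi (-x) = phi x := by unfold phi; ring_nf

lemma Phi_nonneg (x : ℝ) : 0 ≤ Phi x :=
  integral_nonneg fun y => phi_nonneg y

lemma Phi_mono : Monotone Phi := by
  intro a b hab
  exact setIntegral_mono_set phi_integrable.integrableOn
    (Filter.Eventually.of_forall phi_nonneg)
    (HasSubset.Subset.eventuallyLE (Iic_subset_Iic.2 hab))

lemma Phi_meas : Measurable Phi := Phi_mono.measurable

lemma g_integrable (c : ℝ) : Integrable (fun u => if c ≤ u then phi u else 0) := by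
  have : (fun u => if c ≤ u then phi u else 0) = Set.indicator (Set.Ici c) phi := by
    funext u; rw [Set.indicator_apply]; simp [Set.mem_Ici]
  rw [this]
  exact phi_integrable.indicator measurableSet_Ici

lemma g_integral (c : ℝ) : ∫ u, (if -c ≤ u then phi u else 0) = Phi c := by
  rw [← integral_neg_eq_self]
  have h : (fun u : ℝ => if -c ≤ -u then phi (-u) else 0) = Set.indicator (Set.Iic c) phi := by
    funext u
    rw [Set.indicator_apply, phi_even]
    simp [neg_le_neg_iff, Set.mem_Iic]
  rw [h, integral_indicator measurableSet_Iic]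
  rfl

lemma sqrt2_pos : (0:ℝ) < Real.sqrt 2 := Real.sqrt_pos.2 (by norm_num)
lemma sqrt2_sq : Real.sqrt 2 ^ 2 = 2 := Real.sq_sqrt (by norm_num)

lemma pointwise_key (k α s : ℝ) (hk : 0 ≤ k) (hα : α = (1 - k) / (1 + k)) (x : ℝ) :
    (if 0 ≤ (1 + k) * x - k * s then phi x * phi (x - s) else 0)
      = ((Real.sqrt 2)⁻¹ * phi (s / Real.sqrt 2))
        * (Real.sqrt 2 * (if -(α * s / Real.sqrt 2) ≤ Real.sqrt 2 * (x - s / 2) then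
            phi (Real.sqrt 2 * (x - s / 2)) else 0)) := by
  have h2 := sqrt2_sq
  have hs2 := sqrt2_pos
  have hkpos : (0:ℝ) < 1 + k := by linarith
  have hid : Real.sqrt 2 * (x - s / 2) + α * s / Real.sqrt 2
      = (Real.sqrt 2 / (1 + k)) * ((1 + k) * x - k * s) := by
    rw [hα]
    field_simp
    ring_nf
    rw [h2]; ring
  have hcond : (0 ≤ (1 + k) * x - k * s) ↔ (-(α * s / Real.sqrt 2) ≤ Real.sqrt 2 * (x - s / 2)) := by
    have hp : (0:ℝ) < Real.sqrt 2 / (1 + k) := div_pos hs2 hkpos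
    constructor
    · intro h
      have : 0 ≤ Real.sqrt 2 * (x - s / 2) + α * s / Real.sqrt 2 := by
        rw [hid]; exact mul_nonneg hp.le h
      linarith
    · intro h
      have h0 : 0 ≤ Real.sqrt 2 * (x - s / 2) + α * s / Real.sqrt 2 := by linarith
      rw [hid] at h0
      have := div_nonneg h0 hp.le
      rwa [mul_div_cancel_left₀ _ (ne_of_gt hp)] at this
  have hval : phi x * phi (x - s)
      = ((Real.sqrt 2)⁻¹ * phi (s / Real.sqrt 2)) * (Real.sqrt 2 * phi (Real.sqrt 2 * (x - s / 2))) := by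
    unfold phi
    rw [div_pow, mul_pow, h2]
    rw [show ((Real.sqrt (2 * Real.pi))⁻¹ * Real.exp (-x ^ 2 / 2)) * ((Real.sqrt (2 * Real.pi))⁻¹ * Real.exp (-(x - s) ^ 2 / 2))
        = (Real.sqrt (2 * Real.pi))⁻¹ * (Real.sqrt (2 * Real.pi))⁻¹ * (Real.exp (-x ^ 2 / 2) * Real.exp (-(x - s) ^ 2 / 2)) by ring]
    rw [show ((Real.sqrt 2)⁻¹ * ((Real.sqrt (2 * Real.pi))⁻¹ * Real.exp (-(s ^ 2 / 2) / 2))) * (Real.sqrt 2 * ((Real.sqrt (2 * Real.pi))⁻¹ * Real.exp (-(2 * (x - s / 2) ^ 2) / 2)))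
        = ((Real.sqrt 2)⁻¹ * Real.sqrt 2) * ((Real.sqrt (2 * Real.pi))⁻¹ * (Real.sqrt (2 * Real.pi))⁻¹) * (Real.exp (-(s ^ 2 / 2) / 2) * Real.exp (-(2 * (x - s / 2) ^ 2) / 2)) by ring]
    rw [inv_mul_cancel₀ (ne_of_gt hs2), one_mul, ← Real.exp_add, ← Real.exp_add]
    congr 1
    ring
  by_cases h : 0 ≤ (1 + k) * x - k * s
  · rw [if_pos h, if_pos (hcond.mp h), hval]
  · rw [if_neg h, if_neg (fun hc => h (hcond.mpr hc))]
    ring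

lemma psi_integrable (k s : ℝ) :
    Integrable (fun x => if 0 ≤ (1 + k) * x - k * s then phi x * phi (x - s) else 0) := by
  have hmeas : Measurable (fun x => if 0 ≤ (1 + k) * x - k * s then phi x * phi (x - s) else 0) := by
    refine Measurable.ite ?_ (phi_meas.mul (phi_meas.comp (measurable_id.sub_const s))) measurable_const
    exact measurableSet_le measurable_const ((measurable_id.const_mul (1 + k)).sub_const (k * s))
  refine Integrable.mono' (phi_integrable.const_mul (Real.sqrt (2 * Real.pi))⁻¹)
    hmeas.aestronglyMeasurable (Filter.Eventually.of_forall fun x => ?_)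
  rw [Real.norm_eq_abs]
  by_cases h : 0 ≤ (1 + k) * x - k * s
  · rw [if_pos h, abs_of_nonneg (mul_nonneg (phi_nonneg x) (phi_nonneg _))]
    have := phi_le (x - s)
    have h1 := phi_nonneg x
    have h2 := phi_nonneg (x - s)
    nlinarith [phi_le x, Real.sqrt_nonneg (2 * Real.pi)]
  · rw [if_neg h]
    simp only [abs_zero]
    have := phi_nonneg x
    positivity

lemma J (k α s : ℝ) (hk : 0 ≤ k) (hα : α = (1 - k) / (1 + k)) :
    ∫ x, (if 0 ≤ (1 + k) * x - k * s then phi x * phi (x - s) else 0)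
      = (Real.sqrt 2)⁻¹ * phi (s / Real.sqrt 2) * Phi (α * s / Real.sqrt 2) := by
  have hs2 := sqrt2_pos
  simp_rw [pointwise_key k α s hk hα]
  rw [MeasureTheory.integral_const_mul]
  have hsub : (∫ x, Real.sqrt 2 * (if -(α * s / Real.sqrt 2) ≤ Real.sqrt 2 * (x - s / 2) then
      phi (Real.sqrt 2 * (x - s / 2)) else 0))
      = ∫ x, Real.sqrt 2 * (if -(α * s / Real.sqrt 2) ≤ Real.sqrt 2 * x then
      phi (Real.sqrt 2 * x) else 0) :=
    integral_sub_right_eq_self (fun u => Real.sqrt 2 * (if -(α * s / Real.sqrt 2) ≤ Real.sqrt 2 * u then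
      phi (Real.sqrt 2 * u) else 0)) (s / 2)
  rw [hsub, MeasureTheory.integral_const_mul,
    Measure.integral_comp_mul_left (fun u => if -(α * s / Real.sqrt 2) ≤ u then phi u else 0) (Real.sqrt 2),
    g_integral]
  rw [smul_eq_mul, abs_of_nonneg (inv_nonneg.2 hs2.le)]
  rw [show Real.sqrt 2 * ((Real.sqrt 2)⁻¹ * Phi (α * s / Real.sqrt 2)) = (Real.sqrt 2 * (Real.sqrt 2)⁻¹) * Phi (α * s / Real.sqrt 2) by ring,
    mul_inv_cancel₀ (ne_of_gt hs2), one_mul, mul_assoc]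

open ProbabilityTheory

lemma gaussian_eq_withDensity :
    gaussianReal 0 1 = volume.withDensity (fun x => ENNReal.ofReal (phi x)) := by
  rw [gaussianReal_of_var_ne_zero 0 one_ne_zero]
  congr 1
  funext x
  rw [gaussianPDF_def]
  congr 1
  unfold phi
  rw [gaussianPDFReal_def]
  norm_num

lemma M (k α t : ℝ) (hk : 0 ≤ k) (hα : α = (1 - k) / (1 + k)) :
    ((gaussianReal 0 1).prod (gaussianReal 0 1)) {p : ℝ × ℝ | p.1 - p.2 ≤ t ∧ 0 ≤ p.1 + k * p.2}
      = ∫⁻ s in Set.Iic t,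
          ENNReal.ofReal ((Real.sqrt 2)⁻¹ * phi (s / Real.sqrt 2) * Phi (α * s / Real.sqrt 2)) := by
  have hdm : Measurable (fun x => ENNReal.ofReal (phi x)) := phi_meas.ennreal_ofReal
  set dens : ℝ → ℝ≥0∞ := fun x => ENNReal.ofReal (phi x) with hdens
  set S : Set (ℝ × ℝ) := {p : ℝ × ℝ | p.1 - p.2 ≤ t ∧ 0 ≤ p.1 + k * p.2} with hSdef
  have hS : MeasurableSet S :=
    MeasurableSet.inter
      (measurableSet_le (measurable_fst.sub measurable_snd) measurable_const)
      (measurableSet_le measurable_const (measurable_fst.add (measurable_snd.const_mul k)))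
  have hindm : Measurable (S.indicator (1 : ℝ × ℝ → ℝ≥0∞)) := measurable_one.indicator hS
  -- step 1
  have h1 : ((gaussianReal 0 1).prod (gaussianReal 0 1)) S
      = ∫⁻ x, dens x * ∫⁻ y, dens y * S.indicator 1 (x, y) ∂volume ∂volume := by
    rw [← lintegral_indicator_one hS, lintegral_prod _ hindm.aemeasurable]
    have hinner : ∀ x, ∫⁻ y, S.indicator 1 (x, y) ∂(gaussianReal 0 1)
        = ∫⁻ y, dens y * S.indicator 1 (x, y) ∂volume := by
      intro x
      rw [gaussian_eq_withDensity,
        lintegral_withDensity_eq_lintegral_mul _ hdm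
          (show Measurable fun y => S.indicator 1 (x, y) from hindm.comp measurable_prodMk_left)]
      rfl
    simp_rw [hinner]
    rw [gaussian_eq_withDensity, lintegral_withDensity_eq_lintegral_mul _ hdm
      (show Measurable fun x => ∫⁻ y, dens y * S.indicator 1 (x, y) ∂volume from
        Measurable.lintegral_prod_right' ((hdm.comp measurable_snd).mul hindm))]
    rfl
  -- step 2: substitution y = x - s in the inner integral
  have h2 : ∀ x, ∫⁻ y, dens y * S.indicator 1 (x, y) ∂volume
      = ∫⁻ s, dens (x - s) * S.indicator 1 (x, x - s) ∂volume := fun x =>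
    ((Measure.measurePreserving_sub_left volume x).lintegral_comp
      (hdm.mul (hindm.comp measurable_prodMk_left))).symm
  -- step 3: pull the constant in and swap
  have h3 : ∀ x, dens x * ∫⁻ s, dens (x - s) * S.indicator 1 (x, x - s) ∂volume
      = ∫⁻ s, dens x * (dens (x - s) * S.indicator 1 (x, x - s)) ∂volume := fun x =>
    (lintegral_const_mul _ ((hdm.comp (measurable_const.sub measurable_id)).mul
      (hindm.comp (measurable_const.prodMk (measurable_const.sub measurable_id))))).symm
  rw [h1]
  simp_rw [h2, h3]
  rw [lintegral_lintegral_swap (((hdm.comp measurable_fst).mul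
    ((hdm.comp (measurable_fst.sub measurable_snd)).mul
      (hindm.comp (measurable_fst.prodMk (measurable_fst.sub measurable_snd))))).aemeasurable)]
  -- step 4: compute the inner x-integral for each s
  have h4 : ∀ s, ∫⁻ x, dens x * (dens (x - s) * S.indicator 1 (x, x - s)) ∂volume
      = Set.indicator (Set.Iic t) (fun s => ENNReal.ofReal
          ((Real.sqrt 2)⁻¹ * phi (s / Real.sqrt 2) * Phi (α * s / Real.sqrt 2))) s := by
    intro s
    have hptw : ∀ x, dens x * (dens (x - s) * S.indicator 1 (x, x - s))
        = if s ≤ t then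
            ENNReal.ofReal (if 0 ≤ (1 + k) * x - k * s then phi x * phi (x - s) else 0)
          else 0 := by
      intro x
      have hmem : ((x, x - s) ∈ S) ↔ (s ≤ t ∧ 0 ≤ (1 + k) * x - k * s) := by
        rw [hSdef, Set.mem_setOf_eq]
        rw [show x - (x - s) = s from by ring, show x + k * (x - s) = (1 + k) * x - k * s from by ring]
      rw [Set.indicator_apply]
      by_cases hst : s ≤ t
      · by_cases hcond : 0 ≤ (1 + k) * x - k * s
        · rw [if_pos (hmem.mpr ⟨hst, hcond⟩), if_pos hst, if_pos hcond, Pi.one_apply, mul_one,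
            ← ENNReal.ofReal_mul (phi_nonneg x)]
        · rw [if_neg (fun hm => hcond (hmem.mp hm).2), if_pos hst, if_neg hcond, mul_zero,
            mul_zero, ENNReal.ofReal_zero]
      · rw [if_neg (fun hm => hst (hmem.mp hm).1), if_neg hst, mul_zero, mul_zero]
    simp_rw [hptw]
    by_cases hst : s ≤ t
    · simp only [if_pos hst]
      rw [← ofReal_integral_eq_lintegral_ofReal (psi_integrable k s)
        (ae_of_all _ fun x => by
          simp only [Pi.zero_apply]
          split_ifs with hcond
          · exact mul_nonneg (phi_nonneg x) (phi_nonneg _)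
          · exact le_rfl),
        J k α s hk hα, Set.indicator_of_mem (Set.mem_Iic.2 hst)]
    · simp only [if_neg hst, lintegral_const, zero_mul,
        Set.indicator_of_notMem (fun hm => hst (Set.mem_Iic.1 hm))]
  simp_rw [h4]
  rw [← lintegral_indicator]
  exact measurableSet_Iic

lemma gaussian_map_neg : (gaussianReal 0 1).map (fun x : ℝ => -x) = gaussianReal 0 1 := by
  have h := gaussianReal_map_const_mul (μ := 0) (v := 1) (-1)
  have h2 : (fun x : ℝ => -1 * x) = (fun x : ℝ => -x) := by funext x; ring
  rw [h2] at h
  rw [h]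
  norm_num

lemma gaussian_singleton (a : ℝ) : gaussianReal 0 1 {a} = 0 :=
  gaussianReal_absolutelyContinuous 0 one_ne_zero (volume_singleton)

lemma Half (k : ℝ) (hk : 0 ≤ k) :
    ((gaussianReal 0 1).prod (gaussianReal 0 1)) {p : ℝ × ℝ | 0 ≤ p.1 + k * p.2} = 1 / 2 := by
  set μ := gaussianReal 0 1 with hμ
  set ν := μ.prod μ with hν
  have hmeasfun : Measurable fun p : ℝ × ℝ => p.1 + k * p.2 :=
    measurable_fst.add (measurable_snd.const_mul k)
  set A : Set (ℝ × ℝ) := {p : ℝ × ℝ | 0 ≤ p.1 + k * p.2} with hA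
  have hAm : MeasurableSet A := measurableSet_le measurable_const hmeasfun
  set Z : Set (ℝ × ℝ) := {p : ℝ × ℝ | p.1 + k * p.2 = 0} with hZ
  have hZm : MeasurableSet Z := hmeasfun (measurableSet_singleton 0)
  -- Z is null
  have hZ0 : ν Z = 0 := by
    rw [hν, Measure.prod_apply hZm]
    by_cases hk0 : k = 0
    · have hae : ∀ᵐ x ∂μ, μ (Prod.mk x ⁻¹' Z) = 0 := by
        have hx0 : ∀ᵐ x ∂μ, x ≠ 0 := by
          rw [ae_iff]
          convert gaussian_singleton 0 using 2
          ext x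
          simp
        filter_upwards [hx0] with x hx
        have : Prod.mk x ⁻¹' Z = ∅ := by
          ext y
          simp only [hZ, Set.mem_preimage, Set.mem_setOf_eq, hk0, zero_mul, add_zero,
            Set.mem_empty_iff_false, iff_false]
          exact hx
        rw [this, measure_empty]
      rw [lintegral_congr_ae hae, lintegral_zero]
    · have hz : ∀ x, Prod.mk x ⁻¹' Z = {-(x / k)} := by
        intro x
        ext y
        simp only [hZ, Set.mem_preimage, Set.mem_setOf_eq, Set.mem_singleton_iff]
        constructor
        · intro h
          field_simp
          linarith
        · intro h
          rw [h]
          field_simp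
          ring
      rw [lintegral_congr (g := fun _ => 0) fun x => by rw [hz x, hμ, gaussian_singleton]]
      exact lintegral_zero
  -- negation symmetry
  have hneg : ν.map (Prod.map (fun x : ℝ => -x) (fun x : ℝ => -x)) = ν := by
    rw [hν, ← Measure.map_prod_map _ _ measurable_neg measurable_neg,
      show (Measure.map (fun x : ℝ => -x) μ) = μ from gaussian_map_neg]
  have hAc : ν Aᶜ = ν {p : ℝ × ℝ | 0 < p.1 + k * p.2} := by
    have hpre : (Prod.map (fun x : ℝ => -x) (fun x : ℝ => -x)) ⁻¹' Aᶜ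
        = {p : ℝ × ℝ | 0 < p.1 + k * p.2} := by
      ext p
      simp only [Set.mem_preimage, Set.mem_compl_iff, hA, Set.mem_setOf_eq,
        Prod.map_fst, Prod.map_snd]
      rw [show -p.1 + k * -p.2 = -(p.1 + k * p.2) from by ring, not_le]
      constructor <;> intro h <;> linarith
    conv_lhs => rw [← hneg]
    rw [Measure.map_apply (measurable_neg.prodMap measurable_neg) hAm.compl, hpre]
  have hsplit : ν A = ν {p : ℝ × ℝ | 0 < p.1 + k * p.2} + ν Z := by
    rw [← measure_union _ hZm]
    · congr 1
      ext p
      simp only [hA, hZ, Set.mem_union, Set.mem_setOf_eq]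
      constructor
      · intro h
        rcases lt_or_eq_of_le h with h' | h'
        · exact Or.inl h'
        · exact Or.inr h'.symm
      · rintro (h | h)
        · exact h.le
        · exact h.symm.le
    · exact Set.disjoint_left.mpr fun p hp1 hp2 => absurd hp2 (ne_of_gt hp1)
  have htot : ν A + ν Aᶜ = 1 := by
    rw [measure_add_measure_compl hAm]
    rw [hν]
    simp
  rw [hAc] at htot
  rw [hsplit, hZ0, add_zero] at htot ⊢
  have h2 : (2 : ℝ≥0∞) * ν {p : ℝ × ℝ | 0 < p.1 + k * p.2} = 1 := by
    rw [two_mul]; exact htot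
  rw [(ENNReal.eq_div_iff (two_ne_zero) (by norm_num)).2 h2]

theorem stmt_17 {Ω : Type*} [MeasurableSpace Ω] (P : Measure Ω) [IsProbabilityMeasure P]
    (k : ℝ) (hk : k ∈ Set.Icc (0 : ℝ) 1)
    (X Y : Ω → ℝ) (hX : Measurable X) (hY : Measurable Y)
    (hindep : IndepFun X Y P)
    (hXlaw : P.map X = gaussianReal 0 1) (hYlaw : P.map Y = gaussianReal 0 1)
    (C : Ω → ℕ) (hC : C = fun ω => if 0 ≤ X ω + k * Y ω then 1 else 0)
    (φ : ℝ → ℝ) (hφ : φ = fun y => (Real.sqrt (2 * Real.pi))⁻¹ * Real.exp (-(y ^ 2) / 2))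
    (Φ : ℝ → ℝ) (hΦ : Φ = fun x => ∫ y in Set.Iic x, φ y)
    (α : ℝ) (hα : α = (1 - k) / (1 + k)) :
    (∀ t : ℝ, (P {ω | X ω - Y ω ≤ t ∧ C ω = 1}).toReal
        = ∫ s in Set.Iic t,
            (Real.sqrt 2)⁻¹ * φ (s / Real.sqrt 2) * Φ (α * s / Real.sqrt 2)) ∧
      (ProbabilityTheory.cond P {ω | C ω = 1}).map (fun ω => X ω - Y ω)
        = volume.withDensity
            (fun s => ENNReal.ofReal
              (2 * (Real.sqrt 2)⁻¹ * φ (s / Real.sqrt 2) * Φ (α * s / Real.sqrt 2))) := by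
  have hφ' : φ = phi := hφ
  subst hφ'
  have hΦ' : Φ = Phi := hΦ
  subst hΦ'
  obtain ⟨hk0, hk1⟩ := hk
  have hZm : Measurable fun ω => (X ω, Y ω) := hX.prodMk hY
  have hmap : P.map (fun ω => (X ω, Y ω)) = (gaussianReal 0 1).prod (gaussianReal 0 1) := by
    exact ((ProbabilityTheory.indepFun_iff_map_prod_eq_prod_map_map
      hX.aemeasurable hY.aemeasurable).mp hindep).trans (by rw [hXlaw, hYlaw])
  have hCiff : ∀ ω, C ω = 1 ↔ 0 ≤ X ω + k * Y ω := by
    intro ω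
    rw [hC]
    dsimp only
    split_ifs with h
    · exact iff_of_true rfl h
    · exact iff_of_false (by norm_num) h
  have hS : ∀ t : ℝ, MeasurableSet {p : ℝ × ℝ | p.1 - p.2 ≤ t ∧ 0 ≤ p.1 + k * p.2} := fun t =>
    MeasurableSet.inter
      (measurableSet_le (measurable_fst.sub measurable_snd) measurable_const)
      (measurableSet_le measurable_const (measurable_fst.add (measurable_snd.const_mul k)))
  have hAm : MeasurableSet {p : ℝ × ℝ | 0 ≤ p.1 + k * p.2} :=
    measurableSet_le measurable_const (measurable_fst.add (measurable_snd.const_mul k))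
  have hfm : Measurable fun s : ℝ =>
      (Real.sqrt 2)⁻¹ * phi (s / Real.sqrt 2) * Phi (α * s / Real.sqrt 2) :=
    ((phi_meas.comp (measurable_id.div_const _)).const_mul _).mul
      (Phi_meas.comp ((measurable_id.const_mul α).div_const _))
  have hkey : ∀ t : ℝ, P {ω | X ω - Y ω ≤ t ∧ C ω = 1}
      = ∫⁻ s in Set.Iic t,
          ENNReal.ofReal ((Real.sqrt 2)⁻¹ * phi (s / Real.sqrt 2) * Phi (α * s / Real.sqrt 2)) := by
    intro t
    have hset : {ω | X ω - Y ω ≤ t ∧ C ω = 1}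
        = (fun ω => (X ω, Y ω)) ⁻¹' {p : ℝ × ℝ | p.1 - p.2 ≤ t ∧ 0 ≤ p.1 + k * p.2} := by
      ext ω
      simp only [Set.mem_setOf_eq, Set.mem_preimage]
      rw [hCiff ω]
    rw [hset, ← Measure.map_apply hZm (hS t), hmap, M k α t hk0 hα]
  constructor
  · intro t
    rw [hkey t]
    exact (integral_eq_lintegral_of_nonneg_ae
      (ae_of_all _ fun s => mul_nonneg (mul_nonneg (by positivity) (phi_nonneg _)) (Phi_nonneg _))
      hfm.aestronglyMeasurable).symm
  · have hCset : {ω | C ω = 1} = (fun ω => (X ω, Y ω)) ⁻¹' {p : ℝ × ℝ | 0 ≤ p.1 + k * p.2} := by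
      ext ω
      simp only [Set.mem_setOf_eq, Set.mem_preimage]
      exact hCiff ω
    have hCm : MeasurableSet {ω | C ω = 1} := by
      rw [hCset]; exact hZm hAm
    have hC1 : P {ω | C ω = 1} = 1 / 2 := by
      rw [hCset, ← Measure.map_apply hZm hAm, hmap, Half k hk0]
    haveI : IsProbabilityMeasure (ProbabilityTheory.cond P {ω | C ω = 1}) :=
      ProbabilityTheory.cond_isProbabilityMeasure (by rw [hC1]; norm_num)
    haveI : IsProbabilityMeasure
        ((ProbabilityTheory.cond P {ω | C ω = 1}).map fun ω => X ω - Y ω) :=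
      Measure.isProbabilityMeasure_map (hX.sub hY).aemeasurable
    apply Measure.ext_of_Iic
    intro t
    rw [Measure.map_apply (show Measurable (fun ω => X ω - Y ω) from hX.sub hY) measurableSet_Iic,
      ProbabilityTheory.cond_apply hCm, hC1]
    have hsect : {ω | C ω = 1} ∩ (fun ω => X ω - Y ω) ⁻¹' Set.Iic t
        = {ω | X ω - Y ω ≤ t ∧ C ω = 1} := by
      ext ω
      simp only [Set.mem_inter_iff, Set.mem_setOf_eq, Set.mem_preimage, Set.mem_Iic]
      tauto
    rw [hsect, hkey t, withDensity_apply _ measurableSet_Iic]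
    have hptw : ∀ s : ℝ, ENNReal.ofReal
        (2 * (Real.sqrt 2)⁻¹ * phi (s / Real.sqrt 2) * Phi (α * s / Real.sqrt 2))
        = 2 * ENNReal.ofReal
            ((Real.sqrt 2)⁻¹ * phi (s / Real.sqrt 2) * Phi (α * s / Real.sqrt 2)) := by
      intro s
      rw [show 2 * (Real.sqrt 2)⁻¹ * phi (s / Real.sqrt 2) * Phi (α * s / Real.sqrt 2)
          = 2 * ((Real.sqrt 2)⁻¹ * phi (s / Real.sqrt 2) * Phi (α * s / Real.sqrt 2)) from by ring,
        ENNReal.ofReal_mul (by norm_num : (0:ℝ) ≤ 2)]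
      norm_num
    simp_rw [hptw]
    rw [lintegral_const_mul 2 hfm.ennreal_ofReal]
    rw [show ((1:ℝ≥0∞)/2)⁻¹ = 2 from by rw [one_div, inv_inv]]
end

section
/- Let X, Y be independent standard normal random variables, let k ∈ (0,1], and define C_k = 1 if X + kY ≥ 0 and C_k = 0 otherwise. Then MI(C_k, Y) equals ∫_ℝ φ(y)·Φ(k·y)·log(2·Φ(k·y)) dy + ∫_ℝ φ(y)·Φ(−k·y)·log(2·Φ(−k·y)) dy, where φ and Φ denote the density and cumulative distribution function of the standard normal distribution and log is the natural logarithm. -/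
open MeasureTheory ProbabilityTheory Real
open scoped Classical

open scoped ENNReal

namespace S18
noncomputable def pf : ℝ → ℝ := fun y => (Real.sqrt (2 * Real.pi))⁻¹ * Real.exp (-(y ^ 2) / 2)
noncomputable def Pf : ℝ → ℝ := fun x => ∫ y in Set.Iic x, pf y

lemma pf_eq : gaussianPDFReal 0 1 = pf := by
  ext y; simp [gaussianPDFReal, pf]

lemma pf_pos (x : ℝ) : 0 < pf x := by rw [← pf_eq]; exact gaussianPDFReal_pos _ _ _ one_ne_zero
lemma pf_nonneg (x : ℝ) : 0 ≤ pf x := (pf_pos x).le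
lemma pf_meas : Measurable pf := by rw [← pf_eq]; exact measurable_gaussianPDFReal _ _
lemma pf_integrable : Integrable pf := by rw [← pf_eq]; exact integrable_gaussianPDFReal _ _
lemma pf_even (x : ℝ) : pf (-x) = pf x := by simp [pf]
lemma lintegral_pf : ∫⁻ y, ENNReal.ofReal (pf y) = 1 := by
  rw [← pf_eq]; exact lintegral_gaussianPDFReal_eq_one 0 one_ne_zero
lemma integral_pf : ∫ y, pf y = 1 := by
  rw [← pf_eq]; exact integral_gaussianPDFReal_eq_one 0 one_ne_zero
lemma G_def : gaussianReal 0 1 = volume.withDensity (fun y => ENNReal.ofReal (pf y)) := by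
  rw [gaussianReal_of_var_ne_zero _ one_ne_zero]
  congr 1; ext y; rw [gaussianPDF, pf_eq]

lemma Pf_mono : Monotone Pf := by
  intro a b hab
  exact setIntegral_mono_set pf_integrable.integrableOn
    (ae_of_all _ pf_nonneg) (HasSubset.Subset.eventuallyLE (Set.Iic_subset_Iic.2 hab))

lemma Pf_meas : Measurable Pf := Pf_mono.measurable

lemma Pf_pos (x : ℝ) : 0 < Pf x := by
  refine (setIntegral_pos_iff_support_of_nonneg_ae (ae_of_all _ pf_nonneg)
    pf_integrable.integrableOn).2 ?_
  have : (Function.support pf) = Set.univ := by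
    ext y; simp [Function.support, (pf_pos y).ne']
  rw [this, Set.univ_inter]
  simp

lemma Pf_add_neg (x : ℝ) : Pf x + Pf (-x) = 1 := by
  have h1 : Pf (-x) = ∫ y in Set.Ioi x, pf y := by
    rw [Pf, ← integral_comp_neg_Ioi]
    simp [pf_even]
  rw [h1, Pf, intervalIntegral.integral_Iic_add_Ioi pf_integrable.integrableOn
    pf_integrable.integrableOn]
  exact integral_pf

lemma Pf_le_one (x : ℝ) : Pf x ≤ 1 := by
  have := Pf_add_neg x
  nlinarith [Pf_pos (-x)]

lemma Pf_lt_one (x : ℝ) : Pf x < 1 := by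
  have := Pf_add_neg x
  nlinarith [Pf_pos (-x)]

lemma lintegral_pf_set {t : Set ℝ} (ht : MeasurableSet t) :
    ∫⁻ y in t, ENNReal.ofReal (pf y) = ENNReal.ofReal (∫ y in t, pf y) := by
  rw [← ofReal_integral_eq_lintegral_ofReal pf_integrable.integrableOn (ae_of_all _ pf_nonneg)]

lemma G_Iic (a : ℝ) : gaussianReal 0 1 (Set.Iic a) = ENNReal.ofReal (Pf a) := by
  rw [G_def, withDensity_apply _ measurableSet_Iic, lintegral_pf_set measurableSet_Iic]; rfl

lemma Pf_neg_eq (x : ℝ) : Pf (-x) = ∫ y in Set.Ioi x, pf y := by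
  rw [Pf, ← integral_comp_neg_Ioi]
  simp [pf_even]

lemma G_Ici (a : ℝ) : gaussianReal 0 1 (Set.Ici a) = ENNReal.ofReal (Pf (-a)) := by
  rw [G_def, withDensity_apply _ measurableSet_Ici, ← restrict_Ioi_eq_restrict_Ici,
    lintegral_pf_set measurableSet_Ioi, Pf_neg_eq]

lemma G_Iio (a : ℝ) : gaussianReal 0 1 (Set.Iio a) = ENNReal.ofReal (Pf a) := by
  rw [G_def, withDensity_apply _ measurableSet_Iio, restrict_Iio_eq_restrict_Iic,
    lintegral_pf_set measurableSet_Iic]; rfl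

/-- the key bound `u * |log (2u)| ≤ 1` for `u ∈ (0,1]`. -/
lemma u_bound {u : ℝ} (hu : 0 < u) (hu1 : u ≤ 1) : u * |Real.log (2 * u)| ≤ 1 := by
  rcases le_total (2 * u) 1 with h | h
  · have hlog : Real.log (2 * u) ≤ 0 := Real.log_nonpos (by positivity) h
    rw [abs_of_nonpos hlog]
    have h2 : Real.log (2 * u)⁻¹ ≤ (2 * u)⁻¹ - 1 :=
      Real.log_le_sub_one_of_pos (by positivity)
    rw [Real.log_inv] at h2
    have : -Real.log (2 * u) ≤ (2 * u)⁻¹ := by linarith [inv_nonneg.2 (by positivity : (0:ℝ) ≤ 2*u)]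
    calc u * -Real.log (2 * u) ≤ u * (2 * u)⁻¹ := by
          exact mul_le_mul_of_nonneg_left this hu.le
      _ = 2⁻¹ := by field_simp
      _ ≤ 1 := by norm_num
  · have hlog : 0 ≤ Real.log (2 * u) := Real.log_nonneg h
    rw [abs_of_nonneg hlog]
    have h2 : Real.log (2 * u) ≤ 2 * u - 1 := Real.log_le_sub_one_of_pos (by positivity)
    nlinarith

lemma measurable_PfkA (k : ℝ) : Measurable (fun y => ENNReal.ofReal (Pf (k * y))) :=
  ENNReal.measurable_ofReal.comp (Pf_meas.comp (measurable_const_mul k))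

lemma lintegral_G_eq (k : ℝ) {t : Set ℝ} (ht : MeasurableSet t) :
    ∫⁻ y in t, ENNReal.ofReal (Pf (k * y)) ∂(gaussianReal 0 1)
      = ∫⁻ y in t, ENNReal.ofReal (pf y * Pf (k * y)) := by
  rw [G_def, restrict_withDensity ht,
    lintegral_withDensity_eq_lintegral_mul _ pf_meas.ennreal_ofReal
      (measurable_PfkA k)]
  congr 1
  ext y
  simp only [Pi.mul_apply, Function.comp]
  rw [← ENNReal.ofReal_mul (pf_nonneg y)]

section main
variable {Ω : Type*} [MeasurableSpace Ω] (P : Measure Ω) [IsProbabilityMeasure P]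
  (k : ℝ) (X Y : Ω → ℝ) (hX : Measurable X) (hY : Measurable Y)
  (hindep : IndepFun X Y P)
  (hXlaw : P.map X = gaussianReal 0 1) (hYlaw : P.map Y = gaussianReal 0 1)

include hX hY hindep hXlaw hYlaw

lemma map_pair : P.map (fun ω => (X ω, Y ω)) = (gaussianReal 0 1).prod (gaussianReal 0 1) := by
  rw [(indepFun_iff_map_prod_eq_prod_map_map hX.aemeasurable hY.aemeasurable).1 hindep,
    hXlaw, hYlaw]

lemma slice_pos {t : Set ℝ} (ht : MeasurableSet t) :
    P {ω | 0 ≤ X ω + k * Y ω ∧ Y ω ∈ t}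
      = ∫⁻ y in t, ENNReal.ofReal (pf y * Pf (k * y)) := by
  set A : Set (ℝ × ℝ) := {p : ℝ × ℝ | 0 ≤ p.1 + k * p.2 ∧ p.2 ∈ t} with hA_def
  have hA : MeasurableSet A :=
    (measurableSet_le measurable_const (measurable_fst.add (measurable_snd.const_mul k))).inter
      (measurable_snd ht)
  have h1 : {ω | 0 ≤ X ω + k * Y ω ∧ Y ω ∈ t} = (fun ω => (X ω, Y ω)) ⁻¹' A := rfl
  rw [h1, ← Measure.map_apply (hX.prodMk hY) hA,
    map_pair P X Y hX hY hindep hXlaw hYlaw, Measure.prod_apply_symm hA]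
  have h2 : ∀ y : ℝ, ((fun x => (x, y)) ⁻¹' A)
      = if y ∈ t then Set.Ici (-(k * y)) else ∅ := by
    intro y
    ext x
    by_cases hy : y ∈ t
    · simp only [hA_def, Set.mem_preimage, Set.mem_setOf_eq, hy, and_true, if_pos, Set.mem_Ici]
      constructor <;> intro h <;> linarith
    · simp [hA_def, hy]
  simp_rw [h2, apply_ite (gaussianReal 0 1), measure_empty, G_Ici, neg_neg,
    ← Set.indicator_apply t (fun y => ENNReal.ofReal (Pf (k * y)))]
  rw [lintegral_indicator ht, lintegral_G_eq k ht]

lemma slice_neg {t : Set ℝ} (ht : MeasurableSet t) :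
    P {ω | ¬ 0 ≤ X ω + k * Y ω ∧ Y ω ∈ t}
      = ∫⁻ y in t, ENNReal.ofReal (pf y * Pf (-(k * y))) := by
  set A : Set (ℝ × ℝ) := {p : ℝ × ℝ | ¬ 0 ≤ p.1 + k * p.2 ∧ p.2 ∈ t} with hA_def
  have hA : MeasurableSet A :=
    ((measurableSet_le measurable_const
      (measurable_fst.add (measurable_snd.const_mul k))).compl).inter (measurable_snd ht)
  have h1 : {ω | ¬ 0 ≤ X ω + k * Y ω ∧ Y ω ∈ t} = (fun ω => (X ω, Y ω)) ⁻¹' A := rfl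
  rw [h1, ← Measure.map_apply (hX.prodMk hY) hA,
    map_pair P X Y hX hY hindep hXlaw hYlaw, Measure.prod_apply_symm hA]
  have h2 : ∀ y : ℝ, ((fun x => (x, y)) ⁻¹' A)
      = if y ∈ t then Set.Iio (-(k * y)) else ∅ := by
    intro y
    ext x
    by_cases hy : y ∈ t
    · simp only [hA_def, Set.mem_preimage, Set.mem_setOf_eq, hy, and_true, if_pos,
        Set.mem_Iio, not_le]
      constructor <;> intro h <;> linarith
    · simp [hA_def, hy]
  have h3 : ∀ y : ℝ, Pf (-(k * y)) = Pf ((-k) * y) := by intro y; ring_nf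
  simp_rw [h2, apply_ite (gaussianReal 0 1), measure_empty, G_Iio,
    h3, ← Set.indicator_apply t (fun y => ENNReal.ofReal (Pf ((-k) * y)))]
  rw [lintegral_indicator ht, lintegral_G_eq (-k) ht]

end main

lemma meas_ofReal_pf_Pf (k : ℝ) :
    Measurable (fun y => ENNReal.ofReal (pf y * Pf (k * y))) :=
  (pf_meas.mul (Pf_meas.comp (measurable_const_mul k))).ennreal_ofReal

lemma A_eq_B (k : ℝ) : ∫⁻ y, ENNReal.ofReal (pf y * Pf (k * y))
    = ∫⁻ y, ENNReal.ofReal (pf y * Pf (-(k * y))) := by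
  have hm : Measurable (fun y : ℝ => ENNReal.ofReal (pf y * Pf (-(k * y)))) := by
    simpa [neg_mul] using meas_ofReal_pf_Pf (-k)
  have h := (Measure.measurePreserving_neg (volume : Measure ℝ)).lintegral_comp hm
  rw [← h]
  apply lintegral_congr
  intro y
  simp [pf_even, mul_neg, neg_neg]

lemma AB_total (k : ℝ) : (∫⁻ y, ENNReal.ofReal (pf y * Pf (k * y)))
    + ∫⁻ y, ENNReal.ofReal (pf y * Pf (-(k * y))) = 1 := by
  rw [← lintegral_add_left (meas_ofReal_pf_Pf k)]
  have : ∀ y : ℝ, ENNReal.ofReal (pf y * Pf (k * y)) + ENNReal.ofReal (pf y * Pf (-(k * y)))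
      = ENNReal.ofReal (pf y) := by
    intro y
    rw [← ENNReal.ofReal_add (mul_nonneg (pf_nonneg y) (Pf_pos _).le)
      (mul_nonneg (pf_nonneg y) (Pf_pos _).le), ← mul_add, Pf_add_neg, mul_one]
  simp_rw [this]
  exact lintegral_pf

lemma A_half (k : ℝ) : ∫⁻ y, ENNReal.ofReal (pf y * Pf (k * y)) = 1 / 2 := by
  have h2 : (2 : ℝ≥0∞) * ∫⁻ y, ENNReal.ofReal (pf y * Pf (k * y)) = 1 := by
    rw [two_mul]
    nth_rewrite 2 [A_eq_B]
    exact AB_total k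
  exact (ENNReal.eq_div_iff two_ne_zero ENNReal.ofNat_ne_top).2 h2

lemma B_half (k : ℝ) : ∫⁻ y, ENNReal.ofReal (pf y * Pf (-(k * y))) = 1 / 2 := by
  rw [← A_eq_B, A_half]

noncomputable def fden (k : ℝ) : ℕ × ℝ → ℝ≥0∞ := fun p =>
  if p.1 = 1 then ENNReal.ofReal (2 * Pf (k * p.2))
  else if p.1 = 0 then ENNReal.ofReal (2 * Pf (-(k * p.2))) else 0

noncomputable def gfun (k : ℝ) : ℕ × ℝ → ℝ := fun p =>
  if p.1 = 1 then Real.log (2 * Pf (k * p.2))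
  else if p.1 = 0 then Real.log (2 * Pf (-(k * p.2))) else 0

lemma meas_set_fst (n : ℕ) : MeasurableSet {p : ℕ × ℝ | p.1 = n} :=
  measurable_fst (measurableSet_singleton n)

lemma fden_meas (k : ℝ) : Measurable (fden k) := by
  unfold fden
  refine Measurable.ite (meas_set_fst 1) ?_ (Measurable.ite (meas_set_fst 0) ?_ measurable_const)
  · exact ((Pf_meas.comp ((measurable_const_mul k).comp measurable_snd)).const_mul 2).ennreal_ofReal
  · have : Measurable fun p : ℕ × ℝ => -(k * p.2) :=
      ((measurable_const_mul k).comp measurable_snd).neg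
    exact ((Pf_meas.comp this).const_mul 2).ennreal_ofReal

lemma gfun_meas (k : ℝ) : Measurable (gfun k) := by
  unfold gfun
  refine Measurable.ite (meas_set_fst 1) ?_ (Measurable.ite (meas_set_fst 0) ?_ measurable_const)
  · exact Real.measurable_log.comp
      ((Pf_meas.comp ((measurable_const_mul k).comp measurable_snd)).const_mul 2)
  · exact Real.measurable_log.comp
      ((Pf_meas.comp (((measurable_const_mul k).comp measurable_snd).neg)).const_mul 2)

lemma fden_gfun_bound (k : ℝ) (p : ℕ × ℝ) : fden k p * (‖gfun k p‖₊ : ℝ≥0∞) ≤ 2 := by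
  have key : ∀ u : ℝ, 0 < u → u ≤ 1 →
      ENNReal.ofReal (2 * u) * (‖Real.log (2 * u)‖₊ : ℝ≥0∞) ≤ 2 := by
    intro u hu hu1
    rw [← enorm_eq_nnnorm, Real.enorm_eq_ofReal_abs, ← ENNReal.ofReal_mul (by positivity)]
    calc ENNReal.ofReal (2 * u * |Real.log (2 * u)|)
        ≤ ENNReal.ofReal 2 := by
          apply ENNReal.ofReal_le_ofReal
          have := u_bound hu hu1
          nlinarith
      _ = 2 := by norm_num
  obtain ⟨c, y⟩ := p
  rcases eq_or_ne c 1 with h1 | h1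
  · simp only [fden, gfun, h1, if_pos rfl]
    exact key _ (Pf_pos _) (Pf_le_one _)
  · rcases eq_or_ne c 0 with h0 | h0
    · simp only [fden, gfun, h0, h1, if_neg, if_pos rfl]
      simp only [if_neg (by simp : ¬(0 = 1))]
      exact key _ (Pf_pos _) (Pf_le_one _)
    · simp [fden, gfun, h1, h0]

lemma harith (x : ℝ≥0∞) : (1/2 : ℝ≥0∞) * (2 * x) = x := by
  rw [← mul_assoc, one_div, ENNReal.inv_mul_cancel two_ne_zero ENNReal.ofNat_ne_top, one_mul]

lemma hs_nat (s : Set ℕ) : MeasurableSet s := by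
  exact MeasurableSpace.measurableSet_top

lemma C_meas {Ω : Type*} [MeasurableSpace Ω] {k : ℝ} {X Y : Ω → ℝ}
    (hX : Measurable X) (hY : Measurable Y) {C : Ω → ℕ}
    (hC : C = fun ω => if 0 ≤ X ω + k * Y ω then 1 else 0) : Measurable C := by
  rw [hC]
  exact Measurable.ite (measurableSet_le measurable_const (hX.add (hY.const_mul k)))
    measurable_const measurable_const

section main2
variable {Ω : Type*} [MeasurableSpace Ω] (P : Measure Ω) [IsProbabilityMeasure P]
  (k : ℝ) (X Y : Ω → ℝ) (hX : Measurable X) (hY : Measurable Y)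
  (hindep : IndepFun X Y P)
  (hXlaw : P.map X = gaussianReal 0 1) (hYlaw : P.map Y = gaussianReal 0 1)
  (C : Ω → ℕ) (hC : C = fun ω => if 0 ≤ X ω + k * Y ω then 1 else 0)

include hX hY hindep hXlaw hYlaw hC

lemma mu_rect {s : Set ℕ} {t : Set ℝ} (ht : MeasurableSet t) :
    (P.map fun ω => (C ω, Y ω)) (s ×ˢ t)
      = (if (1:ℕ) ∈ s then 1 else 0) * (∫⁻ y in t, ENNReal.ofReal (pf y * Pf (k * y)))
        + (if (0:ℕ) ∈ s then 1 else 0) * ∫⁻ y in t, ENNReal.ofReal (pf y * Pf (-(k * y))) := by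
  have hCm : Measurable C := C_meas hX hY hC
  rw [Measure.map_apply (hCm.prodMk hY) ((hs_nat s).prod ht)]
  have hpre : (fun ω => (C ω, Y ω)) ⁻¹' (s ×ˢ t)
      = (if (1:ℕ) ∈ s then {ω | 0 ≤ X ω + k * Y ω ∧ Y ω ∈ t} else ∅)
        ∪ (if (0:ℕ) ∈ s then {ω | ¬0 ≤ X ω + k * Y ω ∧ Y ω ∈ t} else ∅) := by
    ext ω
    by_cases h : 0 ≤ X ω + k * Y ω <;> by_cases h1 : (1:ℕ) ∈ s <;>
      by_cases h0 : (0:ℕ) ∈ s <;> simp [hC, h, h1, h0, not_le] <;>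
      first
        | exact fun _ => not_le.mp h
        | exact fun _ => h
        | skip
  rw [hpre]
  have hS0 : MeasurableSet {ω | ¬0 ≤ X ω + k * Y ω ∧ Y ω ∈ t} :=
    ((measurableSet_le measurable_const (hX.add (hY.const_mul k))).compl).inter (hY ht)
  have hdisj : Disjoint {ω | 0 ≤ X ω + k * Y ω ∧ Y ω ∈ t}
      {ω | ¬0 ≤ X ω + k * Y ω ∧ Y ω ∈ t} := by
    rw [Set.disjoint_left]
    rintro ω ⟨h, _⟩ ⟨h', _⟩
    exact h' h
  have hsp := slice_pos P k X Y hX hY hindep hXlaw hYlaw ht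
  have hsn := slice_neg P k X Y hX hY hindep hXlaw hYlaw ht
  by_cases h1 : (1:ℕ) ∈ s <;> by_cases h0 : (0:ℕ) ∈ s <;>
    simp only [h1, h0, if_true, if_false, Set.union_empty, Set.empty_union, one_mul, zero_mul,
      add_zero, zero_add, measure_empty, Set.union_empty]
  · rw [measure_union hdisj hS0, hsp, hsn]
  · exact hsp
  · exact hsn

lemma map_C : P.map C = (1/2 : ℝ≥0∞) • Measure.dirac (0:ℕ) + (1/2 : ℝ≥0∞) • Measure.dirac 1 := by
  have hCm : Measurable C := C_meas hX hY hC
  ext s hs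
  rw [Measure.map_apply hCm hs]
  have hpre : C ⁻¹' s = (if (1:ℕ) ∈ s then {ω | 0 ≤ X ω + k * Y ω} else ∅)
      ∪ (if (0:ℕ) ∈ s then {ω | ¬0 ≤ X ω + k * Y ω} else ∅) := by
    ext ω
    by_cases h : 0 ≤ X ω + k * Y ω <;> by_cases h1 : (1:ℕ) ∈ s <;>
      by_cases h0 : (0:ℕ) ∈ s <;> simp [hC, h, h1, h0, not_le] <;>
      first
        | exact not_le.mp h
        | exact h
        | skip
  have hP1 : P {ω | 0 ≤ X ω + k * Y ω} = 1/2 := by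
    have h := slice_pos P k X Y hX hY hindep hXlaw hYlaw MeasurableSet.univ
    simp only [Set.mem_univ, and_true, Measure.restrict_univ] at h
    rw [h, A_half]
  have hP0 : P {ω | ¬0 ≤ X ω + k * Y ω} = 1/2 := by
    have h := slice_neg P k X Y hX hY hindep hXlaw hYlaw MeasurableSet.univ
    simp only [Set.mem_univ, and_true, Measure.restrict_univ] at h
    rw [h, B_half]
  have hS0 : MeasurableSet {ω | ¬0 ≤ X ω + k * Y ω} :=
    (measurableSet_le measurable_const (hX.add (hY.const_mul k))).compl
  have hdisj : Disjoint {ω | 0 ≤ X ω + k * Y ω} {ω | ¬0 ≤ X ω + k * Y ω} := by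
    rw [Set.disjoint_left]
    intro ω h h'
    exact h' h
  rw [hpre]
  simp only [Measure.coe_add, Measure.coe_smul, Pi.add_apply, Pi.smul_apply, smul_eq_mul,
    Measure.dirac_apply' _ hs, Set.indicator_apply, Pi.one_apply]
  by_cases h1 : (1:ℕ) ∈ s <;> by_cases h0 : (0:ℕ) ∈ s <;>
    simp only [h1, h0, if_true, if_false, Set.union_empty, Set.empty_union, mul_one, mul_zero,
      add_zero, zero_add, measure_empty]
  · rw [measure_union hdisj hS0, hP1, hP0]
  · exact hP1
  · exact hP0

lemma nu'_rect {s : Set ℕ} {t : Set ℝ} (ht : MeasurableSet t) :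
    (((P.map C).prod (gaussianReal 0 1)).withDensity (fden k)) (s ×ˢ t)
      = (if (1:ℕ) ∈ s then 1 else 0) * (∫⁻ y in t, ENNReal.ofReal (pf y * Pf (k * y)))
        + (if (0:ℕ) ∈ s then 1 else 0) * ∫⁻ y in t, ENNReal.ofReal (pf y * Pf (-(k * y))) := by
  rw [withDensity_apply _ ((hs_nat s).prod ht), ← Measure.prod_restrict,
    lintegral_prod _ (fden_meas k).aemeasurable]
  have hF1 : (∫⁻ y, fden k (1, y) ∂((gaussianReal 0 1).restrict t))
      = 2 * ∫⁻ y in t, ENNReal.ofReal (pf y * Pf (k * y)) := by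
    have heq : ∀ y : ℝ, fden k (1, y) = 2 * ENNReal.ofReal (Pf (k * y)) := by
      intro y
      rw [show fden k (1, y) = ENNReal.ofReal (2 * Pf (k * y)) from rfl,
        ENNReal.ofReal_mul (by norm_num), ENNReal.ofReal_ofNat]
    simp_rw [heq]
    rw [lintegral_const_mul 2 (measurable_PfkA k), lintegral_G_eq k ht]
  have hF0 : (∫⁻ y, fden k (0, y) ∂((gaussianReal 0 1).restrict t))
      = 2 * ∫⁻ y in t, ENNReal.ofReal (pf y * Pf (-(k * y))) := by
    have heq : ∀ y : ℝ, fden k (0, y) = 2 * ENNReal.ofReal (Pf ((-k) * y)) := by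
      intro y
      rw [show fden k (0, y) = ENNReal.ofReal (2 * Pf (-(k * y))) from rfl, neg_mul,
        ENNReal.ofReal_mul (by norm_num), ENNReal.ofReal_ofNat]
    simp_rw [heq]
    rw [lintegral_const_mul 2 (measurable_PfkA (-k)), lintegral_G_eq (-k) ht]
    simp_rw [neg_mul]
  rw [map_C P k X Y hX hY hindep hXlaw hYlaw C hC, Measure.restrict_add,
    Measure.restrict_smul, Measure.restrict_smul, restrict_dirac' (hs_nat s),
    restrict_dirac' (hs_nat s)]
  by_cases h1 : (1:ℕ) ∈ s <;> by_cases h0 : (0:ℕ) ∈ s <;>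
    simp only [h1, h0, if_true, if_false, lintegral_add_measure, lintegral_smul_measure,
      lintegral_dirac, lintegral_zero_measure, smul_zero, add_zero, zero_add, one_mul,
      zero_mul, smul_eq_mul, hF1, hF0, harith] <;> try rw [add_comm]

lemma mu_eq_nu' : P.map (fun ω => (C ω, Y ω))
    = (((P.map C).prod (gaussianReal 0 1)).withDensity (fden k)) := by
  have hCm : Measurable C := C_meas hX hY hC
  have : IsProbabilityMeasure (P.map (fun ω => (C ω, Y ω))) :=
    Measure.isProbabilityMeasure_map (hCm.prodMk hY).aemeasurable
  refine ext_of_generate_finite _ generateFrom_prod.symm isPiSystem_prod ?_ ?_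
  · rintro u ⟨s, hs, t, ht, rfl⟩
    rw [mu_rect P k X Y hX hY hindep hXlaw hYlaw C hC ht,
      nu'_rect P k X Y hX hY hindep hXlaw hYlaw C hC ht]
  · rw [← Set.univ_prod_univ,
      mu_rect P k X Y hX hY hindep hXlaw hYlaw C hC MeasurableSet.univ,
      nu'_rect P k X Y hX hY hindep hXlaw hYlaw C hC MeasurableSet.univ]

end main2

noncomputable def muE (k : ℝ) : Measure (ℕ × ℝ) :=
  (volume.withDensity fun y => ENNReal.ofReal (pf y * Pf (-(k * y)))).map (fun y => ((0:ℕ), y))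
    + (volume.withDensity fun y => ENNReal.ofReal (pf y * Pf (k * y))).map (fun y => ((1:ℕ), y))

lemma muE_rect (k : ℝ) {s : Set ℕ} {t : Set ℝ} (ht : MeasurableSet t) :
    muE k (s ×ˢ t)
      = (if (1:ℕ) ∈ s then 1 else 0) * (∫⁻ y in t, ENNReal.ofReal (pf y * Pf (k * y)))
        + (if (0:ℕ) ∈ s then 1 else 0) * ∫⁻ y in t, ENNReal.ofReal (pf y * Pf (-(k * y))) := by
  have hm0 : Measurable (fun y : ℝ => ((0:ℕ), y)) := measurable_const.prodMk measurable_id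
  have hm1 : Measurable (fun y : ℝ => ((1:ℕ), y)) := measurable_const.prodMk measurable_id
  rw [muE, Measure.add_apply, Measure.map_apply hm0 ((hs_nat s).prod ht),
    Measure.map_apply hm1 ((hs_nat s).prod ht)]
  have hp0 : (fun y : ℝ => ((0:ℕ), y)) ⁻¹' (s ×ˢ t) = if (0:ℕ) ∈ s then t else ∅ := by
    ext y; by_cases h0 : (0:ℕ) ∈ s <;> simp [h0]
  have hp1 : (fun y : ℝ => ((1:ℕ), y)) ⁻¹' (s ×ˢ t) = if (1:ℕ) ∈ s then t else ∅ := by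
    ext y; by_cases h1 : (1:ℕ) ∈ s <;> simp [h1]
  rw [hp0, hp1]
  by_cases h1 : (1:ℕ) ∈ s <;> by_cases h0 : (0:ℕ) ∈ s <;>
    simp [h1, h0, withDensity_apply _ ht] <;> try rw [add_comm]

lemma mu_eq_sum {Ω : Type*} [MeasurableSpace Ω] (P : Measure Ω) [IsProbabilityMeasure P]
    (k : ℝ) (X Y : Ω → ℝ) (hX : Measurable X) (hY : Measurable Y)
    (hindep : IndepFun X Y P)
    (hXlaw : P.map X = gaussianReal 0 1) (hYlaw : P.map Y = gaussianReal 0 1)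
    (C : Ω → ℕ) (hC : C = fun ω => if 0 ≤ X ω + k * Y ω then 1 else 0) :
    P.map (fun ω => (C ω, Y ω)) = muE k := by
  have hCm : Measurable C := C_meas hX hY hC
  have : IsProbabilityMeasure (P.map fun ω => (C ω, Y ω)) :=
    Measure.isProbabilityMeasure_map (hCm.prodMk hY).aemeasurable
  refine ext_of_generate_finite _ generateFrom_prod.symm isPiSystem_prod ?_ ?_
  · rintro u ⟨s, hs, t, ht, rfl⟩
    rw [mu_rect P k X Y hX hY hindep hXlaw hYlaw C hC ht, muE_rect k ht]
  · rw [← Set.univ_prod_univ,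
      mu_rect P k X Y hX hY hindep hXlaw hYlaw C hC MeasurableSet.univ,
      muE_rect k MeasurableSet.univ]

lemma integral_withDensity_pf (w : ℝ → ℝ) (hw : Measurable w) (hw0 : ∀ y, 0 ≤ w y) (h : ℝ → ℝ) :
    ∫ y, h y ∂(volume.withDensity fun y => ENNReal.ofReal (w y)) = ∫ y, w y * h y := by
  have heq : (volume.withDensity fun y => ENNReal.ofReal (w y))
      = volume.withDensity fun y => ((w y).toNNReal : ℝ≥0∞) := rfl
  rw [heq, integral_withDensity_eq_integral_smul hw.real_toNNReal]
  refine integral_congr_ae (ae_of_all _ fun y => ?_)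
  simp [NNReal.smul_def, Real.coe_toNNReal _ (hw0 y)]

end S18

theorem stmt_18 {Ω : Type*} [MeasurableSpace Ω] (P : Measure Ω) [IsProbabilityMeasure P]
    (k : ℝ) (hk : k ∈ Set.Ioc (0 : ℝ) 1)
    (X Y : Ω → ℝ) (hX : Measurable X) (hY : Measurable Y)
    (hindep : IndepFun X Y P)
    (hXlaw : P.map X = gaussianReal 0 1) (hYlaw : P.map Y = gaussianReal 0 1)
    (C : Ω → ℕ) (hC : C = fun ω => if 0 ≤ X ω + k * Y ω then 1 else 0)
    (φ : ℝ → ℝ) (hφ : φ = fun y => (Real.sqrt (2 * Real.pi))⁻¹ * Real.exp (-(y ^ 2) / 2))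
    (Φ : ℝ → ℝ) (hΦ : Φ = fun x => ∫ y in Set.Iic x, φ y) :
    klDiv (P.map (fun ω => (C ω, Y ω))) ((P.map C).prod (P.map Y))
      = (((∫ y : ℝ, φ y * Φ (k * y) * Real.log (2 * Φ (k * y)))
            + ∫ y : ℝ, φ y * Φ (-(k * y)) * Real.log (2 * Φ (-(k * y))) : ℝ) : EReal) := by
  have hφP : φ = S18.pf := hφ
  have hΦP : Φ = S18.Pf := by rw [hΦ, hφP]; rfl
  have hCm : Measurable C := S18.C_meas hX hY hC
  rw [hφP, hΦP, hYlaw]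
  set μ := P.map (fun ω => (C ω, Y ω)) with hμ
  set ν := (P.map C).prod (gaussianReal 0 1) with hν
  have hprobC : IsProbabilityMeasure (P.map C) := Measure.isProbabilityMeasure_map hCm.aemeasurable
  have hprobμ : IsProbabilityMeasure μ :=
    Measure.isProbabilityMeasure_map (hCm.prodMk hY).aemeasurable
  have hμν : μ = ν.withDensity (S18.fden k) :=
    S18.mu_eq_nu' P k X Y hX hY hindep hXlaw hYlaw C hC
  have hac : μ ≪ ν := by rw [hμν]; exact withDensity_absolutelyContinuous _ _
  have hrnν : μ.rnDeriv ν =ᵐ[ν] S18.fden k := by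
    rw [hμν]; exact Measure.rnDeriv_withDensity ν (S18.fden_meas k)
  have hrnμ : μ.rnDeriv ν =ᵐ[μ] S18.fden k := hrnν.filter_mono hac.ae_le
  have hllr : llr μ ν =ᵐ[μ] S18.gfun k := by
    filter_upwards [hrnμ] with p hp
    simp only [llr_def]
    rw [hp]
    obtain ⟨c, y⟩ := p
    rcases eq_or_ne c 1 with h1 | h1
    · subst h1
      rw [show S18.fden k (1, y) = ENNReal.ofReal (2 * S18.Pf (k * y)) from rfl,
        show S18.gfun k (1, y) = Real.log (2 * S18.Pf (k * y)) from rfl,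
        ENNReal.toReal_ofReal (mul_nonneg (by norm_num) (S18.Pf_pos _).le)]
    · rcases eq_or_ne c 0 with h0 | h0
      · subst h0
        rw [show S18.fden k (0, y) = ENNReal.ofReal (2 * S18.Pf (-(k * y))) from rfl,
          show S18.gfun k (0, y) = Real.log (2 * S18.Pf (-(k * y))) from rfl,
          ENNReal.toReal_ofReal (mul_nonneg (by norm_num) (S18.Pf_pos _).le)]
      · simp [S18.fden, S18.gfun, h1, h0]
  have hgmeas := S18.gfun_meas k
  have hint_g : Integrable (S18.gfun k) μ := by
    refine ⟨hgmeas.aestronglyMeasurable, ?_⟩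
    show (∫⁻ p, (‖S18.gfun k p‖₊ : ℝ≥0∞) ∂μ) < ⊤
    rw [hμν, lintegral_withDensity_eq_lintegral_mul _ (S18.fden_meas k)
      hgmeas.nnnorm.coe_nnreal_ennreal]
    calc ∫⁻ p, (S18.fden k * fun p => (‖S18.gfun k p‖₊ : ℝ≥0∞)) p ∂ν
        ≤ ∫⁻ _, 2 ∂ν := lintegral_mono fun p => S18.fden_gfun_bound k p
      _ < ⊤ := by
          rw [lintegral_const, measure_univ, mul_one]
          exact ENNReal.ofNat_lt_top
  have hint : Integrable (llr μ ν) μ := hint_g.congr hllr.symm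
  rw [klDiv, if_pos ⟨hac, hint⟩]
  congr 1
  rw [integral_congr_ae hllr]
  have hsum : μ = S18.muE k := S18.mu_eq_sum P k X Y hX hY hindep hXlaw hYlaw C hC
  have hintE : Integrable (S18.gfun k) (S18.muE k) := hsum ▸ hint_g
  rw [S18.muE] at hintE
  rw [hsum, S18.muE, integral_add_measure (integrable_add_measure.1 hintE).1
    (integrable_add_measure.1 hintE).2]
  have hm0 : Measurable (fun y : ℝ => ((0:ℕ), y)) := measurable_const.prodMk measurable_id
  have hm1 : Measurable (fun y : ℝ => ((1:ℕ), y)) := measurable_const.prodMk measurable_id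
  rw [integral_map hm0.aemeasurable hgmeas.aestronglyMeasurable,
    integral_map hm1.aemeasurable hgmeas.aestronglyMeasurable]
  have hg0 : ∀ y : ℝ, S18.gfun k ((0:ℕ), y) = Real.log (2 * S18.Pf (-(k * y))) := fun y => rfl
  have hg1 : ∀ y : ℝ, S18.gfun k ((1:ℕ), y) = Real.log (2 * S18.Pf (k * y)) := fun y => rfl
  simp_rw [hg0, hg1]
  rw [S18.integral_withDensity_pf (fun y => S18.pf y * S18.Pf (-(k * y)))
      (S18.pf_meas.mul (S18.Pf_meas.comp ((measurable_const_mul k).neg)))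
      (fun y => mul_nonneg (S18.pf_nonneg y) (S18.Pf_pos _).le),
    S18.integral_withDensity_pf (fun y => S18.pf y * S18.Pf (k * y))
      (S18.pf_meas.mul (S18.Pf_meas.comp (measurable_const_mul k)))
      (fun y => mul_nonneg (S18.pf_nonneg y) (S18.Pf_pos _).le)]
  rw [add_comm]
end
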